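/- arXiv:2010.03521 — 9 statements merged into one kernel-verified Lean document; each statement's English description precedes it below -/
import Mathlib

section
/- For every real σ < 1/2, the function t ↦ ‖X(σ + it)‖ is strictly monotonically increasing on the interval (0, +∞), and strictly monotonically decreasing on the interval (-∞, 0). -/
noncomputable def X (s : ℂ) : ℂ :=
  (5 / Real.pi : ℂ) ^ ((1 : ℂ) / 2 - s) * Complex.Gamma (1 - s / 2) / Complex.Gamma ((1 + s) / 2)

set_option maxHeartbeats 1600000 in
open Complex Filter Topology Finset in
lemma gamma_pair_lt (σ : ℝ) (hσ : σ < 1/2) {t t' : ℝ} (ht : 0 < t) (htt : t < t') :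
    ‖Complex.Gamma (1 - ((σ:ℂ) + (t:ℂ)*I)/2)‖ * ‖Complex.Gamma ((1 + ((σ:ℂ) + (t':ℂ)*I))/2)‖ <
    ‖Complex.Gamma (1 - ((σ:ℂ) + (t':ℂ)*I)/2)‖ * ‖Complex.Gamma ((1 + ((σ:ℂ) + (t:ℂ)*I))/2)‖ := by
  have ht' : 0 < t' := ht.trans htt
  set z1 : ℂ := 1 - ((σ:ℂ) + (t:ℂ)*I)/2 with hz1
  set z1' : ℂ := 1 - ((σ:ℂ) + (t':ℂ)*I)/2 with hz1'
  set z2 : ℂ := (1 + ((σ:ℂ) + (t:ℂ)*I))/2 with hz2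
  set z2' : ℂ := (1 + ((σ:ℂ) + (t':ℂ)*I))/2 with hz2'
  have hre1 : z1.re = 1 - σ/2 := by simp [hz1]
  have him1 : z1.im = -(t/2) := by simp [hz1]
  have hre1' : z1'.re = 1 - σ/2 := by simp [hz1']
  have him1' : z1'.im = -(t'/2) := by simp [hz1']
  have hre2 : z2.re = (1+σ)/2 := by simp [hz2]
  have him2 : z2.im = t/2 := by simp [hz2]
  have hre2' : z2'.re = (1+σ)/2 := by simp [hz2']
  have him2' : z2'.im = t'/2 := by simp [hz2']
  -- squared norms
  have habs : ∀ (z : ℂ) (j : ℕ), ‖z + (j:ℂ)‖^2 = (z.re + j)^2 + z.im^2 := by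
    intro z j
    rw [Complex.sq_norm, Complex.normSq_apply]
    simp
    ring
  have hpos : ∀ (z : ℂ) (j : ℕ), z.im ≠ 0 → 0 < ‖z + (j:ℂ)‖ := by
    intro z j hz
    rw [norm_pos_iff]
    intro h
    apply hz
    have := congrArg Complex.im h
    simpa using this
  have him1ne : z1.im ≠ 0 := by rw [him1]; intro h; nlinarith
  have him1ne' : z1'.im ≠ 0 := by rw [him1']; intro h; nlinarith
  have him2ne : z2.im ≠ 0 := by rw [him2]; intro h; nlinarith
  have him2ne' : z2'.im ≠ 0 := by rw [him2']; intro h; nlinarith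
  -- termwise inequality
  have hterm : ∀ j : ℕ, ‖z1' + (j:ℂ)‖ * ‖z2 + (j:ℂ)‖ ≤ ‖z1 + (j:ℂ)‖ * ‖z2' + (j:ℂ)‖ := by
    intro j
    have h1 := hpos z1 j him1ne
    have h2 := hpos z2' j him2ne'
    refine le_of_pow_le_pow_left₀ two_ne_zero (by positivity) ?_
    rw [mul_pow, mul_pow, habs, habs, habs, habs, hre1, him1, hre1', him1', hre2, him2,
      hre2', him2']
    have hj : (0:ℝ) ≤ (j:ℝ) := Nat.cast_nonneg j
    have hAB : ((1+σ)/2+(j:ℝ))^2 ≤ (1 - σ/2+(j:ℝ))^2 := by nlinarith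
    have huu : (t/2)^2 ≤ (t'/2)^2 := by nlinarith
    nlinarith [mul_nonneg (sub_nonneg.2 hAB) (sub_nonneg.2 huu)]
  -- strict at j = 0
  have hterm0 : ‖z1' + ((0:ℕ):ℂ)‖ * ‖z2 + ((0:ℕ):ℂ)‖ < ‖z1 + ((0:ℕ):ℂ)‖ * ‖z2' + ((0:ℕ):ℂ)‖ := by
    have h1 := hpos z1' 0 him1ne'
    have h2 := hpos z2 0 him2ne
    have h3 := hpos z1 0 him1ne
    have h4 := hpos z2' 0 him2ne'
    have hQP : (‖z1' + ((0:ℕ):ℂ)‖ * ‖z2 + ((0:ℕ):ℂ)‖)^2 <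
        (‖z1 + ((0:ℕ):ℂ)‖ * ‖z2' + ((0:ℕ):ℂ)‖)^2 := by
      rw [mul_pow, mul_pow, habs, habs, habs, habs, hre1, him1, hre1', him1', hre2, him2,
        hre2', him2']
      simp only [Nat.cast_zero, add_zero]
      have hAB : ((1+σ)/2)^2 < (1 - σ/2)^2 := by nlinarith
      have huu : (t/2)^2 < (t'/2)^2 := by nlinarith
      have hmul := mul_pos (sub_pos.2 hAB) (sub_pos.2 huu)
      nlinarith [hmul]
    exact lt_of_pow_lt_pow_left₀ 2 (by positivity) hQP
  have hQ0 : 0 < ‖z1' + ((0:ℕ):ℂ)‖ * ‖z2 + ((0:ℕ):ℂ)‖ :=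
    mul_pos (hpos z1' 0 him1ne') (hpos z2 0 him2ne)
  obtain ⟨c, hc1, hc0⟩ : ∃ c : ℝ, 1 < c ∧
      c * (‖z1' + ((0:ℕ):ℂ)‖ * ‖z2 + ((0:ℕ):ℂ)‖) = ‖z1 + ((0:ℕ):ℂ)‖ * ‖z2' + ((0:ℕ):ℂ)‖ :=
    ⟨_, (one_lt_div hQ0).mpr hterm0, div_mul_cancel₀ _ hQ0.ne'⟩
  -- GammaSeq norm formula
  have hGS : ∀ (z : ℂ) (n : ℕ), 1 ≤ n → ‖GammaSeq z n‖ =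
      (n:ℝ)^z.re * (Nat.factorial n : ℝ) / ∏ j ∈ range (n+1), ‖z + (j:ℂ)‖ := by
    intro z n hn
    rw [Complex.GammaSeq, norm_div, norm_mul, Complex.norm_natCast_cpow_of_pos hn,
      Complex.norm_natCast, norm_prod]
  -- main per-n inequality
  have key_n : ∀ n : ℕ, 1 ≤ n →
      c * (‖GammaSeq z1 n‖ * ‖GammaSeq z2' n‖) ≤ ‖GammaSeq z1' n‖ * ‖GammaSeq z2 n‖ := by
    intro n hn
    rw [hGS z1 n hn, hGS z2' n hn, hGS z1' n hn, hGS z2 n hn, hre1, hre1', hre2, hre2']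
    set P1 := ∏ j ∈ range (n+1), ‖z1 + (j:ℂ)‖ with hP1
    set P1' := ∏ j ∈ range (n+1), ‖z1' + (j:ℂ)‖ with hP1'
    set P2 := ∏ j ∈ range (n+1), ‖z2 + (j:ℂ)‖ with hP2
    set P2' := ∏ j ∈ range (n+1), ‖z2' + (j:ℂ)‖ with hP2'
    have hP1pos : 0 < P1 := Finset.prod_pos fun j _ => hpos z1 j him1ne
    have hP1'pos : 0 < P1' := Finset.prod_pos fun j _ => hpos z1' j him1ne'
    have hP2pos : 0 < P2 := Finset.prod_pos fun j _ => hpos z2 j him2ne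
    have hP2'pos : 0 < P2' := Finset.prod_pos fun j _ => hpos z2' j him2ne'
    have hKey : c * (P1' * P2) ≤ P1 * P2' := by
      have e1 : P1 * P2' = ∏ j ∈ range (n+1), (‖z1 + (j:ℂ)‖ * ‖z2' + (j:ℂ)‖) := by
        rw [hP1, hP2', ← Finset.prod_mul_distrib]
      have e2 : P1' * P2 = ∏ j ∈ range (n+1), (‖z1' + (j:ℂ)‖ * ‖z2 + (j:ℂ)‖) := by
        rw [hP1', hP2, ← Finset.prod_mul_distrib]
      rw [e1, e2, Finset.prod_range_succ', Finset.prod_range_succ']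
      have hprodle : (∏ j ∈ range n, (‖z1' + ((j+1:ℕ):ℂ)‖ * ‖z2 + ((j+1:ℕ):ℂ)‖)) ≤
          ∏ j ∈ range n, (‖z1 + ((j+1:ℕ):ℂ)‖ * ‖z2' + ((j+1:ℕ):ℂ)‖) := by
        refine Finset.prod_le_prod (fun j _ => ?_) (fun j _ => hterm (j+1))
        exact mul_nonneg (norm_nonneg _) (norm_nonneg _)
      calc c * ((∏ j ∈ range n, (‖z1' + ((j+1:ℕ):ℂ)‖ * ‖z2 + ((j+1:ℕ):ℂ)‖)) *
              (‖z1' + ((0:ℕ):ℂ)‖ * ‖z2 + ((0:ℕ):ℂ)‖))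
          = (∏ j ∈ range n, (‖z1' + ((j+1:ℕ):ℂ)‖ * ‖z2 + ((j+1:ℕ):ℂ)‖)) *
              (c * (‖z1' + ((0:ℕ):ℂ)‖ * ‖z2 + ((0:ℕ):ℂ)‖)) := by ring
        _ ≤ (∏ j ∈ range n, (‖z1 + ((j+1:ℕ):ℂ)‖ * ‖z2' + ((j+1:ℕ):ℂ)‖)) *
              (‖z1 + ((0:ℕ):ℂ)‖ * ‖z2' + ((0:ℕ):ℂ)‖) := by
            rw [hc0]
            refine mul_le_mul_of_nonneg_right hprodle ?_
            exact mul_nonneg (norm_nonneg _) (norm_nonneg _)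
    have hK : (0:ℝ) ≤ (n:ℝ)^(1 - σ/2) * (Nat.factorial n : ℝ) * ((n:ℝ)^((1+σ)/2) * (Nat.factorial n : ℝ)) := by positivity
    rw [div_mul_div_comm, div_mul_div_comm, mul_div_assoc', div_le_div_iff₀ (by positivity) (by positivity)]
    nlinarith [mul_le_mul_of_nonneg_left hKey hK, mul_pos hP1pos hP2'pos, mul_pos hP1'pos hP2pos]
  -- pass to the limit
  have hne : ∀ z : ℂ, z.im ≠ 0 → Complex.Gamma z ≠ 0 := by
    intro z hz
    refine Complex.Gamma_ne_zero fun m => ?_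
    intro h
    apply hz
    rw [h]
    simp
  have hlim1 : Tendsto (fun n => c * (‖GammaSeq z1 n‖ * ‖GammaSeq z2' n‖)) atTop
      (𝓝 (c * (‖Complex.Gamma z1‖ * ‖Complex.Gamma z2'‖))) :=
    (((Complex.GammaSeq_tendsto_Gamma z1).norm.mul
      (Complex.GammaSeq_tendsto_Gamma z2').norm).const_mul c)
  have hlim2 : Tendsto (fun n => ‖GammaSeq z1' n‖ * ‖GammaSeq z2 n‖) atTop
      (𝓝 (‖Complex.Gamma z1'‖ * ‖Complex.Gamma z2‖)) :=
    ((Complex.GammaSeq_tendsto_Gamma z1').norm.mul (Complex.GammaSeq_tendsto_Gamma z2).norm)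
  have hfin : c * (‖Complex.Gamma z1‖ * ‖Complex.Gamma z2'‖) ≤
      ‖Complex.Gamma z1'‖ * ‖Complex.Gamma z2‖ :=
    le_of_tendsto_of_tendsto hlim1 hlim2 (Filter.eventually_atTop.2 ⟨1, key_n⟩)
  have hGpos : 0 < ‖Complex.Gamma z1‖ * ‖Complex.Gamma z2'‖ :=
    mul_pos (norm_pos_iff.mpr (hne z1 him1ne)) (norm_pos_iff.mpr (hne z2' him2ne'))
  nlinarith

open Complex in
lemma normX (σ t : ℝ) : ‖X ((σ:ℂ) + (t:ℂ)*I)‖ =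
    (5/Real.pi)^((1:ℝ)/2 - σ) * ‖Complex.Gamma (1 - ((σ:ℂ)+(t:ℂ)*I)/2)‖ /
      ‖Complex.Gamma ((1+((σ:ℂ)+(t:ℂ)*I))/2)‖ := by
  have hπ : (0:ℝ) < Real.pi := Real.pi_pos
  have h5 : (0:ℝ) < 5/Real.pi := by positivity
  rw [X, norm_div, norm_mul]
  congr 2
  have hb : (5 / Real.pi : ℂ) = ((5/Real.pi : ℝ) : ℂ) := by push_cast; ring
  rw [hb, Complex.norm_cpow_eq_rpow_re_of_pos h5]
  congr 1
  simp

open Complex in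
lemma normX_neg (σ t : ℝ) : ‖X ((σ:ℂ) + ((-t : ℝ):ℂ)*I)‖ = ‖X ((σ:ℂ) + (t:ℂ)*I)‖ := by
  rw [normX, normX]
  have h1 : (1 - ((σ:ℂ) + ((-t:ℝ):ℂ)*I)/2) = starRingEnd ℂ (1 - ((σ:ℂ)+(t:ℂ)*I)/2) := by
    apply Complex.ext <;> simp [map_ofNat]
  have h2 : ((1 + ((σ:ℂ) + ((-t:ℝ):ℂ)*I))/2) = starRingEnd ℂ ((1+((σ:ℂ)+(t:ℂ)*I))/2) := by
    apply Complex.ext <;> simp [map_ofNat]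
  rw [h1, h2, Complex.Gamma_conj, Complex.Gamma_conj, Complex.norm_conj, Complex.norm_conj]

open Complex in
lemma X_lt (σ : ℝ) (hσ : σ < 1/2) {t t' : ℝ} (ht : 0 < t) (htt : t < t') :
    ‖X ((σ:ℂ) + (t:ℂ)*I)‖ < ‖X ((σ:ℂ) + (t':ℂ)*I)‖ := by
  have hπ : (0:ℝ) < Real.pi := Real.pi_pos
  have hC : (0:ℝ) < (5/Real.pi)^((1:ℝ)/2 - σ) := by positivity
  have hne : ∀ z : ℂ, z.im ≠ 0 → (0:ℝ) < ‖Complex.Gamma z‖ := by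
    intro z hz
    refine norm_pos_iff.mpr (Complex.Gamma_ne_zero fun m h => ?_)
    apply hz; rw [h]; simp
  have ht' : 0 < t' := ht.trans htt
  have h1 : (0:ℝ) < ‖Complex.Gamma (1 - ((σ:ℂ)+(t:ℂ)*I)/2)‖ := by
    refine hne _ ?_; simp; intro h; nlinarith
  have h1' : (0:ℝ) < ‖Complex.Gamma (1 - ((σ:ℂ)+(t':ℂ)*I)/2)‖ := by
    refine hne _ ?_; simp; intro h; nlinarith
  have h2 : (0:ℝ) < ‖Complex.Gamma ((1+((σ:ℂ)+(t:ℂ)*I))/2)‖ := by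
    refine hne _ ?_; simp; nlinarith
  have h2' : (0:ℝ) < ‖Complex.Gamma ((1+((σ:ℂ)+(t':ℂ)*I))/2)‖ := by
    refine hne _ ?_; simp; nlinarith
  have hg := gamma_pair_lt σ hσ ht htt
  rw [normX, normX, div_lt_div_iff₀ h2 h2']
  nlinarith [mul_lt_mul_of_pos_left hg hC]

theorem stmt_6 (σ : ℝ) (hσ : σ < 1 / 2) :
    StrictMonoOn (fun t : ℝ => ‖X ((σ : ℂ) + (t : ℂ) * Complex.I)‖) (Set.Ioi 0) ∧
    StrictAntiOn (fun t : ℝ => ‖X ((σ : ℂ) + (t : ℂ) * Complex.I)‖) (Set.Iio 0) := by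
  constructor
  · intro x hx y _ hxy
    exact X_lt σ hσ (Set.mem_Ioi.mp hx) hxy
  · intro x hx y hy hxy
    have hy' : (0:ℝ) < -y := by simpa using (Set.mem_Iio.mp hy)
    have hlt : -y < -x := by linarith
    have h := X_lt σ hσ hy' hlt
    rw [normX_neg σ y, normX_neg σ x] at h
    exact h
end

section
/- For every real σ > 1/2, the function t ↦ ‖X(σ + it)‖ is strictly monotonically decreasing on the interval (0, +∞), and strictly monotonically increasing on the interval (-∞, 0). -/
open Complex Filter Finset Topology

namespace Stmt7Aux

noncomputable def z (x y : ℝ) : ℂ := (x : ℂ) + (y : ℂ) * Complex.I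

lemma z_re (x y : ℝ) : (z x y).re = x := by simp [z]

lemma norm_z (x y : ℝ) : ‖z x y‖ = Real.sqrt (x^2 + y^2) := by
  rw [z, Complex.norm_def, Complex.normSq_add_mul_I]

lemma norm_z_pos (x y : ℝ) (hy : y ≠ 0) : 0 < ‖z x y‖ := by
  rw [norm_z]
  have : 0 < x^2 + y^2 := by positivity
  positivity

lemma Gamma_z_ne_zero (x y : ℝ) (hy : y ≠ 0) : Complex.Gamma (z x y) ≠ 0 := by
  apply Complex.Gamma_ne_zero
  intro m h
  have := congrArg Complex.im h
  simp [z] at this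
  exact hy this

lemma norm_Gamma_pos (x y : ℝ) (hy : y ≠ 0) : 0 < ‖Complex.Gamma (z x y)‖ :=
  norm_pos_iff.mpr (Gamma_z_ne_zero x y hy)

lemma norm_gamma_neg (x y : ℝ) : ‖Complex.Gamma (z x (-y))‖ = ‖Complex.Gamma (z x y)‖ := by
  have h : z x (-y) = (starRingEnd ℂ) (z x y) := by
    simp [z, Complex.ext_iff]
  rw [h, Complex.Gamma_conj, Complex.norm_conj]

lemma fac_le {A B u v : ℝ} (hAB : A^2 ≤ B^2) (huv : u^2 ≤ v^2) :
    ‖z A u‖ * ‖z B v‖ ≤ ‖z A v‖ * ‖z B u‖ := by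
  rw [norm_z, norm_z, norm_z, norm_z, ← Real.sqrt_mul (by positivity),
    ← Real.sqrt_mul (by positivity)]
  apply Real.sqrt_le_sqrt
  nlinarith

lemma fac_lt {A B u v : ℝ} (hAB : A^2 < B^2) (huv : u^2 < v^2) :
    ‖z A u‖ * ‖z B v‖ < ‖z A v‖ * ‖z B u‖ := by
  rw [norm_z, norm_z, norm_z, norm_z, ← Real.sqrt_mul (by positivity),
    ← Real.sqrt_mul (by positivity)]
  apply Real.sqrt_lt_sqrt (by positivity)
  nlinarith

lemma norm_GammaSeq (x y : ℝ) (n : ℕ) (hn : 1 ≤ n) :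
    ‖Complex.GammaSeq (z x y) n‖ =
      ((n:ℝ) ^ x * (n.factorial : ℝ)) / ∏ j ∈ Finset.range (n+1), ‖z (x + j) y‖ := by
  rw [Complex.GammaSeq, norm_div, norm_mul, norm_prod]
  congr 2
  · rw [Complex.norm_natCast_cpow_of_pos hn, z_re]
  · simp
  · funext j
    congr 1
    simp only [z]
    push_cast
    ring

lemma step (a b y₁ y₂ : ℝ) (hab : a < b) (hs : 0 < a + b) (h1 : 0 < y₁) (h12 : y₁ < y₂)
    (n : ℕ) (hn : 1 ≤ n) :
    ‖Complex.GammaSeq (z a y₂) n‖ * ‖z b y₁‖ * ‖Complex.GammaSeq (z b y₁) n‖ * ‖z a y₂‖ ≤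
    ‖Complex.GammaSeq (z a y₁) n‖ * ‖z b y₂‖ * ‖Complex.GammaSeq (z b y₂) n‖ * ‖z a y₁‖ := by
  have hy1 : y₁ ≠ 0 := h1.ne'
  have hy2 : y₂ ≠ 0 := (h1.trans h12).ne'
  rw [norm_GammaSeq a y₂ n hn, norm_GammaSeq b y₁ n hn, norm_GammaSeq a y₁ n hn,
    norm_GammaSeq b y₂ n hn]
  set Na : ℝ := (n:ℝ) ^ a * (n.factorial : ℝ) with hNa
  set Nb : ℝ := (n:ℝ) ^ b * (n.factorial : ℝ) with hNb
  have hNa0 : 0 ≤ Na := by positivity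
  have hNb0 : 0 ≤ Nb := by positivity
  set Pa1 : ℝ := ∏ j ∈ Finset.range (n+1), ‖z (a + j) y₁‖ with hPa1
  set Pa2 : ℝ := ∏ j ∈ Finset.range (n+1), ‖z (a + j) y₂‖ with hPa2
  set Pb1 : ℝ := ∏ j ∈ Finset.range (n+1), ‖z (b + j) y₁‖ with hPb1
  set Pb2 : ℝ := ∏ j ∈ Finset.range (n+1), ‖z (b + j) y₂‖ with hPb2
  have hPa1p : 0 < Pa1 := Finset.prod_pos fun j _ => norm_z_pos _ _ hy1
  have hPa2p : 0 < Pa2 := Finset.prod_pos fun j _ => norm_z_pos _ _ hy2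
  have hPb1p : 0 < Pb1 := Finset.prod_pos fun j _ => norm_z_pos _ _ hy1
  have hPb2p : 0 < Pb2 := Finset.prod_pos fun j _ => norm_z_pos _ _ hy2
  have key : (‖z b y₁‖ * ‖z a y₂‖) * (Pa1 * Pb2) ≤ (‖z b y₂‖ * ‖z a y₁‖) * (Pa2 * Pb1) := by
    have e1 : Pa1 * Pb2 = (∏ j ∈ Finset.range n, (‖z (a + ((j+1 : ℕ) : ℝ)) y₁‖ * ‖z (b + ((j+1 : ℕ) : ℝ)) y₂‖))
        * (‖z a y₁‖ * ‖z b y₂‖) := by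
      rw [hPa1, hPb2, ← Finset.prod_mul_distrib, Finset.prod_range_succ']
      congr 1
      norm_num
    have e2 : Pa2 * Pb1 = (∏ j ∈ Finset.range n, (‖z (a + ((j+1 : ℕ) : ℝ)) y₂‖ * ‖z (b + ((j+1 : ℕ) : ℝ)) y₁‖))
        * (‖z a y₂‖ * ‖z b y₁‖) := by
      rw [hPa2, hPb1, ← Finset.prod_mul_distrib, Finset.prod_range_succ']
      congr 1
      norm_num
    rw [e1, e2]
    have hprod : (∏ j ∈ Finset.range n, (‖z (a + ((j+1 : ℕ) : ℝ)) y₁‖ * ‖z (b + ((j+1 : ℕ) : ℝ)) y₂‖)) ≤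
        (∏ j ∈ Finset.range n, (‖z (a + ((j+1 : ℕ) : ℝ)) y₂‖ * ‖z (b + ((j+1 : ℕ) : ℝ)) y₁‖)) := by
      apply Finset.prod_le_prod
      · intro j _
        exact mul_nonneg (norm_nonneg _) (norm_nonneg _)
      · intro j _
        apply fac_le
        · have hj : (0:ℝ) ≤ (j:ℝ) := j.cast_nonneg
          push_cast
          nlinarith
        · nlinarith
    calc (‖z b y₁‖ * ‖z a y₂‖) * ((∏ j ∈ Finset.range n, (‖z (a + ((j+1 : ℕ) : ℝ)) y₁‖ * ‖z (b + ((j+1 : ℕ) : ℝ)) y₂‖)) * (‖z a y₁‖ * ‖z b y₂‖))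
        = (‖z b y₁‖ * ‖z a y₂‖ * ‖z a y₁‖ * ‖z b y₂‖) * (∏ j ∈ Finset.range n, (‖z (a + ((j+1 : ℕ) : ℝ)) y₁‖ * ‖z (b + ((j+1 : ℕ) : ℝ)) y₂‖)) := by ring
      _ ≤ (‖z b y₁‖ * ‖z a y₂‖ * ‖z a y₁‖ * ‖z b y₂‖) * (∏ j ∈ Finset.range n, (‖z (a + ((j+1 : ℕ) : ℝ)) y₂‖ * ‖z (b + ((j+1 : ℕ) : ℝ)) y₁‖)) := by
          apply mul_le_mul_of_nonneg_left hprod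
          positivity
      _ = (‖z b y₂‖ * ‖z a y₁‖) * ((∏ j ∈ Finset.range n, (‖z (a + ((j+1 : ℕ) : ℝ)) y₂‖ * ‖z (b + ((j+1 : ℕ) : ℝ)) y₁‖)) * (‖z a y₂‖ * ‖z b y₁‖)) := by ring
  have lhs_eq : Na / Pa2 * ‖z b y₁‖ * (Nb / Pb1) * ‖z a y₂‖
      = (Na * Nb * (‖z b y₁‖ * ‖z a y₂‖)) / (Pa2 * Pb1) := by ring
  have rhs_eq : Na / Pa1 * ‖z b y₂‖ * (Nb / Pb2) * ‖z a y₁‖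
      = (Na * Nb * (‖z b y₂‖ * ‖z a y₁‖)) / (Pa1 * Pb2) := by ring
  rw [lhs_eq, rhs_eq, div_le_div_iff₀ (by positivity) (by positivity)]
  calc Na * Nb * (‖z b y₁‖ * ‖z a y₂‖) * (Pa1 * Pb2)
      = (Na * Nb) * ((‖z b y₁‖ * ‖z a y₂‖) * (Pa1 * Pb2)) := by ring
    _ ≤ (Na * Nb) * ((‖z b y₂‖ * ‖z a y₁‖) * (Pa2 * Pb1)) := by
        apply mul_le_mul_of_nonneg_left key
        positivity
    _ = Na * Nb * (‖z b y₂‖ * ‖z a y₁‖) * (Pa2 * Pb1) := by ring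

lemma gamma_prod_le (a b y₁ y₂ : ℝ) (hab : a < b) (hs : 0 < a + b) (h1 : 0 < y₁)
    (h12 : y₁ < y₂) :
    ‖Complex.Gamma (z a y₂)‖ * ‖z b y₁‖ * ‖Complex.Gamma (z b y₁)‖ * ‖z a y₂‖ ≤
    ‖Complex.Gamma (z a y₁)‖ * ‖z b y₂‖ * ‖Complex.Gamma (z b y₂)‖ * ‖z a y₁‖ := by
  have T : ∀ x y : ℝ, Tendsto (fun n => ‖Complex.GammaSeq (z x y) n‖) atTop
      (𝓝 ‖Complex.Gamma (z x y)‖) := fun x y => (Complex.GammaSeq_tendsto_Gamma (z x y)).norm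
  refine le_of_tendsto_of_tendsto
    ((((T a y₂).mul_const _).mul (T b y₁)).mul_const _)
    ((((T a y₁).mul_const _).mul (T b y₂)).mul_const _) ?_
  filter_upwards [eventually_ge_atTop 1] with n hn
  exact step a b y₁ y₂ hab hs h1 h12 n hn

lemma gamma_ratio_lt (a b y₁ y₂ : ℝ) (hab : a < b) (hs : 0 < a + b) (h1 : 0 < y₁)
    (h12 : y₁ < y₂) :
    ‖Complex.Gamma (z a y₂)‖ / ‖Complex.Gamma (z b y₂)‖ <
    ‖Complex.Gamma (z a y₁)‖ / ‖Complex.Gamma (z b y₁)‖ := by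
  have hy1 : y₁ ≠ 0 := h1.ne'
  have hy2 : y₂ ≠ 0 := (h1.trans h12).ne'
  have L := gamma_prod_le a b y₁ y₂ hab hs h1 h12
  have F : ‖z a y₁‖ * ‖z b y₂‖ < ‖z a y₂‖ * ‖z b y₁‖ :=
    fac_lt (by nlinarith) (by nlinarith)
  have p1 : 0 < ‖Complex.Gamma (z a y₁)‖ := norm_Gamma_pos _ _ hy1
  have p2 : 0 < ‖Complex.Gamma (z b y₂)‖ := norm_Gamma_pos _ _ hy2
  have p3 : 0 < ‖Complex.Gamma (z b y₁)‖ := norm_Gamma_pos _ _ hy1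
  have p4 : 0 < ‖Complex.Gamma (z a y₂)‖ := norm_Gamma_pos _ _ hy2
  have q1 : 0 < ‖z a y₂‖ := norm_z_pos _ _ hy2
  have q2 : 0 < ‖z b y₁‖ := norm_z_pos _ _ hy1
  rw [div_lt_div_iff₀ p2 p3]
  nlinarith [mul_lt_mul_of_pos_left F (mul_pos p1 p2), mul_pos q1 q2]

lemma norm_X (σ t : ℝ) :
    ‖X ((σ : ℂ) + (t : ℂ) * Complex.I)‖ =
      (5 / Real.pi) ^ ((1:ℝ)/2 - σ) *
        (‖Complex.Gamma (z (1 - σ/2) (t/2))‖ / ‖Complex.Gamma (z ((1+σ)/2) (t/2))‖) := by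
  have hpi : (0:ℝ) < 5 / Real.pi := by positivity
  rw [X, norm_div, norm_mul]
  have h1 : ((1 : ℂ) / 2 - ((σ : ℂ) + (t : ℂ) * Complex.I)) = z (1/2 - σ) (-t) := by
    simp only [z]; push_cast; ring
  have h2 : (1 - ((σ : ℂ) + (t : ℂ) * Complex.I) / 2) = z (1 - σ/2) (-(t/2)) := by
    simp only [z]; push_cast; ring
  have h3 : ((1 + ((σ : ℂ) + (t : ℂ) * Complex.I)) / 2) = z ((1+σ)/2) (t/2) := by
    simp only [z]; push_cast; ring
  rw [h1, h2, h3, norm_gamma_neg]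
  have h4 : ‖(5 / Real.pi : ℂ) ^ (z (1/2 - σ) (-t))‖ = (5 / Real.pi) ^ ((1:ℝ)/2 - σ) := by
    have hb : (5 / Real.pi : ℂ) = ((5 / Real.pi : ℝ) : ℂ) := by push_cast; ring
    rw [hb, Complex.norm_cpow_eq_rpow_re_of_pos hpi, z_re]
  rw [h4]
  ring

end Stmt7Aux

open Stmt7Aux in
theorem stmt_7 (σ : ℝ) (hσ : 1 / 2 < σ) :
    StrictAntiOn (fun t : ℝ => ‖X ((σ : ℂ) + (t : ℂ) * Complex.I)‖) (Set.Ioi 0) ∧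
    StrictMonoOn (fun t : ℝ => ‖X ((σ : ℂ) + (t : ℂ) * Complex.I)‖) (Set.Iio 0) := by
  have hab : (1 - σ/2) < (1+σ)/2 := by linarith
  have hs : 0 < (1 - σ/2) + (1+σ)/2 := by linarith
  have hK : (0:ℝ) < (5 / Real.pi) ^ ((1:ℝ)/2 - σ) := by positivity
  have key : ∀ t₁ t₂ : ℝ, 0 < t₁ → t₁ < t₂ →
      ‖X ((σ : ℂ) + (t₂ : ℂ) * Complex.I)‖ < ‖X ((σ : ℂ) + (t₁ : ℂ) * Complex.I)‖ := by
    intro t₁ t₂ h1 h12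
    rw [norm_X, norm_X]
    exact mul_lt_mul_of_pos_left
      (gamma_ratio_lt _ _ (t₁/2) (t₂/2) hab hs (by linarith) (by linarith)) hK
  have heven : ∀ t : ℝ, ‖X ((σ : ℂ) + ((-t : ℝ) : ℂ) * Complex.I)‖
      = ‖X ((σ : ℂ) + (t : ℂ) * Complex.I)‖ := by
    intro t
    rw [norm_X, norm_X, show (-t)/2 = -(t/2) by ring, norm_gamma_neg, norm_gamma_neg]
  constructor
  · intro t₁ ht₁ t₂ ht₂ h
    exact key t₁ t₂ ht₁ h
  · intro t₁ ht₁ t₂ ht₂ h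
    have h2 : t₂ < 0 := ht₂
    have := key (-t₂) (-t₁) (by linarith) (by linarith)
    simp only
    calc ‖X ((σ : ℂ) + (t₁ : ℂ) * Complex.I)‖
        = ‖X ((σ : ℂ) + ((-(-t₁) : ℝ) : ℂ) * Complex.I)‖ := by norm_num
      _ < ‖X ((σ : ℂ) + ((-(-t₂) : ℝ) : ℂ) * Complex.I)‖ := by
          rw [heven (-t₁), heven (-t₂)]; exact this
      _ = ‖X ((σ : ℂ) + (t₂ : ℂ) * Complex.I)‖ := by norm_num
end

section
/- For every real σ and every real t ≠ 0, the function u ↦ ‖X(σ + iu)‖ is differentiable at t with derivative equal to the (convergent) series ∑_{n=1}^{∞} 8·t·(1/2 - σ)·(n - 1/4)·‖X(σ + it)‖ / (‖it + 2n + σ - 1‖² · ‖it + 2n - σ‖²). -/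
open Filter Topology Finset
namespace S8

lemma add_nat_ne_zero {z : ℂ} (h : z.im ≠ 0) (j : ℕ) : z + (j : ℂ) ≠ 0 := by
  intro hz; apply h
  have := congrArg Complex.im hz
  simpa using this

lemma Gamma_ne_zero_of_im {z : ℂ} (h : z.im ≠ 0) : Complex.Gamma z ≠ 0 := by
  apply Complex.Gamma_ne_zero
  intro m hm
  apply h; rw [hm]; simp

lemma GammaSeq_ne_zero {z : ℂ} (h : z.im ≠ 0) {n : ℕ} (hn : 1 ≤ n) :
    Complex.GammaSeq z n ≠ 0 := by
  rw [Complex.GammaSeq]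
  apply div_ne_zero
  · apply mul_ne_zero
    · rw [Ne, Complex.cpow_eq_zero_iff]
      intro hc
      exact (Nat.cast_ne_zero.mpr (by omega : n ≠ 0)) hc.1
    · exact_mod_cast Nat.cast_ne_zero.mpr n.factorial_ne_zero
  · exact Finset.prod_ne_zero_iff.mpr fun j _ => add_nat_ne_zero h j

lemma norm_sq_of_eq {z : ℂ} {x y : ℝ} (h : z = (x : ℂ) + (y : ℂ) * Complex.I) :
    ‖z‖ ^ 2 = x ^ 2 + y ^ 2 := by
  rw [h, Complex.sq_norm, Complex.normSq_add_mul_I]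

lemma log_norm_eq {z : ℂ} {x y : ℝ} (h : z = (x : ℂ) + (y : ℂ) * Complex.I) :
    Real.log ‖z‖ = Real.log (x ^ 2 + y ^ 2) / 2 := by
  rw [← norm_sq_of_eq h, Real.log_pow]
  push_cast; ring

lemma log_norm_GammaSeq {z : ℂ} (h : z.im ≠ 0) {n : ℕ} (hn : 1 ≤ n) :
    Real.log ‖Complex.GammaSeq z n‖ =
      z.re * Real.log n + Real.log n.factorial
        - ∑ j ∈ Finset.range (n + 1), Real.log ‖z + (j : ℂ)‖ := by
  have hn0 : (0 : ℝ) < (n : ℝ) := by exact_mod_cast Nat.pos_of_ne_zero (by omega)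
  have e : ‖Complex.GammaSeq z n‖ =
      (n : ℝ) ^ z.re * (n.factorial : ℝ) / ∏ j ∈ Finset.range (n + 1), ‖z + (j : ℂ)‖ := by
    rw [Complex.GammaSeq, norm_div, norm_mul, norm_prod]
    congr 1
    congr 1
    · rw [show ((n : ℂ)) = (((n : ℝ) : ℂ)) by push_cast; ring,
        Complex.norm_cpow_eq_rpow_re_of_pos hn0]
    · simp
  rw [e, Real.log_div, Real.log_mul, Real.log_rpow hn0, Real.log_prod]
  · intro j _
    exact norm_ne_zero_iff.mpr (add_nat_ne_zero h j)
  · exact ne_of_gt (Real.rpow_pos_of_pos hn0 _)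
  · exact_mod_cast Nat.cast_ne_zero.mpr n.factorial_ne_zero
  · exact ne_of_gt (mul_pos (Real.rpow_pos_of_pos hn0 _) (by exact_mod_cast n.factorial_pos))
  · exact ne_of_gt (Finset.prod_pos fun j _ => norm_pos_iff.mpr (add_nat_ne_zero h j))

noncomputable def F (σ : ℝ) (n : ℕ) (u : ℝ) : ℝ :=
  (1 / 2 - σ) * Real.log n +
    ∑ j ∈ Finset.range (n + 1),
      (Real.log (((2 * (j : ℝ) + 1 + σ) ^ 2 + u ^ 2) / 4)
        - Real.log (((2 * (j : ℝ) + 2 - σ) ^ 2 + u ^ 2) / 4)) / 2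

noncomputable def za (σ u : ℝ) : ℂ := 1 - ((σ : ℂ) + (u : ℂ) * Complex.I) / 2
noncomputable def zb (σ u : ℝ) : ℂ := (1 + ((σ : ℂ) + (u : ℂ) * Complex.I)) / 2

noncomputable def G (σ : ℝ) (u : ℝ) : ℝ :=
  Real.log (‖Complex.Gamma (za σ u)‖ / ‖Complex.Gamma (zb σ u)‖)

lemma za_eq (σ u : ℝ) (j : ℕ) :
    za σ u + (j : ℂ) = ((1 - σ / 2 + (j : ℝ) : ℝ) : ℂ) + ((-(u / 2) : ℝ) : ℂ) * Complex.I := by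
  rw [za]; push_cast; ring

lemma zb_eq (σ u : ℝ) (j : ℕ) :
    zb σ u + (j : ℂ) = (((1 + σ) / 2 + (j : ℝ) : ℝ) : ℂ) + ((u / 2 : ℝ) : ℂ) * Complex.I := by
  rw [zb]; push_cast; ring

lemma za_im (σ u : ℝ) : (za σ u).im = -(u / 2) := by
  have := za_eq σ u 0
  simp at this
  rw [show za σ u = za σ u + (0:ℕ) by simp, za_eq]
  simp

lemma zb_im (σ u : ℝ) : (zb σ u).im = u / 2 := by
  rw [show zb σ u = zb σ u + (0:ℕ) by simp, zb_eq]
  simp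

lemma tendsto_F (σ : ℝ) {u : ℝ} (hu : u ≠ 0) :
    Tendsto (fun n => F σ n u) atTop (𝓝 (G σ u)) := by
  have hima : (za σ u).im ≠ 0 := by rw [za_im]; simpa using hu
  have himb : (zb σ u).im ≠ 0 := by rw [zb_im]; simpa using hu
  have hGa := Gamma_ne_zero_of_im hima
  have hGb := Gamma_ne_zero_of_im himb
  have h1 : Tendsto (fun n => ‖Complex.GammaSeq (za σ u) n‖ / ‖Complex.GammaSeq (zb σ u) n‖)
      atTop (𝓝 (‖Complex.Gamma (za σ u)‖ / ‖Complex.Gamma (zb σ u)‖)) :=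
    ((Complex.GammaSeq_tendsto_Gamma (za σ u)).norm).div
      ((Complex.GammaSeq_tendsto_Gamma (zb σ u)).norm) (norm_ne_zero_iff.mpr hGb)
  have hrat : (‖Complex.Gamma (za σ u)‖ / ‖Complex.Gamma (zb σ u)‖) ≠ 0 :=
    div_ne_zero (norm_ne_zero_iff.mpr hGa) (norm_ne_zero_iff.mpr hGb)
  have h2 : Tendsto
      (fun n => Real.log (‖Complex.GammaSeq (za σ u) n‖ / ‖Complex.GammaSeq (zb σ u) n‖))
      atTop (𝓝 (G σ u)) :=
    (Real.continuousAt_log hrat).tendsto.comp h1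
  apply h2.congr'
  rw [eventuallyEq_iff_exists_mem]
  refine ⟨Set.Ici 1, Ici_mem_atTop 1, fun n hn => ?_⟩
  have hn : 1 ≤ n := hn
  have hGSa := GammaSeq_ne_zero hima hn
  have hGSb := GammaSeq_ne_zero himb hn
  show Real.log (‖Complex.GammaSeq (za σ u) n‖ / ‖Complex.GammaSeq (zb σ u) n‖) = F σ n u
  rw [Real.log_div (norm_ne_zero_iff.mpr hGSa) (norm_ne_zero_iff.mpr hGSb),
    log_norm_GammaSeq hima hn, log_norm_GammaSeq himb hn, F]
  have hra : (za σ u).re = 1 - σ / 2 := by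
    rw [show za σ u = za σ u + (0:ℕ) by simp, za_eq]; simp
  have hrb : (zb σ u).re = (1 + σ) / 2 := by
    rw [show zb σ u = zb σ u + (0:ℕ) by simp, zb_eq]; simp
  rw [hra, hrb]
  have hsum : ∑ j ∈ Finset.range (n + 1),
      (Real.log (((2 * (j : ℝ) + 1 + σ) ^ 2 + u ^ 2) / 4)
        - Real.log (((2 * (j : ℝ) + 2 - σ) ^ 2 + u ^ 2) / 4)) / 2
      = ∑ j ∈ Finset.range (n + 1),
        (Real.log ‖zb σ u + (j : ℂ)‖ - Real.log ‖za σ u + (j : ℂ)‖) := by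
    apply Finset.sum_congr rfl
    intro j _
    rw [log_norm_eq (za_eq σ u j), log_norm_eq (zb_eq σ u j),
      show (1 - σ / 2 + (j:ℝ)) ^ 2 + (-(u/2)) ^ 2 = ((2 * (j : ℝ) + 2 - σ) ^ 2 + u ^ 2) / 4 by ring,
      show ((1 + σ) / 2 + (j:ℝ)) ^ 2 + (u/2) ^ 2 = ((2 * (j : ℝ) + 1 + σ) ^ 2 + u ^ 2) / 4 by ring]
    ring
  rw [hsum, Finset.sum_sub_distrib]
  ring


noncomputable def g (σ : ℝ) (j : ℕ) (u : ℝ) : ℝ :=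
  u / ((2 * (j : ℝ) + 1 + σ) ^ 2 + u ^ 2) - u / ((2 * (j : ℝ) + 2 - σ) ^ 2 + u ^ 2)


noncomputable def C (σ t : ℝ) (j : ℕ) : ℝ :=
  2 * |t| * (7 * |1 - 2 * σ| * ((j : ℝ) + 1)) / (((j : ℝ) + 1) ^ 2 * ((j : ℝ) + 1) ^ 2)


lemma summable_C (σ t : ℝ) : Summable (C σ t) := by
  have h3 : Summable (fun n : ℕ => 1 / ((n : ℝ)) ^ 3) :=
    Real.summable_one_div_nat_pow.mpr (by norm_num)
  have h4 : Summable (fun n : ℕ => (14 * |t| * |1 - 2 * σ|) * (1 / ((n : ℝ) + 1) ^ 3)) := by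
    apply Summable.mul_left
    have := (summable_nat_add_iff 1).mpr h3
    simpa using this
  apply h4.congr
  intro j
  have hj : ((j : ℝ) + 1) ≠ 0 := by positivity
  rw [C]
  field_simp
  ring


lemma bound_g (σ t : ℝ) (ht : t ≠ 0) :
    ∀ᶠ j in cofinite, ∀ u ∈ Metric.ball t (|t| / 2), ‖g σ j u‖ ≤ C σ t j := by
  rw [Nat.cofinite_eq_atTop, eventually_atTop]
  refine ⟨⌈|σ|⌉₊, fun j hj u hu => ?_⟩
  have hσj : |σ| ≤ (j : ℝ) := le_trans (Nat.le_ceil _) (by exact_mod_cast hj)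
  obtain ⟨hσ1, hσ2⟩ := abs_le.mp (le_refl |σ|) |>.imp (fun h => h) (fun h => h)
  have hσ1 : -(j : ℝ) ≤ σ := by
    have := neg_abs_le σ; linarith
  have hσ2 : σ ≤ (j : ℝ) := le_trans (le_abs_self σ) hσj
  have hu2 : |u| ≤ 2 * |t| := by
    have h1 : |u| - |t| ≤ |u - t| := by
      have := abs_sub_abs_le_abs_sub u t; linarith
    have h2 : |u - t| < |t| / 2 := by
      rw [Metric.mem_ball, Real.dist_eq] at hu; exact hu
    linarith [abs_nonneg t]
  set A : ℝ := (2 * (j : ℝ) + 1 + σ) ^ 2 + u ^ 2 with hA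
  set B : ℝ := (2 * (j : ℝ) + 2 - σ) ^ 2 + u ^ 2 with hB
  have hj1 : (0 : ℝ) < (j : ℝ) + 1 := by positivity
  have hAge : ((j : ℝ) + 1) ^ 2 ≤ A := by
    have h1 : (j : ℝ) + 1 ≤ 2 * (j : ℝ) + 1 + σ := by linarith
    nlinarith [sq_nonneg u]
  have hBge : ((j : ℝ) + 1) ^ 2 ≤ B := by
    have h1 : (j : ℝ) + 1 ≤ 2 * (j : ℝ) + 2 - σ := by linarith
    nlinarith [sq_nonneg u]
  have hApos : 0 < A := lt_of_lt_of_le (by positivity) hAge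
  have hBpos : 0 < B := lt_of_lt_of_le (by positivity) hBge
  have key : g σ j u = u * (B - A) / (A * B) := by
    rw [g, ← hA, ← hB, div_sub_div _ _ hApos.ne' hBpos.ne']
    ring
  have hBA : B - A = (1 - 2 * σ) * (4 * (j : ℝ) + 3) := by rw [hA, hB]; ring
  rw [Real.norm_eq_abs, key, abs_div, abs_mul, hBA, abs_mul,
    abs_of_pos (mul_pos hApos hBpos)]
  rw [C]
  apply div_le_div₀
  · positivity
  · have h1 : |4 * (j : ℝ) + 3| ≤ 7 * ((j : ℝ) + 1) := by
      rw [abs_of_pos (by positivity)]; linarith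
    calc |u| * (|1 - 2 * σ| * |4 * (j : ℝ) + 3|)
        ≤ (2 * |t|) * (|1 - 2 * σ| * (7 * ((j : ℝ) + 1))) := by
          apply mul_le_mul hu2
          · exact mul_le_mul_of_nonneg_left h1 (abs_nonneg _)
          · positivity
          · positivity
      _ = 2 * |t| * (7 * |1 - 2 * σ| * ((j : ℝ) + 1)) := by ring
  · positivity
  · exact mul_le_mul hAge hBge (by positivity) (le_of_lt hApos)


lemma summable_g (σ t : ℝ) (ht : t ≠ 0) : Summable (fun j => g σ j t) := by
  apply Summable.of_norm_bounded_eventually (summable_C σ t)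
  filter_upwards [bound_g σ t ht] with j hj
  exact hj t (Metric.mem_ball_self (by positivity))


lemma hasDerivAt_logterm (c : ℝ) {x : ℝ} (hx : x ≠ 0) :
    HasDerivAt (fun u : ℝ => Real.log ((c ^ 2 + u ^ 2) / 4)) (2 * x / (c ^ 2 + x ^ 2)) x := by
  have hx2 : 0 < x ^ 2 := by positivity
  have hq : 0 < c ^ 2 + x ^ 2 := by positivity
  have h1 : HasDerivAt (fun u : ℝ => (c ^ 2 + u ^ 2) / 4) (x / 2) x := by
    have := ((hasDerivAt_pow 2 x).const_add (c ^ 2)).div_const 4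
    refine this.congr_deriv ?_
    norm_num
    ring
  have h2 : ((c ^ 2 + x ^ 2) / 4) ≠ 0 := by positivity
  have := (Real.hasDerivAt_log h2).comp x h1
  refine this.congr_deriv ?_
  field_simp
  ring


lemma hasDerivAt_F (σ : ℝ) (n : ℕ) {x : ℝ} (hx : x ≠ 0) :
    HasDerivAt (F σ n) (∑ j ∈ Finset.range (n + 1), g σ j x) x := by
  apply HasDerivAt.const_add
  apply HasDerivAt.fun_sum
  intro j _
  have h1 := hasDerivAt_logterm (2 * (j : ℝ) + 1 + σ) hx
  have h2 := hasDerivAt_logterm (2 * (j : ℝ) + 2 - σ) hx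
  have := (h1.sub h2).div_const 2
  refine this.congr_deriv ?_
  rw [g]
  ring


end S8

theorem stmt_8 (σ t : ℝ) (ht : t ≠ 0) :
    Summable (fun n : ℕ =>
      8 * t * (1 / 2 - σ) * (((n : ℝ) + 1) - 1 / 4) * ‖X ((σ : ℂ) + (t : ℂ) * Complex.I)‖ /
        (‖Complex.I * (t : ℂ) + 2 * ((n : ℂ) + 1) + (σ : ℂ) - 1‖ ^ 2 *
          ‖Complex.I * (t : ℂ) + 2 * ((n : ℂ) + 1) - (σ : ℂ)‖ ^ 2)) ∧
    HasDerivAt (fun u : ℝ => ‖X ((σ : ℂ) + (u : ℂ) * Complex.I)‖)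
      (∑' n : ℕ,
        8 * t * (1 / 2 - σ) * (((n : ℝ) + 1) - 1 / 4) * ‖X ((σ : ℂ) + (t : ℂ) * Complex.I)‖ /
          (‖Complex.I * (t : ℂ) + 2 * ((n : ℂ) + 1) + (σ : ℂ) - 1‖ ^ 2 *
            ‖Complex.I * (t : ℂ) + 2 * ((n : ℂ) + 1) - (σ : ℂ)‖ ^ 2)) t := by
  have habs : (0:ℝ) < |t|/2 := by positivity
  have hts : t ∈ Metric.ball t (|t|/2) := Metric.mem_ball_self habs
  have hmemne : ∀ x ∈ Metric.ball t (|t|/2), x ≠ 0 := by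
    intro x hx h
    rw [Metric.mem_ball, Real.dist_eq, h, zero_sub, abs_neg] at hx
    linarith
  have hUF : TendstoUniformlyOn (fun n u => ∑ j ∈ Finset.range (n+1), S8.g σ j u)
      (fun u => ∑' j, S8.g σ j u) atTop (Metric.ball t (|t|/2)) := by
    have H := tendstoUniformlyOn_tsum_of_cofinite_eventually (S8.summable_C σ t) (S8.bound_g σ t ht)
    intro v hv
    exact (Filter.tendsto_finset_range.comp (Filter.tendsto_add_atTop_nat 1)).eventually (H v hv)
  have hd : HasDerivAt (S8.G σ) (∑' j, S8.g σ j t) t := by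
    refine hasDerivAt_of_tendstoUniformlyOn (f := fun n => S8.F σ n) Metric.isOpen_ball hUF ?_ ?_ hts
    · exact Filter.Eventually.of_forall (fun n x hx => S8.hasDerivAt_F σ n (hmemne x hx))
    · exact fun x hx => S8.tendsto_F σ (hmemne x hx)
  have hKpos : (0:ℝ) < (5 / Real.pi) ^ ((1:ℝ)/2 - σ) :=
    Real.rpow_pos_of_pos (by positivity) _
  have hXeq : ∀ u : ℝ, u ≠ 0 →
      ‖X ((σ:ℂ) + (u:ℂ)*Complex.I)‖ = (5 / Real.pi) ^ ((1:ℝ)/2 - σ) * Real.exp (S8.G σ u) := by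
    intro u hu
    have hima : (S8.za σ u).im ≠ 0 := by rw [S8.za_im]; simpa using hu
    have himb : (S8.zb σ u).im ≠ 0 := by rw [S8.zb_im]; simpa using hu
    have hGa := S8.Gamma_ne_zero_of_im hima
    have hGb := S8.Gamma_ne_zero_of_im himb
    have hexp : Real.exp (S8.G σ u) = ‖Complex.Gamma (S8.za σ u)‖ / ‖Complex.Gamma (S8.zb σ u)‖ :=
      Real.exp_log (div_pos (norm_pos_iff.mpr hGa) (norm_pos_iff.mpr hGb))
    have hcp : ‖(5 / Real.pi : ℂ) ^ ((1:ℂ)/2 - ((σ:ℂ) + (u:ℂ)*Complex.I))‖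
        = (5 / Real.pi) ^ ((1:ℝ)/2 - σ) := by
      rw [show (5 / Real.pi : ℂ) = ((5 / Real.pi : ℝ) : ℂ) by push_cast; ring,
        Complex.norm_cpow_eq_rpow_re_of_pos (by positivity)]
      congr 1
      simp
    calc ‖X ((σ:ℂ) + (u:ℂ)*Complex.I)‖
        = (5 / Real.pi) ^ ((1:ℝ)/2 - σ)
            * (‖Complex.Gamma (S8.za σ u)‖ / ‖Complex.Gamma (S8.zb σ u)‖) := by
          rw [X, norm_div, norm_mul, hcp, S8.za, S8.zb, mul_div_assoc]
      _ = (5 / Real.pi) ^ ((1:ℝ)/2 - σ) * Real.exp (S8.G σ u) := by rw [hexp]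
  have hXt := hXeq t ht
  have hterm : ∀ n : ℕ,
      8 * t * (1 / 2 - σ) * (((n : ℝ) + 1) - 1 / 4) * ‖X ((σ : ℂ) + (t : ℂ) * Complex.I)‖ /
        (‖Complex.I * (t : ℂ) + 2 * ((n : ℂ) + 1) + (σ : ℂ) - 1‖ ^ 2 *
          ‖Complex.I * (t : ℂ) + 2 * ((n : ℂ) + 1) - (σ : ℂ)‖ ^ 2)
      = ‖X ((σ : ℂ) + (t : ℂ) * Complex.I)‖ * S8.g σ n t := by
    intro n
    have e1 : ‖Complex.I * (t : ℂ) + 2 * ((n : ℂ) + 1) + (σ : ℂ) - 1‖ ^ 2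
        = (2 * (n:ℝ) + 1 + σ)^2 + t^2 := S8.norm_sq_of_eq (by push_cast; ring)
    have e2 : ‖Complex.I * (t : ℂ) + 2 * ((n : ℂ) + 1) - (σ : ℂ)‖ ^ 2
        = (2 * (n:ℝ) + 2 - σ)^2 + t^2 := S8.norm_sq_of_eq (by push_cast; ring)
    have ht2 : (0:ℝ) < t^2 := by positivity
    have hA : (0:ℝ) < (2 * (n:ℝ) + 1 + σ)^2 + t^2 := by positivity
    have hB : (0:ℝ) < (2 * (n:ℝ) + 2 - σ)^2 + t^2 := by positivity
    rw [e1, e2, S8.g]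
    field_simp
    ring
  constructor
  · exact ((S8.summable_g σ t ht).mul_left _).congr (fun n => (hterm n).symm)
  · rw [tsum_congr hterm, tsum_mul_left, hXt, mul_assoc]
    have hEE : (fun u : ℝ => ‖X ((σ:ℂ) + (u:ℂ)*Complex.I)‖)
        =ᶠ[nhds t] (fun u : ℝ => (5 / Real.pi) ^ ((1:ℝ)/2 - σ) * Real.exp (S8.G σ u)) := by
      filter_upwards [eventually_ne_nhds ht] with u hu using hXeq u hu
    exact ((hd.exp).const_mul _).congr_of_eventuallyEq hEE
end

section
/- For every real σ and every real t ≠ 0, the function u ↦ ‖Γ(1 - (σ + iu)/2)‖ is differentiable at t with derivative equal to -t · ∑_{n=1}^{∞} ‖Γ(1 - (σ + it)/2)‖ / ‖σ + it - 2n‖². In particular this derivative is negative for t > 0 and positive for t < 0, so t ↦ ‖Γ(1 - (σ + it)/2)‖ is strictly decreasing on (0, ∞) and strictly increasing on (-∞, 0). -/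
open Complex Filter Topology

lemma sumB (a : ℝ) {b : ℝ} (hb : 0 ≤ b) : Summable fun n : ℕ => ((a + n)^2 + b)⁻¹ := by
  obtain ⟨m, hm⟩ : ∃ m : ℕ, |a| + 1 ≤ m := exists_nat_ge (|a| + 1)
  rw [← summable_nat_add_iff m]
  have hsum : Summable fun n : ℕ => (((n : ℝ) + 1)^2)⁻¹ := by
    have := (summable_nat_add_iff (f := fun n : ℕ => ((n : ℝ)^2)⁻¹) 1).mpr
      (Real.summable_nat_pow_inv.mpr one_lt_two)
    simpa using this
  refine Summable.of_nonneg_of_le (fun n => by positivity) (fun n => ?_) hsum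
  have h1 : (n : ℝ) + 1 ≤ a + ↑(n + m) := by
    have : -|a| ≤ a := neg_abs_le a
    push_cast; linarith
  exact inv_anti₀ (by positivity) (by nlinarith [sq_nonneg ((n:ℝ)+1)])

lemma factor_eq {b : ℝ} (hb : 0 < b) (y : ℝ) :
    Real.exp (-((1/2) * Real.log (1 + y^2/b^2))) = b / Real.sqrt (b^2 + y^2) := by
  have hc : (0:ℝ) < 1 + y^2/b^2 := by positivity
  have h1 : Real.exp (-((1/2) * Real.log (1 + y^2/b^2)))
      = (1 + y^2/b^2) ^ (-(1/2) : ℝ) := by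
    rw [Real.rpow_def_of_pos hc]; ring_nf
  rw [h1, Real.rpow_neg hc.le, ← Real.sqrt_eq_rpow, ← Real.sqrt_inv]
  have h2 : (1 + y^2/b^2)⁻¹ = b^2/(b^2+y^2) := by
    field_simp
  rw [h2, Real.sqrt_div (sq_nonneg b), Real.sqrt_sq hb.le]

lemma sumLog {x : ℝ} (hx : 0 < x) (y : ℝ) :
    Summable fun n : ℕ => (1/2) * Real.log (1 + y^2/(x+n)^2) := by
  refine Summable.of_nonneg_of_le (fun n => ?_) (fun n => ?_)
    (((sumB x (le_refl (0:ℝ))).mul_left (y^2/2)))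
  · have h0 : (0:ℝ) ≤ y^2/(x+n)^2 := by positivity
    have := Real.log_nonneg (show (1:ℝ) ≤ 1 + y^2/(x+n)^2 by linarith)
    linarith
  · have h := Real.log_le_sub_one_of_pos (show (0:ℝ) < 1 + y^2/(x+n)^2 by positivity)
    have h2 : Real.log (1 + y^2/(x+n)^2) ≤ y^2/(x+n)^2 := by linarith
    calc (1/2) * Real.log (1 + y^2/(x+n)^2) ≤ (1/2) * (y^2/(x+n)^2) := by linarith
    _ = y^2/2 * ((x+n)^2 + 0)⁻¹ := by rw [add_zero]; ring

lemma prodForm {x : ℝ} (hx : 0 < x) (y : ℝ) :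
    ‖Complex.Gamma (x + y*I)‖ =
      Real.Gamma x * Real.exp (-∑' n : ℕ, (1/2) * Real.log (1 + y^2/(x+n)^2)) := by
  set z : ℂ := (x:ℝ) + y*I with hz
  set L : ℝ := ∑' n : ℕ, (1/2) * Real.log (1 + y^2/(x+n)^2) with hL
  have hΓx : (0:ℝ) < Real.Gamma x := Real.Gamma_pos_of_pos hx
  have h1 : Tendsto (fun n => ‖GammaSeq z n‖ / ‖GammaSeq (x:ℂ) n‖) atTop
      (𝓝 (‖Complex.Gamma z‖ / Real.Gamma x)) := by
    have := ((GammaSeq_tendsto_Gamma z).norm).div ((GammaSeq_tendsto_Gamma (x:ℂ)).norm) ?_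
    · simpa [Complex.Gamma_ofReal, Complex.norm_real, abs_of_pos hΓx, Pi.div_def] using this
    · simp only [Complex.Gamma_ofReal, Complex.norm_real]
      exact fun h => (Real.Gamma_pos_of_pos hx).ne' (by simpa using h)
  have hratio : ∀ n : ℕ, 1 ≤ n → ‖GammaSeq z n‖ / ‖GammaSeq (x:ℂ) n‖
      = Real.exp (-(∑ j ∈ Finset.range (n+1), (1/2) * Real.log (1 + y^2/(x+j)^2))) := by
    intro n hn
    have hn0 : (0:ℝ) < n := by exact_mod_cast hn
    have habs : ∀ w : ℂ, ‖(n:ℂ) ^ w * (Nat.factorial n : ℂ) / ∏ j ∈ Finset.range (n+1), (w + j)‖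
        = (n:ℝ) ^ w.re * (Nat.factorial n : ℝ) / ∏ j ∈ Finset.range (n+1), ‖w + j‖ := by
      intro w
      rw [norm_div, norm_mul, norm_prod]
      congr 2
      · rw [show ((n:ℂ)) = (((n:ℝ)):ℂ) by push_cast; ring, Complex.norm_cpow_eq_rpow_re_of_pos hn0]
      · simp
    rw [GammaSeq, GammaSeq, habs, habs]
    have hre : (z.re) = x := by simp [hz]
    have hxre : ((x:ℂ)).re = x := by simp
    rw [hre, hxre]
    set N : ℝ := (n:ℝ) ^ x * (Nat.factorial n : ℝ) with hN
    have hnum : (0:ℝ) < N := by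
      have : (0:ℝ) < (n:ℝ) ^ x := Real.rpow_pos_of_pos hn0 x
      have h2 : (0:ℝ) < (Nat.factorial n : ℝ) := by exact_mod_cast n.factorial_pos
      positivity
    have hax : ∀ j : ℕ, ‖(x:ℂ) + j‖ = x + j := fun j => by
      rw [show ((x:ℂ) + j) = (((x + j : ℝ)):ℂ) by push_cast; ring, Complex.norm_real, Real.norm_eq_abs,
        abs_of_pos (by positivity)]
    have haz : ∀ j : ℕ, ‖z + j‖ = Real.sqrt ((x+j)^2 + y^2) := fun j => by
      rw [show (z + j) = (((x + j : ℝ)):ℂ) + (y:ℝ)*I by rw [hz]; push_cast; ring,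
        Complex.norm_add_mul_I]
    set Px : ℝ := ∏ j ∈ Finset.range (n+1), ‖(x:ℂ) + j‖ with hPxd
    set Pz : ℝ := ∏ j ∈ Finset.range (n+1), ‖z + j‖ with hPzd
    have hPx : (0:ℝ) < Px := Finset.prod_pos fun j _ => by rw [hax j]; positivity
    have hPz : (0:ℝ) < Pz := Finset.prod_pos fun j _ => by
      rw [haz j]; exact Real.sqrt_pos.mpr (by positivity)
    have hre2 : N / Pz / (N / Px) = Px / Pz := by
      field_simp
    rw [hre2, ← Finset.sum_neg_distrib, Real.exp_sum, hPxd, hPzd, ← Finset.prod_div_distrib]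
    refine Finset.prod_congr rfl fun j _ => ?_
    rw [hax j, haz j, factor_eq (show (0:ℝ) < x + j by positivity) y]
  have hps : Tendsto (fun n : ℕ => ∑ j ∈ Finset.range (n+1), (1/2) * Real.log (1+y^2/(x+j)^2))
      atTop (𝓝 L) :=
    ((sumLog hx y).hasSum.tendsto_sum_nat).comp (tendsto_add_atTop_nat 1)
  have h2 : Tendsto (fun n : ℕ =>
      Real.exp (-(∑ j ∈ Finset.range (n+1), (1/2) * Real.log (1+y^2/(x+j)^2)))) atTop
      (𝓝 (Real.exp (-L))) := (Real.continuous_exp.tendsto _).comp hps.neg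
  have heq : ‖Complex.Gamma z‖ / Real.Gamma x = Real.exp (-L) := by
    refine tendsto_nhds_unique (h1.congr' ?_) h2
    filter_upwards [eventually_ge_atTop 1] with n hn using hratio n hn
  rw [div_eq_iff hΓx.ne'] at heq
  rw [heq]; ring

lemma L_deriv {x : ℝ} (hx : 0 < x) (y : ℝ) :
    HasDerivAt (fun v : ℝ => ∑' n : ℕ, (1/2) * Real.log (1 + v^2/(x+n)^2))
      (∑' n : ℕ, y / ((x+n)^2 + y^2)) y := by
  have hterm : ∀ (n : ℕ) (v : ℝ), HasDerivAt (fun w : ℝ => (1/2) * Real.log (1 + w^2/(x+n)^2))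
      (v / ((x+n)^2 + v^2)) v := by
    intro n v
    have hb : (0:ℝ) < (x+n)^2 := by positivity
    have hc : (0:ℝ) < 1 + v^2/(x+n)^2 := by positivity
    have h1 : HasDerivAt (fun w : ℝ => 1 + w^2/(x+n)^2) (2*v/(x+n)^2) v := by
      have := ((hasDerivAt_pow 2 v).div_const ((x+n)^2)).const_add (1:ℝ)
      simpa [pow_one, mul_comm] using this
    have h2 := (h1.log hc.ne').const_mul (1/2 : ℝ)
    refine h2.congr_deriv ?_
    field_simp
  refine hasDerivAt_tsum_of_isPreconnected
    (u := fun n : ℕ => (|y|+1) * ((x+n)^2 + 0)⁻¹)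
    ((sumB x (le_refl (0:ℝ))).mul_left _) (isOpen_Ioo (a := -(|y|+1)) (b := |y|+1))
    (convex_Ioo _ _).isPreconnected (fun n v _ => hterm n v) (fun n v hv => ?_)
    (show y ∈ Set.Ioo (-(|y|+1)) (|y|+1) from
      ⟨by linarith [neg_abs_le y], by linarith [le_abs_self y]⟩)
    (sumLog hx y)
    (show y ∈ Set.Ioo (-(|y|+1)) (|y|+1) from
      ⟨by linarith [neg_abs_le y], by linarith [le_abs_self y]⟩)
  · have hb : (0:ℝ) < (x+n)^2 := by positivity
    have hd : (0:ℝ) < (x+n)^2 + v^2 := by positivity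
    simp only [Real.norm_eq_abs, add_zero]
    rw [abs_div, abs_of_pos hd]
    have hv1 : |v| ≤ |y| + 1 := by
      rcases hv with ⟨h1, h2⟩
      cases abs_cases v <;> linarith
    calc |v| / ((x+n)^2 + v^2) ≤ (|y|+1) / (x+n)^2 := by
          apply div_le_div₀ (by positivity) hv1 hb (by nlinarith [sq_nonneg v])
    _ = (|y|+1) * ((x+n)^2)⁻¹ := by ring

lemma pos_key {x : ℝ} (hx : 0 < x) (y : ℝ) :
    HasDerivAt (fun v : ℝ => ‖Complex.Gamma (x + v*I)‖)
      (-(‖Complex.Gamma (x + y*I)‖ * ∑' n : ℕ, y / ((x+n)^2 + y^2))) y := by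
  have hfun : (fun v : ℝ => ‖Complex.Gamma (x + v*I)‖)
      = fun v : ℝ => Real.Gamma x * Real.exp (-∑' n : ℕ, (1/2) * Real.log (1 + v^2/(x+n)^2)) :=
    funext fun v => prodForm hx v
  rw [hfun]
  have h := (((L_deriv hx y).neg).exp).const_mul (Real.Gamma x)
  refine h.congr_deriv ?_
  rw [prodForm hx y]
  simp only [Pi.neg_apply]
  ring

lemma sumD (x : ℝ) {y : ℝ} (hy : y ≠ 0) : Summable fun n : ℕ => y / ((x+n)^2 + y^2) := by
  have := (sumB x (sq_nonneg y)).mul_left y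
  simpa [div_eq_mul_inv] using this

lemma key_aux (m : ℕ) : ∀ x : ℝ, 0 < x + m → ∀ y : ℝ, y ≠ 0 →
    HasDerivAt (fun v : ℝ => ‖Complex.Gamma (x + v*I)‖)
      (-(‖Complex.Gamma (x + y*I)‖ * ∑' n : ℕ, y / ((x+n)^2 + y^2))) y := by
  induction m with
  | zero => intro x hx y _; exact pos_key (by simpa using hx) y
  | succ m ih =>
    intro x hx y hy
    have hx1 : 0 < (x + 1) + m := by push_cast at hx ⊢; linarith
    have hN := ih (x+1) hx1 y hy
    -- q v = ‖x + v i‖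
    have hq : HasDerivAt (fun v : ℝ => Real.sqrt (x^2 + v^2)) (y / Real.sqrt (x^2 + y^2)) y := by
      have hp : HasDerivAt (fun v : ℝ => x^2 + v^2) (2*y) y := by
        simpa [pow_one, mul_comm] using (hasDerivAt_pow 2 y).const_add (x^2)
      have h0 : x^2 + y^2 ≠ 0 := by positivity
      have := (Real.hasDerivAt_sqrt h0).comp y hp
      refine this.congr_deriv ?_
      field_simp
    have hqy : (0:ℝ) < Real.sqrt (x^2 + y^2) := Real.sqrt_pos.mpr (by positivity)
    have hdiv := hN.div hq hqy.ne'
    have heq : (fun v : ℝ => ‖Complex.Gamma (x + v*I)‖)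
        =ᶠ[𝓝 y] fun v : ℝ => ‖Complex.Gamma ((x+1:ℝ) + v*I)‖ / Real.sqrt (x^2 + v^2) := by
      filter_upwards [eventually_ne_nhds hy] with v hv
      have hz : (x:ℂ) + v*I ≠ 0 := by
        intro h
        have := congrArg Complex.im h
        simp at this
        exact hv this
      have hG := Complex.Gamma_add_one _ hz
      have harg : ((x:ℂ) + v*I) + 1 = ((x+1:ℝ):ℂ) + v*I := by push_cast; ring
      rw [harg] at hG
      rw [hG, norm_mul]
      have : ‖(x:ℂ) + v*I‖ = Real.sqrt (x^2 + v^2) := by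
        rw [show ((x:ℂ) + ↑v*I) = ((x:ℝ):ℂ) + (v:ℝ)*I by norm_num,
          Complex.norm_add_mul_I]
      rw [this]
      field_simp
    refine (hdiv.congr_of_eventuallyEq heq).congr_deriv ?_
    -- now identify the derivative values
    have hGval : ‖Complex.Gamma ((x+1:ℝ) + y*I)‖
        = Real.sqrt (x^2 + y^2) * ‖Complex.Gamma (x + y*I)‖ := by
      have hz : (x:ℂ) + y*I ≠ 0 := by
        intro h
        have := congrArg Complex.im h
        simp at this
        exact hy this
      have hG := Complex.Gamma_add_one _ hz
      have harg : ((x:ℂ) + y*I) + 1 = ((x+1:ℝ):ℂ) + y*I := by push_cast; ring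
      rw [harg] at hG
      rw [hG, norm_mul]
      congr 1
      rw [show ((x:ℂ) + ↑y*I) = ((x:ℝ):ℂ) + (y:ℝ)*I by norm_num,
        Complex.norm_add_mul_I]
    have hshift : (∑' n : ℕ, y / ((x+n)^2 + y^2))
        = y / (x^2 + y^2) + ∑' n : ℕ, y / (((x+1)+n)^2 + y^2) := by
      rw [(sumD x hy).tsum_eq_zero_add]
      congr 1
      · norm_num
      · exact tsum_congr fun n => by push_cast; ring_nf
    set s : ℝ := Real.sqrt (x^2 + y^2) with hsdef
    have hs : s^2 = x^2 + y^2 := Real.sq_sqrt (by positivity)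
    rw [hGval, hshift]
    generalize (∑' n : ℕ, y / (((x+1) + (n:ℝ))^2 + y^2)) = S
    rw [← hs]
    field_simp
    ring

lemma key (x : ℝ) {y : ℝ} (hy : y ≠ 0) :
    HasDerivAt (fun v : ℝ => ‖Complex.Gamma (x + v*I)‖)
      (-(‖Complex.Gamma (x + y*I)‖ * ∑' n : ℕ, y / ((x+n)^2 + y^2))) y := by
  obtain ⟨m, hm⟩ := exists_nat_gt (-x)
  exact key_aux m x (by linarith) y hy

theorem stmt_9 (σ : ℝ) :
    (∀ t : ℝ, t ≠ 0 →
      HasDerivAt (fun u : ℝ => ‖Complex.Gamma (1 - ((σ : ℂ) + (u : ℂ) * Complex.I) / 2)‖)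
        (-t * ∑' n : ℕ,
          ‖Complex.Gamma (1 - ((σ : ℂ) + (t : ℂ) * Complex.I) / 2)‖ /
            ‖(σ : ℂ) + (t : ℂ) * Complex.I - 2 * ((n : ℂ) + 1)‖ ^ 2) t) ∧
    (∀ t : ℝ, 0 < t →
      -t * (∑' n : ℕ,
        ‖Complex.Gamma (1 - ((σ : ℂ) + (t : ℂ) * Complex.I) / 2)‖ /
          ‖(σ : ℂ) + (t : ℂ) * Complex.I - 2 * ((n : ℂ) + 1)‖ ^ 2) < 0) ∧
    (∀ t : ℝ, t < 0 →
      0 < -t * (∑' n : ℕ,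
        ‖Complex.Gamma (1 - ((σ : ℂ) + (t : ℂ) * Complex.I) / 2)‖ /
          ‖(σ : ℂ) + (t : ℂ) * Complex.I - 2 * ((n : ℂ) + 1)‖ ^ 2)) ∧
    StrictAntiOn (fun t : ℝ => ‖Complex.Gamma (1 - ((σ : ℂ) + (t : ℂ) * Complex.I) / 2)‖)
      (Set.Ioi 0) ∧
    StrictMonoOn (fun t : ℝ => ‖Complex.Gamma (1 - ((σ : ℂ) + (t : ℂ) * Complex.I) / 2)‖)
      (Set.Iio 0) := by
  set x₀ : ℝ := 1 - σ/2 with hx₀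
  have harg : ∀ u : ℝ, (x₀:ℂ) + (-u/2 : ℝ)*I = 1 - ((σ:ℂ) + u*I)/2 := by
    intro u; rw [hx₀]; push_cast; ring
  have hterm : ∀ (t : ℝ) (n : ℕ),
      ‖(σ:ℂ) + t*I - 2*((n:ℂ)+1)‖^2 = (σ - 2*n - 2)^2 + t^2 := by
    intro t n
    rw [show (σ:ℂ) + t*I - 2*((n:ℂ)+1) = ((σ - 2*n - 2 : ℝ):ℂ) + (t:ℝ)*I by push_cast; ring,
      Complex.norm_add_mul_I, Real.sq_sqrt (by positivity)]
  have hsumT : ∀ t : ℝ, t ≠ 0 → Summable (fun n : ℕ => ((σ - 2*n - 2)^2 + t^2)⁻¹) := by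
    intro t ht
    refine ((sumB x₀ (b := t^2/4) (by positivity)).mul_left (4⁻¹ : ℝ)).congr fun n => ?_
    have h4 : (σ - 2*n - 2)^2 + t^2 = 4 * ((x₀ + n)^2 + t^2/4) := by rw [hx₀]; ring
    rw [h4, mul_inv]
  have hGpos : ∀ t : ℝ, t ≠ 0 →
      0 < ‖Complex.Gamma (1 - ((σ:ℂ) + t*I)/2)‖ := by
    intro t ht
    rw [norm_pos_iff]
    apply Complex.Gamma_ne_zero
    intro m h
    have him := congrArg Complex.im h
    simp at him
    exact ht him
  -- the series in the statement is positive
  have hTpos : ∀ t : ℝ, t ≠ 0 →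
      0 < ∑' n : ℕ, ‖Complex.Gamma (1 - ((σ:ℂ) + t*I)/2)‖ /
        ‖(σ:ℂ) + t*I - 2*((n:ℂ)+1)‖^2 := by
    intro t ht
    set G := ‖Complex.Gamma (1 - ((σ:ℂ) + t*I)/2)‖ with hG
    have hsum : Summable (fun n : ℕ => G / ‖(σ:ℂ) + t*I - 2*((n:ℂ)+1)‖^2) := by
      refine ((hsumT t ht).mul_left G).congr fun n => ?_
      rw [hterm t n, div_eq_mul_inv]
    refine hsum.tsum_pos (fun n => ?_) 0 ?_
    · have := hterm t n
      positivity
    · rw [hterm t 0]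
      exact div_pos (hGpos t ht) (by positivity)
  -- main derivative claim
  have hmain : ∀ t : ℝ, t ≠ 0 →
      HasDerivAt (fun u : ℝ => ‖Complex.Gamma (1 - ((σ : ℂ) + (u : ℂ) * I) / 2)‖)
        (-t * ∑' n : ℕ,
          ‖Complex.Gamma (1 - ((σ : ℂ) + (t : ℂ) * I) / 2)‖ /
            ‖(σ : ℂ) + (t : ℂ) * I - 2 * ((n : ℂ) + 1)‖ ^ 2) t := by
    intro t ht
    have hy : (-t/2 : ℝ) ≠ 0 := div_ne_zero (neg_ne_zero.mpr ht) two_ne_zero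
    have hk := key x₀ hy
    have hinner : HasDerivAt (fun u : ℝ => -u/2) (-1/2 : ℝ) t := by
      simpa using ((hasDerivAt_id t).neg.div_const 2)
    have hcomp := HasDerivAt.comp t hk hinner
    have hfun : ((fun v : ℝ => ‖Complex.Gamma (x₀ + v*I)‖) ∘ (fun u : ℝ => -u/2))
        = fun u : ℝ => ‖Complex.Gamma (1 - ((σ:ℂ) + u*I)/2)‖ := by
      funext u
      simp only [Function.comp_apply]
      rw [harg u]
    rw [hfun] at hcomp
    refine hcomp.congr_deriv ?_
    -- identify derivative values
    have hGv : ‖Complex.Gamma ((x₀:ℂ) + (-t/2 : ℝ)*I)‖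
        = ‖Complex.Gamma (1 - ((σ:ℂ) + t*I)/2)‖ := by rw [harg t]
    set G := ‖Complex.Gamma (1 - ((σ:ℂ) + t*I)/2)‖ with hGdef
    have hL : (∑' n : ℕ, (-t/2 : ℝ) / ((x₀+n)^2 + (-t/2 : ℝ)^2))
        = (-2*t) * ∑' n : ℕ, ((σ - 2*n - 2)^2 + t^2)⁻¹ := by
      rw [← tsum_mul_left]
      refine tsum_congr fun n => ?_
      have h4 : (x₀ + n)^2 + (-t/2)^2 = ((σ - 2*n - 2)^2 + t^2)/4 := by rw [hx₀]; ring
      rw [h4]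
      have hpos : (0:ℝ) < (σ - 2*n - 2)^2 + t^2 := by
        have : t^2 > 0 := by positivity
        nlinarith [sq_nonneg (σ - 2*n - 2)]
      field_simp
      ring
    have hR : (∑' n : ℕ, G / ‖(σ:ℂ) + t*I - 2*((n:ℂ)+1)‖^2)
        = G * ∑' n : ℕ, ((σ - 2*n - 2)^2 + t^2)⁻¹ := by
      rw [← tsum_mul_left]
      exact tsum_congr fun n => by rw [hterm t n, div_eq_mul_inv]
    rw [hGv, hL, hR]
    ring
  refine ⟨hmain, fun t ht => mul_neg_of_neg_of_pos (by linarith) (hTpos t ht.ne'),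
    fun t ht => mul_pos (by linarith) (hTpos t ht.ne), ?_, ?_⟩
  · refine strictAntiOn_of_deriv_neg (convex_Ioi 0) ?_ ?_
    · exact fun t ht => ((hmain t (ne_of_gt ht)).continuousAt).continuousWithinAt
    · intro t ht
      rw [interior_Ioi] at ht
      rw [(hmain t (ne_of_gt ht)).deriv]
      exact mul_neg_of_neg_of_pos (by linarith [Set.mem_Ioi.mp ht])
        (hTpos t (ne_of_gt ht))
  · refine strictMonoOn_of_deriv_pos (convex_Iio 0) ?_ ?_
    · exact fun t ht => ((hmain t (ne_of_lt ht)).continuousAt).continuousWithinAt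
    · intro t ht
      rw [interior_Iio] at ht
      rw [(hmain t (ne_of_lt ht)).deriv]
      exact mul_pos (by linarith [Set.mem_Iio.mp ht]) (hTpos t (ne_of_lt ht))
end

section
/- For every real σ and every real t ≠ 0, the function u ↦ ‖Γ((1 + σ + iu)/2)‖ is differentiable at t with derivative equal to -t · ∑_{n=1}^{∞} ‖Γ((1 + σ + it)/2)‖ / ‖σ + it + 2n - 1‖². In particular this derivative is negative for t > 0 and positive for t < 0, so t ↦ ‖Γ((1 + σ + it)/2)‖ is strictly decreasing on (0, ∞) and strictly increasing on (-∞, 0). -/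
open Complex Filter MeasureTheory Set Topology

noncomputable def gApprox (n : ℕ) : ℝ → ℝ :=
  Set.indicator (Ioc 0 (n : ℝ)) (fun x => (1 - x / n) ^ n)

lemma gApprox_nonneg (n : ℕ) {x : ℝ} : 0 ≤ gApprox n x := by
  unfold gApprox
  by_cases h : x ∈ Ioc (0 : ℝ) n
  · rw [indicator_of_mem h]
    have : 0 ≤ 1 - x / n := by
      rcases Nat.eq_zero_or_pos n with rfl | hn
      · simp at h
      · have : x / n ≤ 1 := div_le_one_of_le₀ h.2 (by positivity)
        linarith
    positivity
  · rw [indicator_of_notMem h]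

lemma gApprox_le_exp (n : ℕ) {x : ℝ} (hx : 0 < x) : gApprox n x ≤ Real.exp (-x) := by
  unfold gApprox
  by_cases h : x ∈ Ioc (0 : ℝ) n
  · rw [indicator_of_mem h]
    exact Real.one_sub_div_pow_le_exp_neg h.2
  · rw [indicator_of_notMem h]
    positivity

lemma gApprox_measurable (n : ℕ) : Measurable (gApprox n) :=
  (((continuous_const.sub (continuous_id'.div_const (n : ℝ))).pow n).measurable).indicator
    measurableSet_Ioc

lemma gApprox_tendsto {x : ℝ} (hx : 0 < x) :
    Tendsto (fun n : ℕ => gApprox n x) atTop (𝓝 (Real.exp (-x))) := by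
  apply Tendsto.congr'
  · show ∀ᶠ n : ℕ in atTop, (1 - x / n) ^ n = gApprox n x
    filter_upwards [eventually_ge_atTop ⌈x⌉₊] with n hn
    rw [Nat.ceil_le] at hn
    rw [gApprox, indicator_of_mem (show x ∈ Ioc (0:ℝ) (n:ℝ) from ⟨hx, hn⟩)]
  · convert Real.tendsto_one_add_div_pow_exp (-x) using 2
    rw [neg_div, ← sub_eq_add_neg]

noncomputable def cBound (a b : ℝ) (n : ℕ) : ℝ :=
  ∫ x in Ioi (0:ℝ), (Real.exp (-x) - gApprox n x) * (x ^ (a-1) + x ^ (b-1))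

lemma domIntegrable {a b : ℝ} (ha : 0 < a) (hb : 0 < b) :
    IntegrableOn (fun x : ℝ => Real.exp (-x) * (x ^ (a-1) + x ^ (b-1))) (Ioi 0) := by
  have h := (Real.GammaIntegral_convergent ha).add (Real.GammaIntegral_convergent hb)
  exact h.congr (ae_of_all _ fun x => by simp [mul_add])

lemma cBound_integrand_integrable {a b : ℝ} (ha : 0 < a) (hb : 0 < b) (n : ℕ) :
    IntegrableOn (fun x : ℝ => (Real.exp (-x) - gApprox n x) * (x ^ (a-1) + x ^ (b-1))) (Ioi 0) := by
  apply Integrable.mono (domIntegrable ha hb)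
  · apply Measurable.aestronglyMeasurable
    have m1 : Measurable fun x : ℝ => x ^ (a-1) := by measurability
    have m2 : Measurable fun x : ℝ => x ^ (b-1) := by measurability
    exact ((Real.measurable_exp.comp measurable_neg).sub (gApprox_measurable n)).mul (m1.add m2)
  · rw [ae_restrict_iff' measurableSet_Ioi]
    filter_upwards with x hx
    have h1 : 0 ≤ gApprox n x := gApprox_nonneg n
    have h2 : gApprox n x ≤ Real.exp (-x) := gApprox_le_exp n hx
    have hx' : (0:ℝ) < x := hx
    have h3 : (0:ℝ) ≤ x ^ (a-1) + x ^ (b-1) := by positivity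
    rw [Real.norm_eq_abs, Real.norm_eq_abs, _root_.abs_of_nonneg (mul_nonneg (Real.exp_nonneg _) h3),
      _root_.abs_of_nonneg (mul_nonneg (by linarith) h3)]
    apply mul_le_mul_of_nonneg_right (by linarith) h3

lemma cBound_tendsto_zero {a b : ℝ} (ha : 0 < a) (hb : 0 < b) :
    Tendsto (cBound a b) atTop (𝓝 0) := by
  have h := tendsto_integral_of_dominated_convergence
    (μ := volume.restrict (Ioi (0:ℝ)))
    (F := fun n x => (Real.exp (-x) - gApprox n x) * (x ^ (a-1) + x ^ (b-1)))
    (f := fun _ => (0:ℝ))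
    (fun x : ℝ => Real.exp (-x) * (x ^ (a-1) + x ^ (b-1)))
    (fun n => (cBound_integrand_integrable ha hb n).aestronglyMeasurable)
    (domIntegrable ha hb)
    ?_ ?_
  · simp only [integral_zero] at h; exact h
  · intro n
    rw [ae_restrict_iff' measurableSet_Ioi]
    filter_upwards with x hx
    have h1 : 0 ≤ gApprox n x := gApprox_nonneg n
    have h2 : gApprox n x ≤ Real.exp (-x) := gApprox_le_exp n hx
    have hx' : (0:ℝ) < x := hx
    have h3 : (0:ℝ) ≤ x ^ (a-1) + x ^ (b-1) := by positivity
    rw [Real.norm_eq_abs, _root_.abs_of_nonneg (mul_nonneg (by linarith) h3)]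
    apply mul_le_mul_of_nonneg_right (by linarith) h3
  · rw [ae_restrict_iff' measurableSet_Ioi]
    filter_upwards with x hx
    have hlim : Tendsto (fun n : ℕ => Real.exp (-x) - gApprox n x) atTop (𝓝 (0:ℝ)) := by
      simpa using (tendsto_const_nhds (x := Real.exp (-x))).sub (gApprox_tendsto hx)
    simpa using hlim.mul_const (x ^ (a-1) + x ^ (b-1))

lemma gamma_eq_int {s : ℂ} (hs : 0 < s.re) :
    Complex.Gamma s = ∫ x in Ioi (0:ℝ), ↑(Real.exp (-x)) * (x:ℂ) ^ (s-1) := by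
  rw [Complex.Gamma_eq_integral hs]; rfl

lemma gammaSeq_eq_int {s : ℂ} (hs : 0 < s.re) {n : ℕ} (hn : n ≠ 0) :
    Complex.GammaSeq s n = ∫ x in Ioi (0:ℝ), ↑(gApprox n x) * (x:ℂ) ^ (s-1) := by
  rw [Complex.GammaSeq_eq_approx_Gamma_integral hs hn,
    intervalIntegral.integral_of_le (by positivity : (0:ℝ) ≤ n)]
  have key : ∀ x : ℝ, (↑(gApprox n x) : ℂ) * (x:ℂ) ^ (s-1)
      = Set.indicator (Ioc (0:ℝ) (n:ℝ))
          (fun x : ℝ => (↑((1 - x/(n:ℝ))^n) : ℂ) * (x:ℂ) ^ (s-1)) x := by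
    intro x
    unfold gApprox
    by_cases h : x ∈ Ioc (0:ℝ) (n:ℝ) <;> simp [h]
  simp_rw [key]
  rw [MeasureTheory.integral_indicator measurableSet_Ioc,
    Measure.restrict_restrict_of_subset Ioc_subset_Ioi_self]

lemma gApprox_int_integrable {s : ℂ} (hs : 0 < s.re) (n : ℕ) :
    IntegrableOn (fun x : ℝ => ↑(gApprox n x) * (x:ℂ) ^ (s-1)) (Ioi 0) := by
  apply Integrable.mono (Complex.GammaIntegral_convergent hs)
  · have hA := (Complex.GammaIntegral_convergent hs).aestronglyMeasurable
    have hm : AEStronglyMeasurable (fun x : ℝ => (↑(gApprox n x / Real.exp (-x)) : ℂ))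
        (volume.restrict (Ioi 0)) :=
      (Complex.measurable_ofReal.comp ((gApprox_measurable n).div
        (Real.measurable_exp.comp measurable_neg))).aestronglyMeasurable
    apply (hm.mul hA).congr
    apply ae_of_all
    intro x
    simp only [Pi.mul_apply]
    have he : Real.exp (-x) ≠ 0 := Real.exp_ne_zero _
    push_cast
    field_simp
  · rw [ae_restrict_iff' measurableSet_Ioi]
    filter_upwards with x hx
    have hx' : (0:ℝ) < x := hx
    rw [norm_mul, norm_mul, Complex.norm_real, Complex.norm_real, Real.norm_eq_abs,
      Real.norm_eq_abs, _root_.abs_of_nonneg (gApprox_nonneg n),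
      _root_.abs_of_nonneg (Real.exp_nonneg _)]
    exact mul_le_mul_of_nonneg_right (gApprox_le_exp n hx') (norm_nonneg _)

lemma gammaSeq_dist_le {a b : ℝ} (ha : 0 < a) (hab : a ≤ b) {s : ℂ} (hsa : a ≤ s.re)
    (hsb : s.re ≤ b) {n : ℕ} (hn : n ≠ 0) :
    ‖Complex.Gamma s - Complex.GammaSeq s n‖ ≤ cBound a b n := by
  have hs : 0 < s.re := lt_of_lt_of_le ha hsa
  rw [gamma_eq_int hs, gammaSeq_eq_int hs hn,
    ← MeasureTheory.integral_sub (Complex.GammaIntegral_convergent hs)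
      (gApprox_int_integrable hs n)]
  apply MeasureTheory.norm_integral_le_of_norm_le
    (cBound_integrand_integrable ha (lt_of_lt_of_le ha hab) n)
  rw [ae_restrict_iff' measurableSet_Ioi]
  filter_upwards with x hx
  have hx' : (0:ℝ) < x := hx
  have hge : gApprox n x ≤ Real.exp (-x) := gApprox_le_exp n hx'
  have hg0 : 0 ≤ gApprox n x := gApprox_nonneg n
  rw [← sub_mul, norm_mul]
  have h1 : ‖(↑(Real.exp (-x)) - ↑(gApprox n x) : ℂ)‖ = Real.exp (-x) - gApprox n x := by
    rw [← Complex.ofReal_sub, Complex.norm_real, Real.norm_eq_abs]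
    exact _root_.abs_of_nonneg (by linarith)
  rw [h1]
  apply mul_le_mul_of_nonneg_left ?_ (by linarith)
  rw [Complex.norm_cpow_eq_rpow_re_of_pos hx']
  have hre : (s-1).re = s.re - 1 := by simp
  rw [hre]
  rcases le_total x 1 with h2 | h2
  · have h3 : x ^ (s.re - 1) ≤ x ^ (a - 1) :=
      Real.rpow_le_rpow_of_exponent_ge hx' h2 (by linarith)
    have h4 : 0 ≤ x ^ (b-1) := Real.rpow_nonneg hx'.le _
    linarith
  · have h3 : x ^ (s.re - 1) ≤ x ^ (b - 1) :=
      Real.rpow_le_rpow_of_exponent_le h2 (by linarith)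
    have h4 : 0 ≤ x ^ (a-1) := Real.rpow_nonneg hx'.le _
    linarith

lemma gammaSeq_tendstoUniformlyOn {a b : ℝ} (ha : 0 < a) (hab : a ≤ b) :
    TendstoUniformlyOn (fun (n : ℕ) (s : ℂ) => Complex.GammaSeq s n) Complex.Gamma atTop
      {s : ℂ | a ≤ s.re ∧ s.re ≤ b} := by
  rw [Metric.tendstoUniformlyOn_iff]
  intro ε hε
  have h0 : ∀ᶠ n : ℕ in atTop, cBound a b n < ε :=
    (cBound_tendsto_zero ha (lt_of_lt_of_le ha hab)).eventually_lt_const hε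
  filter_upwards [h0, eventually_ne_atTop 0] with n hc hn
  intro s hs
  rw [dist_eq_norm]
  exact lt_of_le_of_lt (gammaSeq_dist_le ha hab hs.1 hs.2 hn) hc

lemma summable_inv_normSq (w : ℂ) :
    Summable (fun n : ℕ => 1 / Complex.normSq (w + n)) := by
  set N : ℕ := ⌈1 - w.re⌉₊ with hN
  rw [← summable_nat_add_iff N]
  have hbase : Summable (fun n : ℕ => 1 / ((n:ℝ) + 1) ^ 2) := by
    have := (Real.summable_one_div_nat_pow (p := 2)).mpr one_lt_two
    rw [← summable_nat_add_iff 1] at this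
    simpa using this
  apply Summable.of_nonneg_of_le
    (fun n => div_nonneg one_pos.le (Complex.normSq_nonneg _)) ?_ hbase
  intro n
  have h1 : (1:ℝ) - w.re ≤ N := Nat.le_ceil _
  have h2 : ((n:ℝ) + 1) ≤ w.re + (n + N : ℕ) := by
    push_cast
    linarith
  have h3 : ((n:ℝ) + 1) ^ 2 ≤ Complex.normSq (w + (n + N : ℕ)) := by
    rw [Complex.normSq_apply]
    have hre : (w + (n + N : ℕ)).re = w.re + (n + N : ℕ) := by simp
    have him : (w + (n + N : ℕ)).im = w.im := by simp
    rw [hre, him]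
    have h4 : ((n:ℝ)+1)^2 ≤ (w.re + (n + N : ℕ))^2 := by
      apply sq_le_sq' ?_ h2
      have : (0:ℝ) ≤ (n:ℝ) + 1 := by positivity
      linarith
    nlinarith [sq_nonneg w.im]
  exact div_le_div_of_nonneg_left one_pos.le (by positivity) h3

lemma logDeriv_gammaSeq {n : ℕ} (hn : n ≠ 0) {s : ℂ} (hs : ∀ j : ℕ, s + j ≠ 0) :
    logDeriv (fun z => Complex.GammaSeq z n) s
      = Real.log n - ∑ j ∈ Finset.range (n+1), 1 / (s + j) := by
  have hne : (n:ℂ) ≠ 0 := Nat.cast_ne_zero.mpr hn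
  have hfac : (n.factorial : ℂ) ≠ 0 := Nat.cast_ne_zero.mpr n.factorial_ne_zero
  have hpow : (n:ℂ) ^ s ≠ 0 := by
    intro h
    exact hne (Complex.cpow_eq_zero_iff _ _ |>.mp h).1
  have hprodne : (∏ j ∈ Finset.range (n+1), (s + (j:ℂ))) ≠ 0 :=
    Finset.prod_ne_zero_iff.mpr fun j _ => hs j
  have hdnum : DifferentiableAt ℂ (fun z : ℂ => (n:ℂ) ^ z * (n.factorial : ℂ)) s := by
    apply DifferentiableAt.mul_const
    exact ((hasDerivAt_id s).const_cpow (Or.inl hne)).differentiableAt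
  have hdden : DifferentiableAt ℂ (fun z : ℂ => ∏ j ∈ Finset.range (n+1), (z + (j:ℂ))) s := by
    apply DifferentiableAt.fun_finsetProd
    intro j _
    exact (differentiableAt_id.add_const _)
  have hD : logDeriv (fun z => Complex.GammaSeq z n) s
      = logDeriv (fun z : ℂ => (n:ℂ) ^ z * (n.factorial : ℂ)) s
        - logDeriv (fun z : ℂ => ∏ j ∈ Finset.range (n+1), (z + (j:ℂ))) s := by
    have : (fun z => Complex.GammaSeq z n)
        = fun z : ℂ => ((n:ℂ) ^ z * (n.factorial : ℂ)) / (∏ j ∈ Finset.range (n+1), (z + j)) := by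
      funext z
      rfl
    rw [this]
    exact logDeriv_div s (mul_ne_zero hpow hfac) hprodne hdnum hdden
  rw [hD]
  have h1 : logDeriv (fun z : ℂ => (n:ℂ) ^ z * (n.factorial : ℂ)) s = Real.log n := by
    rw [logDeriv_mul_const _ _ hfac, logDeriv_apply]
    have hd : HasDerivAt (fun z : ℂ => (n:ℂ) ^ z) ((n:ℂ) ^ s * Complex.log n) s := by
      simpa using (hasDerivAt_id s).const_cpow (Or.inl hne)
    have hder : deriv (fun z : ℂ => (n:ℂ) ^ z) s = (n:ℂ) ^ s * Complex.log n := hd.deriv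
    rw [hder, Complex.ofReal_log (Nat.cast_nonneg n)]
    field_simp
    exact_mod_cast (Complex.ofReal_log (Nat.cast_nonneg n))
  have h2 : logDeriv (fun z : ℂ => ∏ j ∈ Finset.range (n+1), (z + (j:ℂ))) s
      = ∑ j ∈ Finset.range (n+1), 1 / (s + j) := by
    have hp := logDeriv_prod (s := Finset.range (n+1)) (f := fun (j : ℕ) (z : ℂ) => z + (j:ℂ)) (x := s)
      (fun j _ => hs j) (fun j _ => differentiableAt_id.add_const _)
    have hp' : logDeriv (fun z : ℂ => ∏ j ∈ Finset.range (n+1), (z + (j:ℂ))) s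
        = ∑ j ∈ Finset.range (n+1), logDeriv (fun z : ℂ => z + (j:ℂ)) s := hp
    rw [hp']
    apply Finset.sum_congr rfl
    intro j _
    simp [logDeriv_apply]
  rw [h1, h2]

lemma im_logDeriv_gamma_of_pos {w : ℂ} (hw : 0 < w.re) :
    (logDeriv Complex.Gamma w).im = w.im * ∑' n : ℕ, 1 / Complex.normSq (w + n) := by
  set a : ℝ := w.re / 2 with ha_def
  set b : ℝ := w.re + 1 with hb_def
  have ha : 0 < a := by positivity
  have hab : a ≤ b := by
    rw [ha_def, hb_def]; linarith
  set U : Set ℂ := Complex.re ⁻¹' Ioo a b with hU_def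
  have hU : IsOpen U := isOpen_Ioo.preimage Complex.continuous_re
  have hsub : U ⊆ {s : ℂ | a ≤ s.re ∧ s.re ≤ b} := fun s hs => ⟨hs.1.le, hs.2.le⟩
  have hTLU : TendstoLocallyUniformlyOn (fun (n : ℕ) (s : ℂ) => Complex.GammaSeq s n)
      Complex.Gamma atTop U :=
    ((gammaSeq_tendstoUniformlyOn ha hab).tendstoLocallyUniformlyOn).mono hsub
  have hwU : w ∈ U := by
    constructor
    · rw [ha_def]; simpa using by linarith
    · rw [hb_def]; simp
  have hne : ∀ (s : ℂ), s ∈ U → ∀ j : ℕ, s + (j:ℂ) ≠ 0 := by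
    intro s hs j h
    have : (s + (j:ℂ)).re = 0 := by rw [h]; simp
    simp only [Complex.add_re, Complex.natCast_re] at this
    have h1 : a < s.re := hs.1
    have h2 : (0:ℝ) ≤ j := Nat.cast_nonneg j
    linarith
  have hdiff : ∀ᶠ n : ℕ in atTop, DifferentiableOn ℂ (fun s => Complex.GammaSeq s n) U := by
    filter_upwards [eventually_ne_atTop 0] with n hn
    have hcne : (n:ℂ) ≠ 0 := Nat.cast_ne_zero.mpr hn
    intro s hs
    apply DifferentiableAt.differentiableWithinAt
    have h1 : DifferentiableAt ℂ (fun z : ℂ => (n:ℂ) ^ z * (n.factorial : ℂ)) s :=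
      DifferentiableAt.mul_const ((hasDerivAt_id s).const_cpow (Or.inl hcne)).differentiableAt _
    have h2 : DifferentiableAt ℂ (fun z : ℂ => ∏ j ∈ Finset.range (n+1), (z + (j:ℂ))) s :=
      DifferentiableAt.fun_finsetProd fun j _ => differentiableAt_id.add_const _
    have h3 : (∏ j ∈ Finset.range (n+1), (s + (j:ℂ))) ≠ 0 :=
      Finset.prod_ne_zero_iff.mpr fun j _ => hne s hs j
    exact h1.div h2 h3
  have hg : Complex.Gamma w ≠ 0 := Complex.Gamma_ne_zero_of_re_pos hw
  have htend := logDeriv_tendsto (f := fun (n : ℕ) (s : ℂ) => Complex.GammaSeq s n) (g := Complex.Gamma)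
    hU hwU hTLU hdiff hg
  have htendim : Tendsto (fun n : ℕ => (logDeriv (fun s => Complex.GammaSeq s n) w).im) atTop
      (𝓝 ((logDeriv Complex.Gamma w).im)) :=
    (Complex.continuous_im.continuousAt.tendsto).comp htend
  have hsummable : Summable (fun j : ℕ => w.im * (1 / Complex.normSq (w + j))) :=
    (summable_inv_normSq w).mul_left w.im
  have hps : Tendsto (fun n : ℕ => ∑ j ∈ Finset.range (n+1), w.im * (1 / Complex.normSq (w + j)))
      atTop (𝓝 (∑' j : ℕ, w.im * (1 / Complex.normSq (w + j)))) :=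
    (hsummable.hasSum.tendsto_sum_nat).comp (tendsto_add_atTop_nat 1)
  have heq : ∀ᶠ n : ℕ in atTop,
      (logDeriv (fun s => Complex.GammaSeq s n) w).im
        = ∑ j ∈ Finset.range (n+1), w.im * (1 / Complex.normSq (w + j)) := by
    filter_upwards [eventually_ne_atTop 0] with n hn
    rw [logDeriv_gammaSeq hn (hne w hwU)]
    rw [Complex.sub_im, Complex.ofReal_im, Complex.im_sum]
    rw [zero_sub, ← Finset.sum_neg_distrib]
    apply Finset.sum_congr rfl
    intro j _
    rw [one_div, Complex.inv_im]
    have him : (w + (j:ℂ)).im = w.im := by simp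
    rw [him]
    field_simp
  have := tendsto_nhds_unique (htendim.congr' heq) hps
  rw [this, tsum_mul_left]

lemma ne_neg_nat_of_im {w : ℂ} (hIm : w.im ≠ 0) : ∀ m : ℕ, w ≠ -m := by
  intro m h
  apply hIm
  rw [h]
  simp

lemma logDeriv_gamma_rec {w : ℂ} (hIm : w.im ≠ 0) :
    logDeriv Complex.Gamma (w + 1) = logDeriv Complex.Gamma w + 1 / w := by
  have hw : w ≠ 0 := fun h => hIm (by rw [h]; simp)
  have hne : ∀ m : ℕ, w ≠ -m := ne_neg_nat_of_im hIm
  have hne1 : ∀ m : ℕ, w + 1 ≠ -m := by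
    intro m h
    apply hIm
    have : w = -m - 1 := by linear_combination h
    rw [this]
    simp
  have hdw : DifferentiableAt ℂ Complex.Gamma w := Complex.differentiableAt_Gamma w hne
  have hdw1 : DifferentiableAt ℂ Complex.Gamma (w + 1) := Complex.differentiableAt_Gamma _ hne1
  have hΓw : Complex.Gamma w ≠ 0 := Complex.Gamma_ne_zero hne
  have hEq : (fun z : ℂ => Complex.Gamma (z + 1)) =ᶠ[𝓝 w] fun z : ℂ => z * Complex.Gamma z := by
    filter_upwards [eventually_ne_nhds hw] with z hz
    exact Complex.Gamma_add_one z hz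
  have h1 : logDeriv (fun z : ℂ => Complex.Gamma (z + 1)) w
      = logDeriv Complex.Gamma (w + 1) := by
    have hcomp := logDeriv_comp (f := Complex.Gamma) (g := fun z : ℂ => z + 1) (x := w)
      (by simpa using hdw1) (differentiableAt_id.add_const _)
    simpa [Function.comp_def] using hcomp
  have h2 : logDeriv (fun z : ℂ => z * Complex.Gamma z) w = 1 / w + logDeriv Complex.Gamma w := by
    refine (logDeriv_mul (f := fun z : ℂ => z) (g := Complex.Gamma) w hw hΓw
      differentiableAt_id hdw).trans ?_
    rw [logDeriv_id']
  have h3 : logDeriv (fun z : ℂ => Complex.Gamma (z + 1)) w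
      = logDeriv (fun z : ℂ => z * Complex.Gamma z) w := by
    unfold logDeriv
    simp only [Pi.div_apply]
    rw [hEq.deriv_eq, Complex.Gamma_add_one w hw]
  rw [← h1, h3, h2]
  ring

lemma im_logDeriv_gamma {w : ℂ} (hIm : w.im ≠ 0) :
    (logDeriv Complex.Gamma w).im = w.im * ∑' n : ℕ, 1 / Complex.normSq (w + n) := by
  set N : ℕ := ⌈1 - w.re⌉₊ with hN_def
  have hN : 0 < (w + (N:ℂ)).re := by
    have := Nat.le_ceil (1 - w.re)
    simp only [Complex.add_re, Complex.natCast_re]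
    linarith
  have key : ∀ k : ℕ, (logDeriv Complex.Gamma w).im
      = (logDeriv Complex.Gamma (w + k)).im
        + ∑ j ∈ Finset.range k, w.im * (1 / Complex.normSq (w + j)) := by
    intro k
    induction k with
    | zero => simp
    | succ k ih =>
      have hik : (w + (k:ℂ)).im = w.im := by simp
      have hrec := logDeriv_gamma_rec (w := w + (k:ℂ)) (by rw [hik]; exact hIm)
      have hcast : w + ((k:ℕ)+1 : ℂ) = (w + (k:ℂ)) + 1 := by ring
      have him : (logDeriv Complex.Gamma (w + (k:ℂ))).im
          = (logDeriv Complex.Gamma (w + ((k+1 : ℕ):ℂ))).im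
            + w.im * (1 / Complex.normSq (w + (k:ℂ))) := by
        have : (w + ((k+1 : ℕ):ℂ)) = (w + (k:ℂ)) + 1 := by push_cast; ring
        rw [this, hrec, Complex.add_im, one_div, Complex.inv_im, hik]
        ring
      rw [ih, him, Finset.sum_range_succ]
      ring
  have hsummable : Summable (fun j : ℕ => w.im * (1 / Complex.normSq (w + j))) :=
    (summable_inv_normSq w).mul_left w.im
  have himN : (w + (N:ℂ)).im = w.im := by simp
  have hpos := im_logDeriv_gamma_of_pos hN
  rw [key N, hpos, himN]
  have hshift : (fun n : ℕ => w.im * (1 / Complex.normSq (w + (N:ℂ) + n)))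
      = fun n : ℕ => w.im * (1 / Complex.normSq (w + ((n + N : ℕ):ℂ))) := by
    funext n
    congr 2
    push_cast
    ring
  rw [tsum_mul_left.symm, hshift, add_comm, hsummable.sum_add_tsum_nat_add N, tsum_mul_left]

section main
variable (σ : ℝ)

lemma zim (t : ℝ) : ((1 + (σ:ℂ) + (t:ℂ) * Complex.I) / 2).im = t / 2 := by
  simp [Complex.div_im]

lemma term_eq (t : ℝ) (n : ℕ) :
    (σ:ℂ) + (t:ℂ) * Complex.I + 2 * ((n:ℂ) + 1) - 1
      = 2 * ((1 + (σ:ℂ) + (t:ℂ) * Complex.I) / 2 + n) := by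
  ring

lemma sum_eq (t : ℝ) :
    (fun n : ℕ => ‖Complex.Gamma ((1 + (σ:ℂ) + (t:ℂ) * Complex.I) / 2)‖ /
        ‖(σ:ℂ) + (t:ℂ) * Complex.I + 2 * ((n:ℂ) + 1) - 1‖ ^ 2)
      = fun n : ℕ => (‖Complex.Gamma ((1 + (σ:ℂ) + (t:ℂ) * Complex.I) / 2)‖ / 4) *
          (1 / Complex.normSq ((1 + (σ:ℂ) + (t:ℂ) * Complex.I) / 2 + n)) := by
  funext n
  rw [term_eq σ t n]
  have hsq : ∀ u : ℂ, ‖2 * u‖ ^ 2 = 4 * Complex.normSq u := by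
    intro u
    rw [norm_mul, mul_pow, Complex.norm_ofNat, Complex.sq_norm]
    norm_num
  rw [hsq]
  field_simp

lemma keyDeriv (t : ℝ) (ht : t ≠ 0) :
    HasDerivAt (fun u : ℝ => ‖Complex.Gamma ((1 + (σ : ℂ) + (u : ℂ) * Complex.I) / 2)‖)
      (-t * ∑' n : ℕ,
        ‖Complex.Gamma ((1 + (σ : ℂ) + (t : ℂ) * Complex.I) / 2)‖ /
          ‖(σ : ℂ) + (t : ℂ) * Complex.I + 2 * ((n : ℂ) + 1) - 1‖ ^ 2) t := by
  set z : ℂ := (1 + (σ:ℂ) + (t:ℂ) * Complex.I) / 2 with hz_def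
  have hzim : z.im = t / 2 := zim σ t
  have hzim' : z.im ≠ 0 := by rw [hzim]; exact div_ne_zero ht two_ne_zero
  have hzne : ∀ m : ℕ, z ≠ -m := ne_neg_nat_of_im hzim'
  have hΓd : DifferentiableAt ℂ Complex.Gamma z := Complex.differentiableAt_Gamma z hzne
  have hG : Complex.Gamma z ≠ 0 := Complex.Gamma_ne_zero hzne
  set G : ℂ := Complex.Gamma z with hG_def
  set p : ℂ := logDeriv Complex.Gamma z with hp_def
  have hderivΓ : deriv Complex.Gamma z = p * G := by
    rw [hp_def, logDeriv_apply]
    exact (div_mul_cancel₀ _ hG).symm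
  -- derivative of path
  have hpath : HasDerivAt (fun u : ℝ => (1 + (σ:ℂ) + (u:ℂ) * Complex.I) / 2)
      (Complex.I / 2) t := by
    have h1 : HasDerivAt (fun u : ℝ => ((u:ℝ):ℂ)) 1 t := by
      exact Complex.ofRealCLM.hasDerivAt (x := t)
    have h2 := ((h1.mul_const Complex.I).const_add (1 + (σ:ℂ))).div_const 2
    simpa using h2
  -- derivative of Gamma along path
  have hcomp : HasDerivAt (fun u : ℝ => Complex.Gamma ((1 + (σ:ℂ) + (u:ℂ) * Complex.I) / 2))
      (p * G * Complex.I / 2) t := by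
    have h := (hΓd.hasDerivAt.hasFDerivAt.restrictScalars ℝ).comp_hasDerivAt t hpath
    have h' : HasDerivAt (fun u : ℝ => Complex.Gamma ((1 + (σ:ℂ) + (u:ℂ) * Complex.I) / 2))
        (Complex.I / 2 * deriv Complex.Gamma z) t := by
      simpa [Function.comp_def] using h
    have heq : Complex.I / 2 * deriv Complex.Gamma z = p * G * Complex.I / 2 := by
      rw [hderivΓ]; ring
    rwa [heq] at h'
  set d : ℂ := p * G * Complex.I / 2 with hd_def
  have hre : HasDerivAt (fun u : ℝ => (Complex.Gamma ((1 + (σ:ℂ) + (u:ℂ) * Complex.I) / 2)).re)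
      d.re t := by
    simpa [Function.comp_def] using Complex.reCLM.hasFDerivAt.comp_hasDerivAt t hcomp
  have him : HasDerivAt (fun u : ℝ => (Complex.Gamma ((1 + (σ:ℂ) + (u:ℂ) * Complex.I) / 2)).im)
      d.im t := by
    simpa [Function.comp_def] using Complex.imCLM.hasFDerivAt.comp_hasDerivAt t hcomp
  have hsq : HasDerivAt (fun u : ℝ =>
      (Complex.Gamma ((1 + (σ:ℂ) + (u:ℂ) * Complex.I) / 2)).re ^ 2
        + (Complex.Gamma ((1 + (σ:ℂ) + (u:ℂ) * Complex.I) / 2)).im ^ 2)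
      (2 * G.re ^ 1 * d.re + 2 * G.im ^ 1 * d.im) t := by
    exact ((hre.pow 2).add (him.pow 2)).congr_deriv (by push_cast; ring)
  -- square root of normSq
  have hXpos : 0 < G.re ^ 2 + G.im ^ 2 := by
    have h := Complex.normSq_pos.mpr hG
    rw [Complex.normSq_apply] at h
    nlinarith
  have hnormG : Real.sqrt (G.re ^ 2 + G.im ^ 2) = ‖G‖ := by
    rw [Complex.norm_def, Complex.normSq_apply]
    ring_nf
  have hGpos : 0 < ‖G‖ := norm_pos_iff.mpr hG
  have hsqrt := (Real.hasDerivAt_sqrt hXpos.ne').comp t hsq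
  have hfun : (fun u : ℝ => ‖Complex.Gamma ((1 + (σ:ℂ) + (u:ℂ) * Complex.I) / 2)‖)
      = (Real.sqrt ∘ fun u : ℝ =>
          (Complex.Gamma ((1 + (σ:ℂ) + (u:ℂ) * Complex.I) / 2)).re ^ 2
            + (Complex.Gamma ((1 + (σ:ℂ) + (u:ℂ) * Complex.I) / 2)).im ^ 2) := by
    funext u
    rw [Function.comp_apply, Complex.norm_def, Complex.normSq_apply]
    ring_nf
  rw [hfun]
  refine HasDerivAt.congr_deriv hsqrt (Eq.symm ?_)
  -- value identification
  set S : ℝ := ∑' n : ℕ, 1 / Complex.normSq (z + n) with hS_def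
  have hpim : p.im = (t / 2) * S := by
    rw [hp_def, im_logDeriv_gamma hzim', hzim]
  have hinner : G.re * d.re + G.im * d.im = -(p.im) * (G.re ^ 2 + G.im ^ 2) / 2 := by
    rw [hd_def]
    have hd_re : (p * G * Complex.I / 2).re = -((p * G).im) / 2 := by
      simp [Complex.div_re, Complex.mul_re, Complex.mul_im, Complex.normSq_apply]
    have hd_im : (p * G * Complex.I / 2).im = (p * G).re / 2 := by
      simp [Complex.div_im, Complex.mul_re, Complex.mul_im, Complex.normSq_apply]
    rw [hd_re, hd_im, Complex.mul_re, Complex.mul_im]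
    ring
  rw [sum_eq σ t, tsum_mul_left]
  have hX : G.re ^ 2 + G.im ^ 2 = ‖G‖ ^ 2 := by
    rw [← hnormG, Real.sq_sqrt hXpos.le]
  rw [hnormG]
  have hgoal : -t * (‖G‖ / 4 * S) = 1 / (2 * ‖G‖) * (2 * G.re ^ 1 * d.re + 2 * G.im ^ 1 * d.im) := by
    have h2 : 2 * G.re ^ 1 * d.re + 2 * G.im ^ 1 * d.im
        = 2 * (G.re * d.re + G.im * d.im) := by ring
    have habs : ‖G‖ ≠ 0 := by
      exact hGpos.ne'
    rw [h2, hinner, hpim, hX]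
    field_simp
    rw [pow_two]
    ring
  exact hgoal

end main

section final
variable (σ : ℝ)

lemma tsum_pos' (t : ℝ) (ht : t ≠ 0) :
    0 < ∑' n : ℕ, ‖Complex.Gamma ((1 + (σ:ℂ) + (t:ℂ) * Complex.I) / 2)‖ /
        ‖(σ:ℂ) + (t:ℂ) * Complex.I + 2 * ((n:ℂ) + 1) - 1‖ ^ 2 := by
  set z : ℂ := (1 + (σ:ℂ) + (t:ℂ) * Complex.I) / 2 with hz_def
  have hzim' : z.im ≠ 0 := by rw [zim σ t]; exact div_ne_zero ht two_ne_zero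
  have hG : Complex.Gamma z ≠ 0 := Complex.Gamma_ne_zero (ne_neg_nat_of_im hzim')
  have hGpos : 0 < ‖Complex.Gamma z‖ := norm_pos_iff.mpr hG
  rw [sum_eq σ t]
  have hsum : Summable (fun n : ℕ => (‖Complex.Gamma z‖ / 4) * (1 / Complex.normSq (z + n))) :=
    (summable_inv_normSq z).mul_left _
  apply Summable.tsum_pos hsum
  · intro n
    have := Complex.normSq_nonneg (z + n)
    positivity
  · show 0 < (‖Complex.Gamma z‖ / 4) * (1 / Complex.normSq (z + (0:ℕ)))
    have hz0 : z + (0:ℕ) ≠ 0 := by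
      intro h
      apply hzim'
      have : (z + ((0:ℕ):ℂ)).im = 0 := by rw [h]; simp
      simpa using this
    have := Complex.normSq_pos.mpr hz0
    positivity

end final

theorem stmt_10 (σ : ℝ) :
    (∀ t : ℝ, t ≠ 0 →
      HasDerivAt (fun u : ℝ => ‖Complex.Gamma ((1 + (σ : ℂ) + (u : ℂ) * Complex.I) / 2)‖)
        (-t * ∑' n : ℕ,
          ‖Complex.Gamma ((1 + (σ : ℂ) + (t : ℂ) * Complex.I) / 2)‖ /
            ‖(σ : ℂ) + (t : ℂ) * Complex.I + 2 * ((n : ℂ) + 1) - 1‖ ^ 2) t) ∧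
    (∀ t : ℝ, 0 < t →
      -t * (∑' n : ℕ,
        ‖Complex.Gamma ((1 + (σ : ℂ) + (t : ℂ) * Complex.I) / 2)‖ /
          ‖(σ : ℂ) + (t : ℂ) * Complex.I + 2 * ((n : ℂ) + 1) - 1‖ ^ 2) < 0) ∧
    (∀ t : ℝ, t < 0 →
      0 < -t * (∑' n : ℕ,
        ‖Complex.Gamma ((1 + (σ : ℂ) + (t : ℂ) * Complex.I) / 2)‖ /
          ‖(σ : ℂ) + (t : ℂ) * Complex.I + 2 * ((n : ℂ) + 1) - 1‖ ^ 2)) ∧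
    StrictAntiOn (fun t : ℝ => ‖Complex.Gamma ((1 + (σ : ℂ) + (t : ℂ) * Complex.I) / 2)‖)
      (Set.Ioi 0) ∧
    StrictMonoOn (fun t : ℝ => ‖Complex.Gamma ((1 + (σ : ℂ) + (t : ℂ) * Complex.I) / 2)‖)
      (Set.Iio 0) := by
  have hderiv := keyDeriv σ
  have hneg : ∀ t : ℝ, 0 < t →
      -t * (∑' n : ℕ, ‖Complex.Gamma ((1 + (σ:ℂ) + (t:ℂ) * Complex.I) / 2)‖ /
        ‖(σ:ℂ) + (t:ℂ) * Complex.I + 2 * ((n:ℂ) + 1) - 1‖ ^ 2) < 0 := by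
    intro t ht
    exact mul_neg_of_neg_of_pos (neg_neg_of_pos ht) (tsum_pos' σ t ht.ne')
  have hpos : ∀ t : ℝ, t < 0 →
      0 < -t * (∑' n : ℕ, ‖Complex.Gamma ((1 + (σ:ℂ) + (t:ℂ) * Complex.I) / 2)‖ /
        ‖(σ:ℂ) + (t:ℂ) * Complex.I + 2 * ((n:ℂ) + 1) - 1‖ ^ 2) := by
    intro t ht
    exact mul_pos (neg_pos.mpr ht) (tsum_pos' σ t ht.ne)
  refine ⟨hderiv, hneg, hpos, ?_, ?_⟩
  · apply strictAntiOn_of_deriv_neg (convex_Ioi 0)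
    · intro x hx
      exact ((hderiv x (ne_of_gt hx)).continuousAt).continuousWithinAt
    · intro x hx
      rw [interior_Ioi] at hx
      rw [(hderiv x (ne_of_gt hx)).deriv]
      exact hneg x hx
  · apply strictMonoOn_of_deriv_pos (convex_Iio 0)
    · intro x hx
      exact ((hderiv x (ne_of_lt hx)).continuousAt).continuousWithinAt
    · intro x hx
      rw [interior_Iio] at hx
      rw [(hderiv x (ne_of_lt hx)).deriv]
      exact hpos x hx
end

section
/- For every real σ < 1/2, ‖X(σ + it)‖ tends to +∞ as t → +∞. -/
open Complex Filter MeasureTheory Set Bornology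
open scoped Topology Real FourierTransform

lemma image_exp_neg : (fun v : ℝ => Real.exp (-v)) '' (Set.Ioi 0) = Set.Ioo 0 1 := by
  ext x
  simp only [mem_image, mem_Ioi, mem_Ioo]
  constructor
  · rintro ⟨v, hv, rfl⟩
    exact ⟨Real.exp_pos _, by rwa [Real.exp_lt_one_iff, neg_lt_zero]⟩
  · rintro ⟨h0, h1⟩
    exact ⟨-Real.log x, by simpa using Real.log_neg h0 h1, by rw [neg_neg, Real.exp_log h0]⟩

lemma hasDeriv_exp_neg (v : ℝ) :
    HasDerivAt (fun v : ℝ => Real.exp (-v)) (-Real.exp (-v)) v := by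
  exact ((Real.hasDerivAt_exp (-v)).comp v (hasDerivAt_neg v)).congr_deriv (by ring)

lemma inj_exp_neg : Set.InjOn (fun v : ℝ => Real.exp (-v)) (Set.Ioi 0) :=
  (Real.exp_injective.comp neg_injective).injOn

/-- pointwise simplification of the transformed integrand -/
lemma integrand_eq (a δ u v : ℝ) (hv : 0 < v) :
    |(-Real.exp (-v))| • (((Real.exp (-v) : ℝ) : ℂ) ^ ((a : ℂ) + u * I - 1) *
        ((1 - Real.exp (-v) : ℝ) : ℂ) ^ ((δ : ℂ) - 1)) =
      Complex.exp (-(v * u) * I) *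
        (((Real.exp (-(a * v)) : ℝ) : ℂ) * ((1 - Real.exp (-v) : ℝ) : ℂ) ^ ((δ : ℂ) - 1)) := by
  have hpos : (0:ℝ) < Real.exp (-v) := Real.exp_pos _
  have hne : ((Real.exp (-v) : ℝ) : ℂ) ≠ 0 := by exact_mod_cast hpos.ne'
  rw [abs_neg, abs_of_pos hpos, Complex.cpow_def_of_ne_zero hne,
    ← Complex.ofReal_log hpos.le, Real.log_exp]
  rw [real_smul, Complex.ofReal_exp, Complex.ofReal_exp, ← mul_assoc, ← mul_assoc,
    ← Complex.exp_add, ← Complex.exp_add]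
  congr 2
  push_cast
  ring

lemma beta_eq_integral (a δ u : ℝ) :
    Complex.betaIntegral ((a : ℂ) + u * I) (δ : ℂ) =
      ∫ v in Set.Ioi (0:ℝ), Complex.exp (-(v * u) * I) *
        (((Real.exp (-(a * v)) : ℝ) : ℂ) * ((1 - Real.exp (-v) : ℝ) : ℂ) ^ ((δ : ℂ) - 1)) := by
  rw [Complex.betaIntegral, intervalIntegral.integral_of_le zero_le_one,
    MeasureTheory.integral_Ioc_eq_integral_Ioo, ← image_exp_neg,
    integral_image_eq_integral_abs_deriv_smul measurableSet_Ioi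
      (fun v _ => (hasDeriv_exp_neg v).hasDerivWithinAt) inj_exp_neg]
  refine setIntegral_congr_fun measurableSet_Ioi fun v hv => ?_
  have := integrand_eq a δ u v hv
  push_cast at this ⊢
  convert this using 3 <;> ring

lemma core_integrable (a δ : ℝ) (ha : 0 < a) (hδ : 0 < δ) :
    Integrable ((Set.Ioi (0:ℝ)).indicator fun v =>
      ((Real.exp (-(a * v)) : ℝ) : ℂ) * ((1 - Real.exp (-v) : ℝ) : ℂ) ^ ((δ : ℂ) - 1)) := by
  rw [integrable_indicator_iff measurableSet_Ioi]
  have h0 : IntegrableOn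
      (fun x : ℝ => ((x : ℝ) : ℂ) ^ ((a : ℂ) + (0:ℝ) * I - 1) * ((1 - x : ℝ) : ℂ) ^ ((δ : ℂ) - 1))
      (Set.Ioo 0 1) := by
    have := (Complex.betaIntegral_convergent (u := (a : ℂ) + (0:ℝ) * I) (v := (δ : ℂ))
      (by simp [ha]) (by simpa using hδ)).1
    refine (this.mono_set Set.Ioo_subset_Ioc_self).congr_fun (fun x hx => ?_) measurableSet_Ioo
    push_cast
    ring_nf
  rw [← image_exp_neg, integrableOn_image_iff_integrableOn_abs_deriv_smul measurableSet_Ioi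
      (fun v _ => (hasDeriv_exp_neg v).hasDerivWithinAt) inj_exp_neg] at h0
  refine h0.congr_fun (fun v hv => ?_) measurableSet_Ioi
  have := integrand_eq a δ 0 v hv
  simp only [Complex.ofReal_zero, zero_mul, mul_zero, neg_zero, Complex.exp_zero, one_mul,
    abs_neg] at this
  simpa using this

lemma beta_tendsto (a δ : ℝ) (ha : 0 < a) (hδ : 0 < δ) :
    Tendsto (fun u : ℝ => Complex.betaIntegral ((a : ℂ) + u * I) (δ : ℂ)) atTop (𝓝 0) := by
  set f : ℝ → ℂ := (Set.Ioi (0:ℝ)).indicator fun v =>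
      ((Real.exp (-(a * v)) : ℝ) : ℂ) * ((1 - Real.exp (-v) : ℝ) : ℂ) ^ ((δ : ℂ) - 1) with hf
  have hRL := Real.tendsto_integral_exp_smul_cocompact f
  have hcomp : Tendsto (fun u : ℝ => u / (2 * Real.pi)) atTop (cocompact ℝ) := by
    refine (tendsto_id.atTop_div_const (by positivity)).mono_right ?_
    rw [cocompact_eq_atBot_atTop]; exact le_sup_right
  have := hRL.comp hcomp
  refine this.congr fun u => ?_
  rw [Function.comp_apply, beta_eq_integral, ← MeasureTheory.integral_indicator measurableSet_Ioi]
  congr 1 with v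
  rw [Circle.smul_def, Real.fourierChar_apply, hf]
  by_cases hv : v ∈ Set.Ioi (0:ℝ)
  · rw [Set.indicator_of_mem hv, Set.indicator_of_mem hv]
    congr 2
    push_cast
    have : (Real.pi : ℂ) ≠ 0 := by exact_mod_cast Real.pi_ne_zero
    field_simp
  · rw [Set.indicator_of_notMem hv, Set.indicator_of_notMem hv, smul_zero]

lemma Gamma_ne_zero_of_im {z : ℂ} (hz : z.im ≠ 0) : Complex.Gamma z ≠ 0 :=
  Complex.Gamma_ne_zero fun m h => by
    apply hz; rw [h]; simp

lemma ofReal_add_mul_I_ne_zero (a : ℝ) {u : ℝ} (hu : u ≠ 0) : ((a : ℂ) + u * I) ≠ 0 := by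
  intro h
  apply hu
  simpa using congrArg Complex.im h

lemma factor_tendsto (a δ : ℝ) :
    Tendsto (fun u : ℝ => (((a + δ : ℝ) : ℂ) + u * I) / ((a : ℂ) + u * I)) atTop (𝓝 1) := by
  have hzero : Tendsto (fun u : ℝ => (δ : ℂ) / ((a : ℂ) + u * I)) atTop (𝓝 0) := by
    have hbound : ∀ᶠ u : ℝ in atTop, ‖(δ : ℂ) / ((a : ℂ) + u * I)‖ ≤ |δ| / u := by
      filter_upwards [eventually_gt_atTop (0:ℝ)] with u hu
      rw [norm_div]
      gcongr
      · simp
      · calc u = |((a:ℂ) + u * I).im| := by simp [abs_of_pos hu]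
          _ ≤ ‖(a:ℂ) + u * I‖ := Complex.abs_im_le_norm _
    have hg : Tendsto (fun u : ℝ => |δ| / u) atTop (𝓝 0) := by
      simpa using tendsto_const_nhds.div_atTop (tendsto_id (α := ℝ))
    exact squeeze_zero_norm' hbound hg
  have := (tendsto_const_nhds : Tendsto (fun _ : ℝ => (1:ℂ)) atTop (𝓝 1)).add hzero
  rw [add_zero] at this
  refine this.congr' ?_
  filter_upwards [eventually_gt_atTop (0:ℝ)] with u hu
  have hne := ofReal_add_mul_I_ne_zero a hu.ne'
  field_simp
  push_cast
  ring

lemma ratio_tendsto (δ : ℝ) (hδ : 0 < δ) : ∀ (n : ℕ) (a : ℝ), -(n : ℝ) < a →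
    Tendsto (fun u : ℝ => Complex.Gamma ((a : ℂ) + u * I) /
      Complex.Gamma (((a + δ : ℝ) : ℂ) + u * I)) atTop (𝓝 0) := by
  intro n
  induction n with
  | zero =>
    intro a ha
    rw [Nat.cast_zero, neg_zero] at ha
    have key : ∀ u : ℝ, Complex.Gamma ((a : ℂ) + u * I) /
        Complex.Gamma (((a + δ : ℝ) : ℂ) + u * I) =
        Complex.betaIntegral ((a : ℂ) + u * I) (δ : ℂ) / Complex.Gamma (δ : ℂ) := by
      intro u
      have h1 := Complex.Gamma_mul_Gamma_eq_betaIntegral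
        (s := (a : ℂ) + u * I) (t := (δ : ℂ)) (by simp [ha]) (by simpa using hδ)
      have e1 : (a : ℂ) + u * I + δ = ((a + δ : ℝ) : ℂ) + u * I := by push_cast; ring
      rw [e1] at h1
      have n1 : Complex.Gamma (((a + δ : ℝ) : ℂ) + u * I) ≠ 0 :=
        Complex.Gamma_ne_zero_of_re_pos (by simpa using by positivity)
      have n2 : Complex.Gamma (δ : ℂ) ≠ 0 :=
        Complex.Gamma_ne_zero_of_re_pos (by simpa using hδ)
      rw [div_eq_div_iff n1 n2]
      linear_combination h1
    simp_rw [key]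
    simpa using (beta_tendsto a δ ha hδ).div_const (Complex.Gamma (δ : ℂ))
  | succ n IH =>
    intro a ha
    have IH1 := IH (a + 1) (by push_cast at ha ⊢; linarith)
    have := IH1.mul (factor_tendsto a δ)
    rw [zero_mul] at this
    refine this.congr' ?_
    filter_upwards [eventually_gt_atTop (0:ℝ)] with u hu
    have hne1 := ofReal_add_mul_I_ne_zero a hu.ne'
    have hne2 := ofReal_add_mul_I_ne_zero (a + δ) hu.ne'
    have hg1 : Complex.Gamma (((a + 1 : ℝ) : ℂ) + u * I) =
        ((a : ℂ) + u * I) * Complex.Gamma ((a : ℂ) + u * I) := by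
      rw [show (((a + 1 : ℝ) : ℂ) + u * I) = ((a : ℂ) + u * I) + 1 by push_cast; ring]
      exact Complex.Gamma_add_one _ hne1
    have hg2 : Complex.Gamma (((a + 1 + δ : ℝ) : ℂ) + u * I) =
        (((a + δ : ℝ) : ℂ) + u * I) * Complex.Gamma (((a + δ : ℝ) : ℂ) + u * I) := by
      rw [show (((a + 1 + δ : ℝ) : ℂ) + u * I) = (((a + δ : ℝ) : ℂ) + u * I) + 1 by
        push_cast; ring]
      exact Complex.Gamma_add_one _ hne2
    have n2 : Complex.Gamma (((a + δ : ℝ) : ℂ) + u * I) ≠ 0 :=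
      Gamma_ne_zero_of_im (by simpa using hu.ne')
    rw [hg1, hg2, div_mul_div_comm, div_eq_div_iff
      (mul_ne_zero (mul_ne_zero hne2 n2) hne1) n2]
    ring

theorem stmt_13 (σ : ℝ) (hσ : σ < 1 / 2) :
    Filter.Tendsto (fun t : ℝ => ‖X ((σ : ℂ) + (t : ℂ) * Complex.I)‖)
      Filter.atTop Filter.atTop := by
  have hπ : (0:ℝ) < 5 / Real.pi := by positivity
  set a : ℝ := (1 + σ) / 2 with ha_def
  set δ : ℝ := 1 / 2 - σ with hδ_def
  have hδ : 0 < δ := by rw [hδ_def]; linarith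
  obtain ⟨n, hn⟩ : ∃ n : ℕ, -(n : ℝ) < a := by
    obtain ⟨n, hn⟩ := exists_nat_gt (-a)
    exact ⟨n, by linarith⟩
  have hratio := ratio_tendsto δ hδ n a hn
  have h2 : Tendsto (fun t : ℝ => ‖Complex.Gamma ((a : ℂ) + (t/2 : ℝ) * I) /
      Complex.Gamma (((a + δ : ℝ) : ℂ) + (t/2 : ℝ) * I)‖) atTop (𝓝 0) := by
    have h2' := hratio.norm.comp (tendsto_id.atTop_div_const (two_pos (α := ℝ)))
    simp only [Function.comp_def, norm_zero, id_eq] at h2'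
    exact h2'
  have h3 : ∀ᶠ t : ℝ in atTop, 0 < ‖Complex.Gamma ((a : ℂ) + (t/2 : ℝ) * I) /
      Complex.Gamma (((a + δ : ℝ) : ℂ) + (t/2 : ℝ) * I)‖ := by
    filter_upwards [eventually_gt_atTop (0:ℝ)] with t ht
    have h1 : Complex.Gamma ((a : ℂ) + (t/2 : ℝ) * I) ≠ 0 :=
      Gamma_ne_zero_of_im (by simp [(by linarith : t/2 ≠ 0)])
    have h2' : Complex.Gamma (((a + δ : ℝ) : ℂ) + (t/2 : ℝ) * I) ≠ 0 :=
      Gamma_ne_zero_of_im (by simp [(by linarith : t/2 ≠ 0)])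
    exact norm_pos_iff.mpr (div_ne_zero h1 h2')
  have h4 := (tendsto_nhdsWithin_of_tendsto_nhds_of_eventually_within _ h2 h3).inv_tendsto_nhdsGT_zero
  have h5 := h4.const_mul_atTop (show (0:ℝ) < (5 / Real.pi) ^ (1/2 - σ : ℝ) by positivity)
  refine h5.congr' ?_
  filter_upwards [eventually_gt_atTop (0:ℝ)] with t ht
  have ht2 : t / 2 ≠ 0 := by linarith
  have hx : Complex.Gamma ((a : ℂ) + (t/2 : ℝ) * I) ≠ 0 :=
    Gamma_ne_zero_of_im (by simp [ht2])
  have hy : Complex.Gamma (((a + δ : ℝ) : ℂ) + (t/2 : ℝ) * I) ≠ 0 :=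
    Gamma_ne_zero_of_im (by simp [ht2])
  have e1 : (1 : ℂ) - ((σ : ℂ) + (t : ℂ) * I) / 2 =
      (starRingEnd ℂ) (((a + δ : ℝ) : ℂ) + (t/2 : ℝ) * I) := by
    rw [map_add, map_mul, Complex.conj_ofReal, Complex.conj_ofReal, Complex.conj_I, ha_def,
      hδ_def]
    push_cast
    ring
  have e2 : ((1 : ℂ) + ((σ : ℂ) + (t : ℂ) * I)) / 2 = (a : ℂ) + (t/2 : ℝ) * I := by
    rw [ha_def]
    apply Complex.ext <;> simp <;> ring
  have e3 : ‖(5 / Real.pi : ℂ) ^ ((1 : ℂ) / 2 - ((σ : ℂ) + (t : ℂ) * I))‖ =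
      (5 / Real.pi) ^ (1/2 - σ : ℝ) := by
    rw [show (5 / Real.pi : ℂ) = ((5 / Real.pi : ℝ) : ℂ) by push_cast; ring]
    rw [Complex.norm_cpow_eq_rpow_re_of_pos hπ]
    congr 1
    simp
  have hx' : ‖Complex.Gamma ((a : ℂ) + (t/2 : ℝ) * I)‖ ≠ 0 := norm_ne_zero_iff.mpr hx
  have hy' : ‖Complex.Gamma (((a + δ : ℝ) : ℂ) + (t/2 : ℝ) * I)‖ ≠ 0 := norm_ne_zero_iff.mpr hy
  rw [X, e1, e2, Complex.Gamma_conj]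
  simp only [norm_div, norm_mul, RCLike.norm_conj, e3]
  field_simp
  rw [Pi.inv_apply, inv_div, mul_comm I]
end

section
/- For every real σ > 1/2, ‖X(σ + it)‖ tends to 0 as t → +∞. -/
open Filter MeasureTheory Complex Real Set

/-- Riemann-Lebesgue for the Mellin transform along a vertical line. -/
lemma mellin_vertical_tendsto_zero (f : ℝ → ℂ) (a : ℝ) :
    Tendsto (fun u : ℝ => mellin f ((a : ℂ) + (u : ℂ) * Complex.I)) atTop (nhds 0) := by
  have key : ∀ u : ℝ, mellin f ((a : ℂ) + (u : ℂ) * Complex.I)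
      = FourierTransform.fourier (fun v : ℝ => Real.exp (-a * v) • f (Real.exp (-v)))
        (u / (2 * Real.pi)) := by
    intro u
    rw [mellin_eq_fourier]
    simp
  simp_rw [key]
  have h2 : (atTop : Filter ℝ) ≤ Filter.cocompact ℝ := by
    rw [cocompact_eq_atBot_atTop]; exact le_sup_right
  have h1 : Tendsto (fun u : ℝ => u / (2 * Real.pi)) atTop (Filter.cocompact ℝ) :=
    Tendsto.mono_right (tendsto_id.atTop_div_const (by positivity)) h2
  exact (Real.zero_at_infty_fourier _).comp h1

lemma betaIntegral_eq_mellin (s : ℂ) (c : ℂ) :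
    Complex.betaIntegral s c
      = mellin (Set.indicator (Set.Ioo (0:ℝ) 1) (fun x : ℝ => (1 - (x:ℂ)) ^ (c - 1))) s := by
  rw [mellin]
  have : ∀ t : ℝ, (t : ℂ) ^ (s - 1) •
      (Set.indicator (Set.Ioo (0:ℝ) 1) (fun x : ℝ => (1 - (x:ℂ)) ^ (c - 1)) t)
      = Set.indicator (Set.Ioo (0:ℝ) 1)
          (fun x : ℝ => (x : ℂ) ^ (s - 1) * (1 - (x:ℂ)) ^ (c - 1)) t := by
    intro t
    by_cases ht : t ∈ Set.Ioo (0:ℝ) 1 <;>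
      simp [Set.indicator_of_mem, Set.indicator_of_notMem, ht, smul_eq_mul]
  simp_rw [this]
  rw [setIntegral_indicator measurableSet_Ioo]
  have hinter : Set.Ioi (0:ℝ) ∩ Set.Ioo 0 1 = Set.Ioo 0 1 :=
    Set.inter_eq_right.mpr Set.Ioo_subset_Ioi_self
  rw [hinter, Complex.betaIntegral, intervalIntegral.integral_of_le zero_le_one,
    ← integral_Ioc_eq_integral_Ioo]

lemma gamma_ne_zero_of_re_pos {z : ℂ} (hz : 0 < z.re) : Complex.Gamma z ≠ 0 := by
  refine Complex.Gamma_ne_zero fun m => ?_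
  intro h
  rw [h] at hz
  simp only [Complex.neg_re, Complex.natCast_re] at hz
  linarith [Nat.cast_nonneg (α := ℝ) m]

lemma ratio_tendsto_base {a c : ℝ} (ha : 0 < a) (hc : 0 < c) :
    Tendsto (fun u : ℝ => ‖Complex.Gamma ((a : ℂ) + (u : ℂ) * Complex.I)‖
      / ‖Complex.Gamma (((a + c : ℝ) : ℂ) + (u : ℂ) * Complex.I)‖) atTop (nhds 0) := by
  have hGc : Complex.Gamma (c : ℂ) ≠ 0 := gamma_ne_zero_of_re_pos (by simpa using hc)
  have key : ∀ u : ℝ, ‖Complex.Gamma ((a : ℂ) + (u : ℂ) * Complex.I)‖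
      / ‖Complex.Gamma (((a + c : ℝ) : ℂ) + (u : ℂ) * Complex.I)‖
      = ‖Complex.betaIntegral ((a : ℂ) + (u : ℂ) * Complex.I) (c : ℂ)‖
          / ‖Complex.Gamma (c : ℂ)‖ := by
    intro u
    have hre : (0:ℝ) < (((a:ℂ) + (u:ℂ) * Complex.I)).re := by simpa using ha
    have hid := Complex.Gamma_mul_Gamma_eq_betaIntegral (t := (c:ℂ)) hre (by simpa using hc)
    have harg : ((a:ℂ) + (u:ℂ) * Complex.I) + (c:ℂ) = ((a + c : ℝ) : ℂ) + (u:ℂ) * Complex.I := by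
      push_cast; ring
    rw [harg] at hid
    have hG2 : Complex.Gamma (((a + c : ℝ) : ℂ) + (u : ℂ) * Complex.I) ≠ 0 :=
      gamma_ne_zero_of_re_pos (by simpa using add_pos ha hc)
    have h1 : Complex.Gamma ((a : ℂ) + (u : ℂ) * Complex.I)
        = Complex.Gamma (((a + c : ℝ) : ℂ) + (u : ℂ) * Complex.I)
          * Complex.betaIntegral ((a : ℂ) + (u : ℂ) * Complex.I) (c : ℂ)
          / Complex.Gamma (c : ℂ) := by
      rw [eq_div_iff hGc]; exact hid
    have n2 : ‖Complex.Gamma (((a + c : ℝ) : ℂ) + (u : ℂ) * Complex.I)‖ ≠ 0 :=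
      norm_ne_zero_iff.mpr hG2
    have nc : ‖Complex.Gamma (c : ℂ)‖ ≠ 0 := norm_ne_zero_iff.mpr hGc
    have hG2' : ‖Complex.Gamma ((a:ℂ) + (c:ℂ) + (u : ℂ) * Complex.I)‖ ≠ 0 := by
      rw [show ((a:ℂ) + (c:ℂ) + (u : ℂ) * Complex.I) = ((a + c : ℝ) : ℂ) + (u : ℂ) * Complex.I
        by push_cast; ring]
      simpa using n2
    rw [h1, norm_div, norm_mul]
    field_simp
  simp_rw [key]
  have hB : Tendsto (fun u : ℝ => Complex.betaIntegral ((a : ℂ) + (u : ℂ) * Complex.I) (c : ℂ))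
      atTop (nhds 0) := by
    simp_rw [fun u : ℝ => betaIntegral_eq_mellin ((a : ℂ) + (u : ℂ) * Complex.I) (c : ℂ)]
    exact mellin_vertical_tendsto_zero _ a
  simpa using (hB.norm.div_const ‖Complex.Gamma (c:ℂ)‖)

lemma ratio_tendsto_gen (n : ℕ) : ∀ a b : ℝ, a < b → 0 < b → 0 < a + n →
    Tendsto (fun u : ℝ => ‖Complex.Gamma ((a : ℂ) + (u : ℂ) * Complex.I)‖
      / ‖Complex.Gamma ((b : ℂ) + (u : ℂ) * Complex.I)‖) atTop (nhds 0) := by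
  induction n with
  | zero =>
    intro a b hab hb ha
    simp only [Nat.cast_zero, add_zero] at ha
    have h0 := ratio_tendsto_base ha (sub_pos.mpr hab)
    rwa [show a + (b - a) = b by ring] at h0
  | succ n ih =>
    intro a b hab hb ha
    have ha' : 0 < (a + 1) + (n : ℕ) := by push_cast at ha ⊢; linarith
    have h' := ih (a + 1) (b + 1) (by linarith) (by linarith) ha'
    have hG : Tendsto (fun u : ℝ => (|b| + 1) *
        (‖Complex.Gamma (((a + 1 : ℝ) : ℂ) + (u : ℂ) * Complex.I)‖
          / ‖Complex.Gamma (((b + 1 : ℝ) : ℂ) + (u : ℂ) * Complex.I)‖)) atTop (nhds 0) := by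
      simpa using h'.const_mul (|b| + 1)
    refine squeeze_zero' (Filter.Eventually.of_forall fun u => by positivity) ?_ hG
    filter_upwards [eventually_ge_atTop (1 : ℝ)] with u hu
    have hu0 : (0:ℝ) < u := lt_of_lt_of_le one_pos hu
    have hnea : ((a : ℂ) + (u : ℂ) * Complex.I) ≠ 0 := by
      intro h
      have := congrArg Complex.im h
      simp at this
      linarith
    have hneb : ((b : ℂ) + (u : ℂ) * Complex.I) ≠ 0 := by
      intro h
      have := congrArg Complex.im h
      simp at this
      linarith
    have hEa : ‖Complex.Gamma (((a + 1 : ℝ) : ℂ) + (u : ℂ) * Complex.I)‖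
        = ‖(a : ℂ) + (u : ℂ) * Complex.I‖ * ‖Complex.Gamma ((a : ℂ) + (u : ℂ) * Complex.I)‖ := by
      rw [show (((a + 1 : ℝ) : ℂ) + (u : ℂ) * Complex.I)
          = ((a : ℂ) + (u : ℂ) * Complex.I) + 1 by push_cast; ring,
        Complex.Gamma_add_one _ hnea, norm_mul]
    have hEb : ‖Complex.Gamma (((b + 1 : ℝ) : ℂ) + (u : ℂ) * Complex.I)‖
        = ‖(b : ℂ) + (u : ℂ) * Complex.I‖ * ‖Complex.Gamma ((b : ℂ) + (u : ℂ) * Complex.I)‖ := by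
      rw [show (((b + 1 : ℝ) : ℂ) + (u : ℂ) * Complex.I)
          = ((b : ℂ) + (u : ℂ) * Complex.I) + 1 by push_cast; ring,
        Complex.Gamma_add_one _ hneb, norm_mul]
    rw [hEa, hEb]
    -- basic norm facts
    have him : u ≤ ‖(a : ℂ) + (u : ℂ) * Complex.I‖ := by
      calc u = |((a : ℂ) + (u : ℂ) * Complex.I).im| := by simp [abs_of_pos hu0]
        _ ≤ _ := Complex.abs_im_le_norm _
    have hb_le : ‖(b : ℂ) + (u : ℂ) * Complex.I‖ ≤ (|b| + 1) * ‖(a : ℂ) + (u : ℂ) * Complex.I‖ := by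
      have h1 : ‖(b : ℂ) + (u : ℂ) * Complex.I‖ ≤ |b| + u := by
        calc ‖(b : ℂ) + (u : ℂ) * Complex.I‖ ≤ ‖(b:ℂ)‖ + ‖(u : ℂ) * Complex.I‖ := norm_add_le _ _
          _ = |b| + u := by simp [abs_of_pos hu0]
      have h2 : |b| + u ≤ (|b| + 1) * u := by nlinarith [abs_nonneg b]
      calc ‖(b : ℂ) + (u : ℂ) * Complex.I‖ ≤ |b| + u := h1
        _ ≤ (|b| + 1) * u := h2
        _ ≤ (|b| + 1) * ‖(a : ℂ) + (u : ℂ) * Complex.I‖ := by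
            apply mul_le_mul_of_nonneg_left him (by positivity)
    have hDb : 0 < ‖Complex.Gamma ((b : ℂ) + (u : ℂ) * Complex.I)‖ := by
      rw [norm_pos_iff]
      exact gamma_ne_zero_of_re_pos (by simpa using hb)
    have hBu : 0 < ‖(b : ℂ) + (u : ℂ) * Complex.I‖ := norm_pos_iff.mpr hneb
    set Na := ‖Complex.Gamma ((a : ℂ) + (u : ℂ) * Complex.I)‖ with hNa
    set Db := ‖Complex.Gamma ((b : ℂ) + (u : ℂ) * Complex.I)‖ with hDbdef
    set Ma := ‖(a : ℂ) + (u : ℂ) * Complex.I‖ with hMa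
    set Mb := ‖(b : ℂ) + (u : ℂ) * Complex.I‖ with hMb
    rw [← mul_div_assoc, div_le_div_iff₀ hDb (by positivity)]
    calc Na * (Mb * Db) = Mb * (Na * Db) := by ring
      _ ≤ ((|b| + 1) * Ma) * (Na * Db) := by
          apply mul_le_mul_of_nonneg_right hb_le (by positivity)
      _ = (|b| + 1) * (Ma * Na) * Db := by ring

theorem stmt_14 (σ : ℝ) (hσ : 1 / 2 < σ) :
    Filter.Tendsto (fun t : ℝ => ‖X ((σ : ℂ) + (t : ℂ) * Complex.I)‖)
      Filter.atTop (nhds 0) := by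
  set a : ℝ := 1 - σ / 2 with ha_def
  set b : ℝ := (1 + σ) / 2 with hb_def
  obtain ⟨n, hn⟩ := exists_nat_gt (-a)
  have H := ratio_tendsto_gen n a b (by rw [ha_def, hb_def]; linarith) (by rw [hb_def]; linarith)
    (by linarith)
  have hhalf : Tendsto (fun t : ℝ => t / 2) atTop atTop :=
    tendsto_id.atTop_div_const two_pos
  have H2 := H.comp hhalf
  have C_pos : (0:ℝ) < (5 / Real.pi) ^ (1/2 - σ) := by
    apply Real.rpow_pos_of_pos
    positivity
  have key : ∀ t : ℝ, ‖X ((σ : ℂ) + (t : ℂ) * Complex.I)‖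
      = (5 / Real.pi) ^ (1/2 - σ) *
        (‖Complex.Gamma ((a : ℂ) + ((t/2 : ℝ) : ℂ) * Complex.I)‖
          / ‖Complex.Gamma ((b : ℂ) + ((t/2 : ℝ) : ℂ) * Complex.I)‖) := by
    intro t
    set s : ℂ := (σ : ℂ) + (t : ℂ) * Complex.I with hs
    have h1 : (1 : ℂ) - s / 2 = starRingEnd ℂ ((a : ℂ) + ((t/2 : ℝ) : ℂ) * Complex.I) := by
      rw [map_add, map_mul, Complex.conj_ofReal, Complex.conj_ofReal, Complex.conj_I, hs, ha_def]
      push_cast; ring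
    have h2 : ((1 : ℂ) + s) / 2 = (b : ℂ) + ((t/2 : ℝ) : ℂ) * Complex.I := by
      rw [hs, hb_def]
      push_cast; ring
    have h3 : ‖(5 / Real.pi : ℂ) ^ ((1 : ℂ)/2 - s)‖ = (5 / Real.pi) ^ (1/2 - σ) := by
      rw [show (5 / Real.pi : ℂ) = ((5 / Real.pi : ℝ) : ℂ) by push_cast; ring,
        Complex.norm_cpow_eq_rpow_re_of_pos (by positivity)]
      congr 1
      rw [hs]
      simp
    rw [X, norm_div, norm_mul, h1, h2, h3, Complex.Gamma_conj]
    rw [Complex.norm_conj, mul_div_assoc]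
  simp_rw [key]
  have := H2.const_mul ((5 / Real.pi) ^ (1/2 - σ))
  simpa [Function.comp] using this
end

section
/- There exists a constant κ > 0 such that for all real σ with 0 ≤ σ ≤ 1 and σ ≠ 1/2, and all real t, if ‖X(σ + it)‖ = 1 then |t| ≤ κ; that is, the set of t with ‖X(σ + it)‖ = 1 in the critical strip off the critical line is uniformly bounded. -/
open Complex Real Filter Finset Topology

namespace Stmt15

lemma ne_zero_of_re_pos' {z : ℂ} (h : 0 < z.re) : z ≠ 0 := fun h0 => by simp [h0] at h

lemma norm_sq_mk {x y : ℝ} {z : ℂ} (hre : z.re = x) (him : z.im = y) :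
    ‖z‖ ^ 2 = x ^ 2 + y ^ 2 := by
  rw [Complex.sq_norm, Complex.normSq_apply, hre, him]; ring

lemma norm_GammaSeq (s : ℂ) (n : ℕ) :
    ‖Complex.GammaSeq s n‖ =
      ‖(n : ℂ) ^ s‖ * (Nat.factorial n : ℝ) / ∏ j ∈ Finset.range (n + 1), ‖s + (j : ℂ)‖ := by
  rw [Complex.GammaSeq, norm_div, norm_mul, norm_prod, Complex.norm_natCast]

set_option maxHeartbeats 1000000 in
lemma gammaA {a b : ℝ} (hb : 0 < b) (hab : b ≤ a) (y : ℝ) :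
    ‖Complex.Gamma ((b : ℂ) + y * I)‖ * Real.Gamma a *
        ∏ j ∈ Finset.range 4,
          ((a + j) * ‖(b : ℂ) + y * I + (j : ℂ)‖) / ((b + j) * ‖(a : ℂ) + y * I + (j : ℂ)‖)
      ≤ ‖Complex.Gamma ((a : ℂ) + y * I)‖ * Real.Gamma b := by
  have ha : 0 < a := lt_of_lt_of_le hb hab
  set A : ℂ := (a : ℂ) + y * I with hA
  set B : ℂ := (b : ℂ) + y * I with hB
  set G : ℕ → ℝ := fun j => ((a + j) * ‖B + (j : ℂ)‖) / ((b + j) * ‖A + (j : ℂ)‖) with hG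
  set C : ℝ := ∏ j ∈ Finset.range 4, G j with hC
  have hAre : ∀ j : ℕ, (A + (j : ℂ)).re = a + j := by intro j; simp [hA]
  have hAim : ∀ j : ℕ, (A + (j : ℂ)).im = y := by intro j; simp [hA]
  have hBre : ∀ j : ℕ, (B + (j : ℂ)).re = b + j := by intro j; simp [hB]
  have hBim : ∀ j : ℕ, (B + (j : ℂ)).im = y := by intro j; simp [hB]
  have hnA : ∀ j : ℕ, 0 < ‖A + (j : ℂ)‖ := by
    intro j
    rw [norm_pos_iff]
    intro h
    have := hAre j
    rw [h] at this
    simp at this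
    nlinarith [(Nat.cast_nonneg j : (0:ℝ) ≤ j)]
  have hnB : ∀ j : ℕ, 0 < ‖B + (j : ℂ)‖ := by
    intro j
    rw [norm_pos_iff]
    intro h
    have := hBre j
    rw [h] at this
    simp at this
    nlinarith [(Nat.cast_nonneg j : (0:ℝ) ≤ j)]
  have hG1 : ∀ j : ℕ, 1 ≤ G j := by
    intro j
    have hj : (0:ℝ) ≤ j := Nat.cast_nonneg j
    have hsq : ((b + j) * ‖A + (j : ℂ)‖) ^ 2 ≤ ((a + j) * ‖B + (j : ℂ)‖) ^ 2 := by
      rw [mul_pow, mul_pow, norm_sq_mk (hAre j) (hAim j), norm_sq_mk (hBre j) (hBim j)]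
      have h1 : (b + j) ^ 2 ≤ (a + j) ^ 2 := by nlinarith
      nlinarith [mul_le_mul_of_nonneg_right h1 (sq_nonneg y)]
    have hle := le_of_pow_le_pow_left₀ two_ne_zero (by positivity) hsq
    rw [hG]
    exact (one_le_div (mul_pos (by positivity) (hnA j))).2 hle
  -- limits
  have tA := (Complex.GammaSeq_tendsto_Gamma A).norm
  have tB := (Complex.GammaSeq_tendsto_Gamma B).norm
  have ta := (Complex.GammaSeq_tendsto_Gamma (a : ℂ)).norm
  have tb := (Complex.GammaSeq_tendsto_Gamma (b : ℂ)).norm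
  have hga : ‖Complex.Gamma (a : ℂ)‖ = Real.Gamma a := by
    rw [Complex.Gamma_ofReal, Complex.norm_real]
    exact abs_of_pos (Real.Gamma_pos_of_pos ha)
  have hgb : ‖Complex.Gamma (b : ℂ)‖ = Real.Gamma b := by
    rw [Complex.Gamma_ofReal, Complex.norm_real]
    exact abs_of_pos (Real.Gamma_pos_of_pos hb)
  have tL : Tendsto (fun n => ‖Complex.GammaSeq B n‖ * ‖Complex.GammaSeq (a:ℂ) n‖ * C) atTop
      (𝓝 (‖Complex.Gamma B‖ * ‖Complex.Gamma (a:ℂ)‖ * C)) := (tB.mul ta).mul_const C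
  have tR : Tendsto (fun n => ‖Complex.GammaSeq A n‖ * ‖Complex.GammaSeq (b:ℂ) n‖) atTop
      (𝓝 (‖Complex.Gamma A‖ * ‖Complex.Gamma (b:ℂ)‖)) := tA.mul tb
  have key : ‖Complex.Gamma B‖ * ‖Complex.Gamma (a:ℂ)‖ * C
      ≤ ‖Complex.Gamma A‖ * ‖Complex.Gamma (b:ℂ)‖ := by
    refine le_of_tendsto_of_tendsto tL tR ?_
    filter_upwards [eventually_ge_atTop 3] with n hn
    have hn0 : 0 < n := by omega
    -- rewrite norms of GammaSeq
    rw [norm_GammaSeq, norm_GammaSeq, norm_GammaSeq, norm_GammaSeq]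
    have hra : ‖(n : ℂ) ^ (a:ℂ)‖ = (n:ℝ) ^ a := by
      rw [Complex.norm_natCast_cpow_of_pos hn0]; norm_num
    have hrA : ‖(n : ℂ) ^ A‖ = (n:ℝ) ^ a := by
      rw [Complex.norm_natCast_cpow_of_pos hn0, hA]; norm_num
    have hrb : ‖(n : ℂ) ^ (b:ℂ)‖ = (n:ℝ) ^ b := by
      rw [Complex.norm_natCast_cpow_of_pos hn0]; norm_num
    have hrB : ‖(n : ℂ) ^ B‖ = (n:ℝ) ^ b := by
      rw [Complex.norm_natCast_cpow_of_pos hn0, hB]; norm_num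
    rw [hra, hrA, hrb, hrB]
    have ea : ∏ j ∈ Finset.range (n+1), ‖(a:ℂ) + (j:ℂ)‖ = ∏ j ∈ Finset.range (n+1), (a + j) := by
      refine Finset.prod_congr rfl fun j _ => ?_
      rw [show (a:ℂ) + (j:ℂ) = ((a + j : ℝ) : ℂ) by push_cast; ring, Complex.norm_real]
      exact abs_of_pos (by positivity)
    have eb : ∏ j ∈ Finset.range (n+1), ‖(b:ℂ) + (j:ℂ)‖ = ∏ j ∈ Finset.range (n+1), (b + j) := by
      refine Finset.prod_congr rfl fun j _ => ?_
      rw [show (b:ℂ) + (j:ℂ) = ((b + j : ℝ) : ℂ) by push_cast; ring, Complex.norm_real]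
      exact abs_of_pos (by positivity)
    rw [ea, eb]
    set Pn : ℝ := ∏ j ∈ Finset.range (n+1), ‖A + (j:ℂ)‖ with hPn
    set Qm : ℝ := ∏ j ∈ Finset.range (n+1), ‖B + (j:ℂ)‖ with hQm
    set Qa : ℝ := ∏ j ∈ Finset.range (n+1), (a + j) with hQa
    set Pb : ℝ := ∏ j ∈ Finset.range (n+1), (b + j) with hPb
    have hPnpos : 0 < Pn := Finset.prod_pos fun j _ => hnA j
    have hQmpos : 0 < Qm := Finset.prod_pos fun j _ => hnB j
    have hQapos : 0 < Qa := Finset.prod_pos fun j _ => by positivity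
    have hPbpos : 0 < Pb := Finset.prod_pos fun j _ => by positivity
    have hCle : C ≤ (Qa * Qm) / (Pb * Pn) := by
      have h1 : C ≤ ∏ j ∈ Finset.range (n+1), G j := by
        obtain ⟨k, hk⟩ : ∃ k, n + 1 = 4 + k := ⟨n - 3, by omega⟩
        rw [hk, Finset.prod_range_add]
        have h2 : (1:ℝ) ≤ ∏ j ∈ Finset.range k, G (4+j) := by
          have := Finset.prod_le_prod (s := Finset.range k) (f := fun _ => (1:ℝ))
            (g := fun j => G (4+j)) (by intros; norm_num) (by intros; exact hG1 _)
          simpa using this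
        have hCpos : 0 ≤ C := by
          rw [hC]
          exact Finset.prod_pos (fun j _ => lt_of_lt_of_le one_pos (hG1 j)) |>.le
        rw [← hC]
        exact le_mul_of_one_le_right hCpos h2
      have h2 : ∏ j ∈ Finset.range (n+1), G j = (Qa * Qm) / (Pb * Pn) := by
        rw [hG]
        simp only []
        rw [Finset.prod_div_distrib, Finset.prod_mul_distrib, Finset.prod_mul_distrib]
      rw [← h2]
      exact h1
    have hCkey : C * (Pb * Pn) ≤ Qa * Qm := (le_div_iff₀ (mul_pos hPbpos hPnpos)).1 hCle
    have hCpos : 0 ≤ C := by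
      rw [hC]
      exact Finset.prod_pos (fun j _ => lt_of_lt_of_le one_pos (hG1 j)) |>.le
    set ra : ℝ := (n:ℝ) ^ a with hraS
    set rb : ℝ := (n:ℝ) ^ b with hrbS
    set fn : ℝ := ((Nat.factorial n : ℝ)) with hfnS
    have hrapos : 0 < ra := by rw [hraS]; positivity
    have hrbpos : 0 < rb := by rw [hrbS]; positivity
    have hfnpos : 0 < fn := by rw [hfnS]; positivity
    clear_value ra rb fn Pn Qm Qa Pb C
    rw [div_mul_div_comm, div_mul_eq_mul_div, div_mul_div_comm,
      div_le_div_iff₀ (by positivity) (by positivity)]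
    nlinarith [mul_le_mul_of_nonneg_left hCkey (by positivity : (0:ℝ) ≤ rb * fn * (ra * fn))]
  rw [hga, hgb] at key
  exact key


lemma gammaB {a b : ℝ} (hb : 1/2 ≤ b) (hab : b ≤ a) (ha : a ≤ 1) :
    Real.Gamma b * (b * (b + 1)) ≤ Real.Gamma a * (a * (a + 1)) := by
  have hb0 : (0:ℝ) < b := by linarith
  have ha0 : (0:ℝ) < a := by linarith
  have eb : Real.Gamma (b + 2) = Real.Gamma b * (b * (b + 1)) := by
    rw [show b + 2 = (b + 1) + 1 by ring, Real.Gamma_add_one (by linarith),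
      Real.Gamma_add_one (by linarith)]
    ring
  have ea : Real.Gamma (a + 2) = Real.Gamma a * (a * (a + 1)) := by
    rw [show a + 2 = (a + 1) + 1 by ring, Real.Gamma_add_one (by linarith),
      Real.Gamma_add_one (by linarith)]
    ring
  rw [← eb, ← ea]
  exact Real.Gamma_strictMonoOn_Ici.monotoneOn (by simp; linarith) (by simp; linarith)
    (by linarith)

lemma factor_bound {b d u c : ℝ} (hd : 0 < d) (hbd : 2*b + d ≤ 2) (hc : 0 ≤ c)
    (hu : 100 < u) :
    ((b+d)+c)^2+u ≤ ((b+c)^2+u) * (1+(2*c+2)*d/100) := by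
  have t : 0 ≤ d * (2 - 2*b - d) := mul_nonneg hd.le (by linarith)
  have k : 100*((c+1)*d) ≤ ((b+c)^2+u)*((c+1)*d) :=
    mul_le_mul_of_nonneg_right (by nlinarith) (by positivity)
  nlinarith [t, k]

lemma hq_lem {d : ℝ} (hd : 0 ≤ d) (hd2 : d ≤ 1/2) :
    ((1+2*d/100)*(1+4*d/100)) * ((1+6*d/100)*(1+8*d/100)) ≤ 1 + d/2 := by
  have e1 : d*d ≤ d/2 := by nlinarith
  have e2 : d*d*d ≤ d/4 := by nlinarith [mul_le_mul_of_nonneg_left e1 hd]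
  have e3 : d*d*(d*d) ≤ d/8 := by nlinarith [mul_le_mul_of_nonneg_left e2 hd]
  nlinarith [e1, e2, e3]

lemma hR_lem {b d : ℝ} (hb : 1/2 ≤ b) (hb1 : b ≤ 1) (hd : 0 ≤ d) (hd2 : d ≤ 1/2) :
    ((b+2)*(b+3))^2 * (1+d) ≤ (((b+d)+2)*((b+d)+3))^2 := by
  have hp : (0:ℝ) < (b+2)*(b+3) := by nlinarith
  have h6 : (2:ℝ) ≤ 2*((b+2)+(b+3)) - (b+2)*(b+3) := by nlinarith
  have key : 0 ≤ d * ((b+2)*(b+3)) * (2*((b+2)+(b+3)) - (b+2)*(b+3)) :=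
    mul_nonneg (mul_nonneg hd hp.le) (by linarith)
  linarith [key, mul_nonneg (mul_nonneg hd hd) hp.le,
    sq_nonneg (d*((b+2)+(b+3))+d*d)]

set_option maxHeartbeats 1000000 in
lemma polykey {b d u : ℝ} (hb : 1/2 ≤ b) (hd : 0 < d) (hbd : b + d ≤ 1) (hu : 100 < u) :
    ((b+2)*(b+3))^2 * ((((b+d)^2+u) * (((b+d)+1)^2+u)) * ((((b+d)+2)^2+u) * (((b+d)+3)^2+u)))
      < (((b+d)+2)*((b+d)+3))^2 * (((b^2+u) * ((b+1)^2+u)) * (((b+2)^2+u) * ((b+3)^2+u))) := by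
  have hd2 : d ≤ 1/2 := by linarith
  have hb1 : b ≤ 1 := by linarith
  have hup : (0:ℝ) < u := by linarith
  have hy0 : (0:ℝ) < b^2+u := by nlinarith
  have hy1 : (0:ℝ) < (b+1)^2+u := by nlinarith
  have hy2 : (0:ℝ) < (b+2)^2+u := by nlinarith
  have hy3 : (0:ℝ) < (b+3)^2+u := by nlinarith
  have hx0 : (0:ℝ) < (b+d)^2+u := by nlinarith
  have hx1 : (0:ℝ) < ((b+d)+1)^2+u := by nlinarith
  have hx2 : (0:ℝ) < ((b+d)+2)^2+u := by nlinarith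
  have hx3 : (0:ℝ) < ((b+d)+3)^2+u := by nlinarith
  have hq0 : (0:ℝ) ≤ 1+2*d/100 := by linarith
  have hq1 : (0:ℝ) ≤ 1+4*d/100 := by linarith
  have hq2 : (0:ℝ) ≤ 1+6*d/100 := by linarith
  have hq3 : (0:ℝ) ≤ 1+8*d/100 := by linarith
  have h1 : (b+d)^2+u ≤ (b^2+u) * (1+2*d/100) := by
    have := factor_bound (b := b) (d := d) (u := u) (c := 0) hd (by linarith) le_rfl hu
    linarith [this]
  have h2 : ((b+d)+1)^2+u ≤ ((b+1)^2+u) * (1+4*d/100) := by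
    have := factor_bound (b := b) (d := d) (u := u) (c := 1) hd (by linarith) (by norm_num) hu
    linarith [this]
  have h3 : ((b+d)+2)^2+u ≤ ((b+2)^2+u) * (1+6*d/100) := by
    have := factor_bound (b := b) (d := d) (u := u) (c := 2) hd (by linarith) (by norm_num) hu
    linarith [this]
  have h4 : ((b+d)+3)^2+u ≤ ((b+3)^2+u) * (1+8*d/100) := by
    have := factor_bound (b := b) (d := d) (u := u) (c := 3) hd (by linarith) (by norm_num) hu
    linarith [this]
  have m01 : ((b+d)^2+u) * (((b+d)+1)^2+u)
      ≤ ((b^2+u) * ((b+1)^2+u)) * ((1+2*d/100)*(1+4*d/100)) := by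
    linarith [mul_le_mul h1 h2 hx1.le (mul_nonneg hy0.le hq0)]
  have m23 : (((b+d)+2)^2+u) * (((b+d)+3)^2+u)
      ≤ (((b+2)^2+u) * ((b+3)^2+u)) * ((1+6*d/100)*(1+8*d/100)) := by
    linarith [mul_le_mul h3 h4 hx3.le (mul_nonneg hy2.le hq2)]
  have mall : (((b+d)^2+u) * (((b+d)+1)^2+u)) * ((((b+d)+2)^2+u) * (((b+d)+3)^2+u))
      ≤ (((b^2+u) * ((b+1)^2+u)) * (((b+2)^2+u) * ((b+3)^2+u)))
        * (((1+2*d/100)*(1+4*d/100)) * ((1+6*d/100)*(1+8*d/100))) := by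
    linarith [mul_le_mul m01 m23 (mul_nonneg hx2.le hx3.le)
      (mul_nonneg (mul_nonneg hy0.le hy1.le) (mul_nonneg hq0 hq1))]
  have hq : ((1+2*d/100)*(1+4*d/100)) * ((1+6*d/100)*(1+8*d/100)) ≤ 1 + d/2 :=
    hq_lem hd.le hd2
  set Y : ℝ := ((b^2+u) * ((b+1)^2+u)) * (((b+2)^2+u) * ((b+3)^2+u)) with hY
  have hYpos : 0 < Y := by rw [hY]; positivity
  have mall2 : (((b+d)^2+u) * (((b+d)+1)^2+u)) * ((((b+d)+2)^2+u) * (((b+d)+3)^2+u))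
      ≤ Y * (1 + d/2) := by
    have := mul_le_mul_of_nonneg_left hq hYpos.le
    linarith [mall, this]
  have hR : ((b+2)*(b+3))^2 * (1+d) ≤ (((b+d)+2)*((b+d)+3))^2 :=
    hR_lem hb hb1 hd.le hd2
  have hB2 : (0:ℝ) < ((b+2)*(b+3))^2 := by positivity
  calc ((b+2)*(b+3))^2 * ((((b+d)^2+u) * (((b+d)+1)^2+u)) * ((((b+d)+2)^2+u) * (((b+d)+3)^2+u)))
      ≤ ((b+2)*(b+3))^2 * (Y * (1 + d/2)) := mul_le_mul_of_nonneg_left mall2 hB2.le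
    _ < ((b+2)*(b+3))^2 * (Y * (1 + d)) := by
        have : Y * (1 + d/2) < Y * (1 + d) := by nlinarith [mul_pos hYpos hd]
        exact mul_lt_mul_of_pos_left this hB2
    _ ≤ (((b+d)+2)*((b+d)+3))^2 * Y := by
        linarith [mul_le_mul_of_nonneg_right hR hYpos.le]

set_option maxHeartbeats 1000000 in
lemma key_est {a b y : ℝ} (hb : 1/2 ≤ b) (hab : b < a) (ha : a ≤ 1) (hy : 10 < |y|) :
    ‖Complex.Gamma ((b : ℂ) + y * I)‖ < ‖Complex.Gamma ((a : ℂ) + y * I)‖ := by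
  have hb0 : (0:ℝ) < b := by linarith
  have ha0 : (0:ℝ) < a := by linarith
  have hu : (100:ℝ) < y^2 := by nlinarith [_root_.sq_abs y, abs_nonneg y]
  have hA := gammaA hb0 hab.le y
  rw [show (4:ℕ) = 3+1 from rfl, Finset.prod_range_succ, Finset.prod_range_succ,
    Finset.prod_range_succ, Finset.prod_range_one] at hA
  push_cast at hA
  norm_num at hA
  have sqa0 : (‖(a:ℂ) + (y:ℂ) * I‖)^2 = a^2 + y^2 := by
    rw [Complex.sq_norm, Complex.normSq_apply]; simp; ring
  have sqa1 : (‖(a:ℂ) + (y:ℂ) * I + 1‖)^2 = (a+1)^2 + y^2 := by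
    rw [Complex.sq_norm, Complex.normSq_apply]; simp; ring
  have sqa2 : (‖(a:ℂ) + (y:ℂ) * I + 2‖)^2 = (a+2)^2 + y^2 := by
    rw [Complex.sq_norm, Complex.normSq_apply]; simp; ring
  have sqa3 : (‖(a:ℂ) + (y:ℂ) * I + 3‖)^2 = (a+3)^2 + y^2 := by
    rw [Complex.sq_norm, Complex.normSq_apply]; simp; ring
  have sqb0 : (‖(b:ℂ) + (y:ℂ) * I‖)^2 = b^2 + y^2 := by
    rw [Complex.sq_norm, Complex.normSq_apply]; simp; ring
  have sqb1 : (‖(b:ℂ) + (y:ℂ) * I + 1‖)^2 = (b+1)^2 + y^2 := by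
    rw [Complex.sq_norm, Complex.normSq_apply]; simp; ring
  have sqb2 : (‖(b:ℂ) + (y:ℂ) * I + 2‖)^2 = (b+2)^2 + y^2 := by
    rw [Complex.sq_norm, Complex.normSq_apply]; simp; ring
  have sqb3 : (‖(b:ℂ) + (y:ℂ) * I + 3‖)^2 = (b+3)^2 + y^2 := by
    rw [Complex.sq_norm, Complex.normSq_apply]; simp; ring
  set n0 := ‖(a:ℂ) + (y:ℂ) * I‖ with hn0
  set n1 := ‖(a:ℂ) + (y:ℂ) * I + 1‖ with hn1
  set n2 := ‖(a:ℂ) + (y:ℂ) * I + 2‖ with hn2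
  set n3 := ‖(a:ℂ) + (y:ℂ) * I + 3‖ with hn3
  set m0 := ‖(b:ℂ) + (y:ℂ) * I‖ with hm0
  set m1 := ‖(b:ℂ) + (y:ℂ) * I + 1‖ with hm1
  set m2 := ‖(b:ℂ) + (y:ℂ) * I + 2‖ with hm2
  set m3 := ‖(b:ℂ) + (y:ℂ) * I + 3‖ with hm3
  set nA := ‖Complex.Gamma ((a:ℂ) + (y:ℂ) * I)‖ with hnA
  set nB := ‖Complex.Gamma ((b:ℂ) + (y:ℂ) * I)‖ with hnB
  set ga := Real.Gamma a with hga
  set gb := Real.Gamma b with hgb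
  have pn0 : 0 < n0 :=
    norm_pos_iff.2 (ne_zero_of_re_pos' (by simp; linarith))
  have pn1 : 0 < n1 :=
    norm_pos_iff.2 (ne_zero_of_re_pos' (by simp; linarith))
  have pn2 : 0 < n2 :=
    norm_pos_iff.2 (ne_zero_of_re_pos' (by simp; linarith))
  have pn3 : 0 < n3 :=
    norm_pos_iff.2 (ne_zero_of_re_pos' (by simp; linarith))
  have pm0 : 0 < m0 :=
    norm_pos_iff.2 (ne_zero_of_re_pos' (by simp; linarith))
  have pm1 : 0 < m1 :=
    norm_pos_iff.2 (ne_zero_of_re_pos' (by simp; linarith))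
  have pm2 : 0 < m2 :=
    norm_pos_iff.2 (ne_zero_of_re_pos' (by simp; linarith))
  have pm3 : 0 < m3 :=
    norm_pos_iff.2 (ne_zero_of_re_pos' (by simp; linarith))
  clear_value n0 n1 n2 n3 m0 m1 m2 m3 nA nB ga gb
  have hCeq : a * m0 / (b * n0) * ((a+1) * m1 / ((b+1) * n1)) * ((a+2) * m2 / ((b+2) * n2))
        * ((a+3) * m3 / ((b+3) * n3))
      = (a*(a+1)*(a+2)*(a+3)*(m0*(m1*(m2*m3))))
        / (b*(b+1)*(b+2)*(b+3)*(n0*(n1*(n2*n3)))) := by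
    field_simp
  rw [hCeq] at hA
  set Nm : ℝ := a*(a+1)*(a+2)*(a+3)*(m0*(m1*(m2*m3))) with hNm
  set D : ℝ := b*(b+1)*(b+2)*(b+3)*(n0*(n1*(n2*n3))) with hDdef
  have hDpos : 0 < D := by
    rw [hDdef]
    exact mul_pos (mul_pos (mul_pos (mul_pos hb0 (by linarith)) (by linarith)) (by linarith))
      (mul_pos pn0 (mul_pos pn1 (mul_pos pn2 pn3)))
  have hNmpos : 0 < Nm := by
    rw [hNm]
    exact mul_pos (mul_pos (mul_pos (mul_pos ha0 (by linarith)) (by linarith)) (by linarith))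
      (mul_pos pm0 (mul_pos pm1 (mul_pos pm2 pm3)))
  rw [← mul_div_assoc] at hA
  have hA2 : nB * ga * Nm ≤ nA * gb * D := (div_le_iff₀ hDpos).1 hA
  have hB := gammaB hb hab.le ha
  rw [← hga, ← hgb] at hB
  have hmainsq : ((b+2)*(b+3)*(n0*(n1*(n2*n3))))^2 < ((a+2)*(a+3)*(m0*(m1*(m2*m3))))^2 := by
    have pk := polykey (b := b) (d := a - b) (u := y^2) hb (by linarith) (by linarith) hu
    have e1 : ((b+2)*(b+3)*(n0*(n1*(n2*n3))))^2
        = ((b+2)*(b+3))^2 * ((n0^2*n1^2)*(n2^2*n3^2)) := by ring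
    have e2 : ((a+2)*(a+3)*(m0*(m1*(m2*m3))))^2
        = ((a+2)*(a+3))^2 * ((m0^2*m1^2)*(m2^2*m3^2)) := by ring
    rw [e1, e2, sqa0, sqa1, sqa2, sqa3, sqb0, sqb1, sqb2, sqb3]
    have e3 : b + (a - b) = a := by ring
    rw [e3] at pk
    convert pk using 2 <;> ring
  have hmain : (b+2)*(b+3)*(n0*(n1*(n2*n3))) < (a+2)*(a+3)*(m0*(m1*(m2*m3))) := by
    have hrhs : (0:ℝ) ≤ (a+2)*(a+3)*(m0*(m1*(m2*m3))) :=
      (mul_pos (mul_pos (by linarith) (by linarith))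
        (mul_pos pm0 (mul_pos pm1 (mul_pos pm2 pm3)))).le
    exact lt_of_pow_lt_pow_left₀ 2 hrhs hmainsq
  have hgapos : 0 < ga := hga ▸ Real.Gamma_pos_of_pos ha0
  have hgbpos : 0 < gb := hgb ▸ Real.Gamma_pos_of_pos hb0
  have hnBpos : 0 < nB := by
    rw [hnB]
    exact norm_pos_iff.2
      (Complex.Gamma_ne_zero_of_re_pos (by simpa using hb0))
  have hXpos : 0 < (b+2)*(b+3)*(n0*(n1*(n2*n3))) :=
    mul_pos (mul_pos (by linarith) (by linarith)) (mul_pos pn0 (mul_pos pn1 (mul_pos pn2 pn3)))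
  have hstep : gb * D < ga * Nm := by
    have t1 := mul_le_mul_of_nonneg_right hB hXpos.le
    have t2 := mul_lt_mul_of_pos_left hmain
      (mul_pos hgapos (mul_pos ha0 (by linarith : (0:ℝ) < a + 1)))
    rw [hDdef, hNm]
    calc gb * (b*(b+1)*(b+2)*(b+3)*(n0*(n1*(n2*n3))))
        = gb * (b * (b + 1)) * ((b+2)*(b+3)*(n0*(n1*(n2*n3)))) := by ring
      _ ≤ ga * (a * (a + 1)) * ((b+2)*(b+3)*(n0*(n1*(n2*n3)))) := t1
      _ < ga * (a * (a + 1)) * ((a+2)*(a+3)*(m0*(m1*(m2*m3)))) := t2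
      _ = ga * (a*(a+1)*(a+2)*(a+3)*(m0*(m1*(m2*m3)))) := by ring
  have final : nB * (gb * D) < nA * (gb * D) := by
    calc nB * (gb * D) < nB * (ga * Nm) := by
          exact mul_lt_mul_of_pos_left hstep hnBpos
    _ = nB * ga * Nm := by ring
    _ ≤ nA * gb * D := hA2
    _ = nA * (gb * D) := by ring
  exact lt_of_mul_lt_mul_right final (mul_pos hgbpos hDpos).le

lemma normX (σ t : ℝ) :
    ‖X ((σ : ℂ) + (t : ℂ) * I)‖
      = (5 / Real.pi) ^ ((1:ℝ)/2 - σ)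
          * ‖Complex.Gamma (((1 - σ/2 : ℝ) : ℂ) + ((t/2 : ℝ) : ℂ) * I)‖
          / ‖Complex.Gamma ((((1 + σ)/2 : ℝ) : ℂ) + ((t/2 : ℝ) : ℂ) * I)‖ := by
  have h5 : (0:ℝ) < 5 / Real.pi := by positivity
  have e1 : (1 : ℂ) - ((σ:ℂ) + (t:ℂ)*I)/2
      = (starRingEnd ℂ) (((1 - σ/2 : ℝ) : ℂ) + ((t/2:ℝ):ℂ) * I) := by
    rw [map_add, map_mul, Complex.conj_ofReal, Complex.conj_ofReal, Complex.conj_I]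
    push_cast
    ring
  have e2 : ((1:ℂ) + ((σ:ℂ)+(t:ℂ)*I))/2 = (((1+σ)/2 : ℝ):ℂ) + ((t/2:ℝ):ℂ)*I := by
    push_cast; ring
  rw [X, e1, e2, Complex.Gamma_conj, norm_div, norm_mul, RCLike.norm_conj]
  congr 2
  rw [show (5 / Real.pi : ℂ) = ((5 / Real.pi : ℝ) : ℂ) by push_cast; ring]
  rw [Complex.norm_cpow_eq_rpow_re_of_pos h5]
  congr 1
  simp

lemma normX_mul (σ t : ℝ) (h0 : 0 ≤ σ) (h1 : σ ≤ 1) :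
    ‖X (((1 - σ : ℝ) : ℂ) + (t : ℂ) * I)‖ * ‖X ((σ : ℂ) + (t : ℂ) * I)‖ = 1 := by
  have hp : (0:ℝ) < 5/Real.pi := by positivity
  rw [normX, normX]
  rw [show (1 - (1-σ)/2 : ℝ) = (1+σ)/2 by ring, show ((1 + (1-σ))/2 : ℝ) = 1 - σ/2 by ring]
  have g1 : ‖Complex.Gamma (((1 - σ/2 : ℝ):ℂ) + ((t/2:ℝ):ℂ)*I)‖ ≠ 0 := by
    refine norm_ne_zero_iff.2 (Complex.Gamma_ne_zero_of_re_pos ?_)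
    simp
    linarith
  have g2 : ‖Complex.Gamma ((((1+σ)/2 : ℝ):ℂ) + ((t/2:ℝ):ℂ)*I)‖ ≠ 0 := by
    refine norm_ne_zero_iff.2 (Complex.Gamma_ne_zero_of_re_pos ?_)
    simp
    linarith
  have hpp : (5/Real.pi) ^ ((1:ℝ)/2 - (1-σ)) * (5/Real.pi) ^ ((1:ℝ)/2 - σ) = 1 := by
    rw [← Real.rpow_add hp, show ((1:ℝ)/2 - (1-σ)) + ((1:ℝ)/2 - σ) = 0 by ring,
      Real.rpow_zero]
  rw [div_mul_div_comm, div_eq_one_iff_eq (mul_ne_zero g1 g2)]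
  linear_combination (‖Complex.Gamma (((1 - σ/2 : ℝ):ℂ) + ((t/2:ℝ):ℂ)*I)‖
    * ‖Complex.Gamma ((((1+σ)/2 : ℝ):ℂ) + ((t/2:ℝ):ℂ)*I)‖) * hpp

lemma key_ne {s t : ℝ} (hs0 : 0 ≤ s) (hs : s < 1/2) (ht : 20 < |t|) :
    ‖X ((s : ℂ) + (t : ℂ) * I)‖ ≠ 1 := by
  have ht2 : 10 < |t/2| := by
    rw [abs_div]
    rw [show |(2:ℝ)| = 2 by norm_num]
    linarith
  rw [normX]
  have hgrow := key_est (a := 1 - s/2) (b := (1+s)/2) (y := t/2)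
    (by linarith) (by linarith) (by linarith) ht2
  have hBpos : 0 < ‖Complex.Gamma ((((1+s)/2 : ℝ):ℂ) + ((t/2:ℝ):ℂ)*I)‖ := by
    refine norm_pos_iff.2 (Complex.Gamma_ne_zero_of_re_pos ?_)
    simp
    linarith
  have hpow : 1 ≤ (5/Real.pi) ^ ((1:ℝ)/2 - s) := by
    refine Real.one_le_rpow ?_ (by linarith)
    rw [le_div_iff₀ Real.pi_pos]
    linarith [Real.pi_le_four]
  have hgt : 1 < (5/Real.pi) ^ ((1:ℝ)/2 - s)
      * ‖Complex.Gamma (((1 - s/2 : ℝ):ℂ) + ((t/2:ℝ):ℂ)*I)‖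
      / ‖Complex.Gamma ((((1+s)/2 : ℝ):ℂ) + ((t/2:ℝ):ℂ)*I)‖ := by
    rw [lt_div_iff₀ hBpos, one_mul]
    calc ‖Complex.Gamma ((((1+s)/2 : ℝ):ℂ) + ((t/2:ℝ):ℂ)*I)‖
        < ‖Complex.Gamma (((1 - s/2 : ℝ):ℂ) + ((t/2:ℝ):ℂ)*I)‖ := hgrow
      _ ≤ (5/Real.pi) ^ ((1:ℝ)/2 - s)
          * ‖Complex.Gamma (((1 - s/2 : ℝ):ℂ) + ((t/2:ℝ):ℂ)*I)‖ :=
        le_mul_of_one_le_left (norm_nonneg _) hpow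
  exact ne_of_gt hgt

end Stmt15

theorem stmt_15 :
    ∃ κ : ℝ, 0 < κ ∧
      ∀ σ t : ℝ, 0 ≤ σ → σ ≤ 1 → σ ≠ 1 / 2 →
        ‖X ((σ : ℂ) + (t : ℂ) * Complex.I)‖ = 1 → |t| ≤ κ := by
  refine ⟨20, by norm_num, ?_⟩
  intro σ t h0 h1 hne hXnorm
  by_contra hcon
  push_neg at hcon
  rcases lt_or_gt_of_ne hne with hlt | hgt
  · exact Stmt15.key_ne h0 hlt hcon hXnorm
  · have hmul := Stmt15.normX_mul σ t h0 h1
    rw [hXnorm, mul_one] at hmul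
    have : ‖X (((1 - σ : ℝ) : ℂ) + (t : ℂ) * Complex.I)‖ = 1 := hmul
    exact Stmt15.key_ne (by linarith) (by linarith) hcon this
end

section
/- For every real σ with 0 ≤ σ ≤ 1 and σ ≠ 1/2, there is at most one t in (0, +∞) with ‖X(σ + it)‖ = 1, and at most one t in (-∞, 0) with ‖X(σ + it)‖ = 1. -/
namespace Stmt16Aux

open Complex Filter Finset
open scoped Nat

lemma norm_gammaSeq (s : ℂ) {n : ℕ} (hn : 0 < n) :
    ‖Complex.GammaSeq s n‖ = (n:ℝ)^s.re * (n !) / ∏ j ∈ Finset.range (n+1), ‖s + j‖ := by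
  rw [Complex.GammaSeq, norm_div, norm_mul, norm_prod]
  congr 2
  · rw [show ((n:ℂ)) = (((n:ℝ)):ℂ) by norm_cast,
      Complex.norm_cpow_eq_rpow_re_of_pos (by exact_mod_cast hn)]
  · simp

lemma fac_le (a b y1 y2 x : ℝ) (hb : 0 ≤ b) (hba : b ≤ a) (h1 : 0 ≤ y1) (h12 : y1 ≤ y2)
    (hx : 0 ≤ x) :
    ‖((a:ℂ) + y2*I) + x‖ * ‖((b:ℂ) + y1*I) + x‖ ≤ ‖((a:ℂ) + y1*I) + x‖ * ‖((b:ℂ) + y2*I) + x‖ := by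
  have e : ∀ c y : ℝ, ((c:ℂ) + y*I) + x = ((c+x : ℝ) : ℂ) + (y:ℝ)*I := by
    intro c y; push_cast; ring
  rw [e, e, e, e]
  simp only [Complex.norm_add_mul_I]
  rw [← Real.sqrt_mul (by positivity), ← Real.sqrt_mul (by positivity)]
  apply Real.sqrt_le_sqrt
  have h1' : (b+x)^2 ≤ (a+x)^2 := by nlinarith
  have h2' : y1^2 ≤ y2^2 := by nlinarith
  nlinarith [mul_nonneg (sub_nonneg.2 h1') (sub_nonneg.2 h2')]

lemma fac_lt (a b y1 y2 : ℝ) (hb : 0 < b) (hba : b < a) (h1 : 0 ≤ y1) (h12 : y1 < y2) :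
    ‖((a:ℂ) + y2*I)‖ * ‖((b:ℂ) + y1*I)‖ < ‖((a:ℂ) + y1*I)‖ * ‖((b:ℂ) + y2*I)‖ := by
  simp only [Complex.norm_add_mul_I]
  rw [← Real.sqrt_mul (by positivity), ← Real.sqrt_mul (by positivity)]
  apply Real.sqrt_lt_sqrt (by positivity)
  have h1' : b^2 < a^2 := by nlinarith
  have h2' : y1^2 < y2^2 := by nlinarith
  nlinarith [mul_pos (sub_pos.2 h1') (sub_pos.2 h2')]

lemma norm_pos_of_re_pos {s : ℂ} (hs : 0 < s.re) : 0 < ‖s‖ := by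
  rw [norm_pos_iff]; intro h; rw [h] at hs; simp at hs

lemma key (a b : ℝ) (hb : 0 < b) (hba : b < a) {y1 y2 : ℝ} (h1 : 0 ≤ y1) (h12 : y1 < y2) :
    ‖Complex.Gamma ((a:ℂ) + y2*I)‖ * ‖Complex.Gamma ((b:ℂ) + y1*I)‖ >
    ‖Complex.Gamma ((a:ℂ) + y1*I)‖ * ‖Complex.Gamma ((b:ℂ) + y2*I)‖ := by
  have ha : 0 < a := hb.trans hba
  set A1 : ℂ := (a:ℂ) + y1*I with hA1
  set A2 : ℂ := (a:ℂ) + y2*I with hA2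
  set B1 : ℂ := (b:ℂ) + y1*I with hB1
  set B2 : ℂ := (b:ℂ) + y2*I with hB2
  have reA1 : A1.re = a := by simp [hA1]
  have reA2 : A2.re = a := by simp [hA2]
  have reB1 : B1.re = b := by simp [hB1]
  have reB2 : B2.re = b := by simp [hB2]
  have nA1 : 0 < ‖A1‖ := norm_pos_of_re_pos (by rw [reA1]; exact ha)
  have nA2 : 0 < ‖A2‖ := norm_pos_of_re_pos (by rw [reA2]; exact ha)
  have nB1 : 0 < ‖B1‖ := norm_pos_of_re_pos (by rw [reB1]; exact hb)
  have nB2 : 0 < ‖B2‖ := norm_pos_of_re_pos (by rw [reB2]; exact hb)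
  set ρ : ℝ := (‖A1‖ * ‖B2‖) / (‖A2‖ * ‖B1‖) with hρ
  clear_value ρ
  have hρ1 : 1 < ρ := by
    rw [hρ, lt_div_iff₀ (by positivity), one_mul]
    exact fac_lt a b y1 y2 hb hba h1 h12
  -- positivity of partial products
  have prodpos : ∀ (c : ℝ), 0 < c → ∀ y : ℝ, ∀ n : ℕ,
      0 < ∏ j ∈ Finset.range (n+1), ‖((c:ℂ) + y*I) + j‖ := by
    intro c hc y n
    apply Finset.prod_pos
    intro j _
    apply norm_pos_of_re_pos
    have : (((c:ℂ) + y*I) + j).re = c + j := by simp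
    rw [this]; positivity
  -- eventual inequality between products of GammaSeq norms
  have hev : ∀ n : ℕ, 1 ≤ n →
      ρ * (‖Complex.GammaSeq A1 n‖ * ‖Complex.GammaSeq B2 n‖) ≤
        ‖Complex.GammaSeq A2 n‖ * ‖Complex.GammaSeq B1 n‖ := by
    intro n hn
    have hn' : 0 < n := hn
    rw [norm_gammaSeq _ hn', norm_gammaSeq _ hn', norm_gammaSeq _ hn', norm_gammaSeq _ hn',
      reA1, reA2, reB1, reB2]
    set K : ℝ := ((n:ℝ)^a * (n !)) * ((n:ℝ)^b * (n !)) with hK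
    clear_value K
    have hK0 : 0 < K := by rw [hK]; positivity
    set D1 : ℝ := ∏ j ∈ Finset.range (n+1), (‖A1 + j‖ * ‖B2 + j‖) with hD1
    set D2 : ℝ := ∏ j ∈ Finset.range (n+1), (‖A2 + j‖ * ‖B1 + j‖) with hD2
    have hD1' : (∏ j ∈ Finset.range (n+1), ‖A1 + j‖) * (∏ j ∈ Finset.range (n+1), ‖B2 + j‖) = D1 := by
      rw [hD1, Finset.prod_mul_distrib]
    have hD2' : (∏ j ∈ Finset.range (n+1), ‖A2 + j‖) * (∏ j ∈ Finset.range (n+1), ‖B1 + j‖) = D2 := by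
      rw [hD2, Finset.prod_mul_distrib]
    clear_value D1
    clear_value D2
    have pA1 := prodpos a ha y1 n
    have pA2 := prodpos a ha y2 n
    have pB1 := prodpos b hb y1 n
    have pB2 := prodpos b hb y2 n
    have hD1pos : 0 < D1 := by rw [← hD1']; exact mul_pos pA1 pB2
    have hD2pos : 0 < D2 := by rw [← hD2']; exact mul_pos pA2 pB1
    have lhs_eq : ρ * ((n:ℝ)^a * (n !) / (∏ j ∈ Finset.range (n+1), ‖A1 + j‖) *
        ((n:ℝ)^b * (n !) / (∏ j ∈ Finset.range (n+1), ‖B2 + j‖))) = ρ * K / D1 := by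
      rw [hK, ← hD1']; field_simp
    have rhs_eq : (n:ℝ)^a * (n !) / (∏ j ∈ Finset.range (n+1), ‖A2 + j‖) *
        ((n:ℝ)^b * (n !) / (∏ j ∈ Finset.range (n+1), ‖B1 + j‖)) = K / D2 := by
      rw [hK, ← hD2']; field_simp
    rw [lhs_eq, rhs_eq, div_le_div_iff₀ hD1pos hD2pos]
    -- goal : ρ * K * D2 ≤ K * D1
    have main : ρ * D2 ≤ D1 := by
      rw [hD1, hD2, Finset.prod_range_succ', Finset.prod_range_succ']
      simp only [Nat.cast_zero, add_zero]
      have tail : (∏ j ∈ Finset.range n, (‖A2 + (j+1 : ℕ)‖ * ‖B1 + (j+1 : ℕ)‖)) ≤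
          (∏ j ∈ Finset.range n, (‖A1 + (j+1 : ℕ)‖ * ‖B2 + (j+1 : ℕ)‖)) := by
        apply Finset.prod_le_prod
        · intro j _; positivity
        · intro j _
          have := fac_le a b y1 y2 ((j:ℝ)+1) hb.le hba.le h1 h12.le (by positivity)
          have ecast : ∀ z : ℂ, z + ((j+1 : ℕ) : ℂ) = z + (((j:ℝ)+1 : ℝ) : ℂ) := by
            intro z; push_cast; ring
          rw [ecast, ecast, ecast, ecast]
          exact this
      have hcancel : ρ * (‖A2‖ * ‖B1‖) = ‖A1‖ * ‖B2‖ := by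
        rw [hρ, div_mul_cancel₀ _ (by positivity)]
      calc ρ * ((∏ j ∈ Finset.range n, (‖A2 + (j+1:ℕ)‖ * ‖B1 + (j+1:ℕ)‖)) * (‖A2‖ * ‖B1‖))
          = (ρ * (‖A2‖ * ‖B1‖)) * (∏ j ∈ Finset.range n, (‖A2 + (j+1:ℕ)‖ * ‖B1 + (j+1:ℕ)‖)) := by
            ring
        _ = (‖A1‖ * ‖B2‖) * (∏ j ∈ Finset.range n, (‖A2 + (j+1:ℕ)‖ * ‖B1 + (j+1:ℕ)‖)) := by
            rw [hcancel]
        _ ≤ (‖A1‖ * ‖B2‖) * (∏ j ∈ Finset.range n, (‖A1 + (j+1:ℕ)‖ * ‖B2 + (j+1:ℕ)‖)) := by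
            apply mul_le_mul_of_nonneg_left tail (by positivity)
        _ = (∏ j ∈ Finset.range n, (‖A1 + (j+1:ℕ)‖ * ‖B2 + (j+1:ℕ)‖)) * (‖A1‖ * ‖B2‖) := by ring
    calc ρ * K * D2 = K * (ρ * D2) := by ring
      _ ≤ K * D1 := by exact mul_le_mul_of_nonneg_left main hK0.le
  -- pass to the limit
  have tL : Tendsto (fun n => ‖Complex.GammaSeq A2 n‖ * ‖Complex.GammaSeq B1 n‖) atTop
      (nhds (‖Complex.Gamma A2‖ * ‖Complex.Gamma B1‖)) :=
    ((Complex.GammaSeq_tendsto_Gamma A2).norm).mul ((Complex.GammaSeq_tendsto_Gamma B1).norm)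
  have tR : Tendsto (fun n => ρ * (‖Complex.GammaSeq A1 n‖ * ‖Complex.GammaSeq B2 n‖)) atTop
      (nhds (ρ * (‖Complex.Gamma A1‖ * ‖Complex.Gamma B2‖))) :=
    (((Complex.GammaSeq_tendsto_Gamma A1).norm).mul ((Complex.GammaSeq_tendsto_Gamma B2).norm)).const_mul ρ
  have hle : ρ * (‖Complex.Gamma A1‖ * ‖Complex.Gamma B2‖) ≤
      ‖Complex.Gamma A2‖ * ‖Complex.Gamma B1‖ :=
    le_of_tendsto_of_tendsto tR tL (by
      filter_upwards [eventually_ge_atTop 1] with n hn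
      exact hev n hn)
  have hpos : 0 < ‖Complex.Gamma A1‖ * ‖Complex.Gamma B2‖ := by
    apply mul_pos <;> rw [norm_pos_iff] <;> apply Complex.Gamma_ne_zero_of_re_pos
    · rw [reA1]; exact ha
    · rw [reB2]; exact hb
  calc ‖Complex.Gamma A1‖ * ‖Complex.Gamma B2‖
      < ρ * (‖Complex.Gamma A1‖ * ‖Complex.Gamma B2‖) := by nlinarith
    _ ≤ _ := hle

lemma gammaB_ne (b y : ℝ) (hb : 0 < b) : ‖Complex.Gamma ((b:ℂ) + y*I)‖ ≠ 0 := by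
  rw [norm_ne_zero_iff]
  apply Complex.Gamma_ne_zero_of_re_pos
  have : ((b:ℂ) + y*I).re = b := by simp
  rw [this]; exact hb

lemma G_inj (a b : ℝ) (ha : 0 < a) (hb : 0 < b) (hab : a ≠ b) {y1 y2 : ℝ}
    (h1 : 0 ≤ y1) (h2 : 0 ≤ y2)
    (h : ‖Complex.Gamma ((a:ℂ)+y1*I)‖ / ‖Complex.Gamma ((b:ℂ)+y1*I)‖ =
         ‖Complex.Gamma ((a:ℂ)+y2*I)‖ / ‖Complex.Gamma ((b:ℂ)+y2*I)‖) : y1 = y2 := by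
  by_contra hne
  have hB1 := gammaB_ne b y1 hb
  have hB2 := gammaB_ne b y2 hb
  rw [div_eq_div_iff hB1 hB2] at h
  rcases Ne.lt_or_gt hne with hlt | hlt
  · rcases Ne.lt_or_gt hab with hba | hba
    · have k := key b a ha hba h1 hlt
      nlinarith [k, h]
    · have k := key a b hb hba h1 hlt
      nlinarith [k, h]
  · rcases Ne.lt_or_gt hab with hba | hba
    · have k := key b a ha hba h2 hlt
      nlinarith [k, h]
    · have k := key a b hb hba h2 hlt
      nlinarith [k, h]

lemma gamma_even (c y : ℝ) :
    ‖Complex.Gamma ((c:ℂ) + (((-y : ℝ)):ℂ)*I)‖ = ‖Complex.Gamma ((c:ℂ) + (y:ℂ)*I)‖ := by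
  have e : (c:ℂ) + (((-y : ℝ)):ℂ)*I = (starRingEnd ℂ) ((c:ℂ) + (y:ℂ)*I) := by
    simp [Complex.ext_iff]
  rw [e, Complex.Gamma_conj]
  simp

lemma normX (σ t : ℝ) :
    ‖X ((σ:ℂ) + t*I)‖ = (5/Real.pi)^((1:ℝ)/2-σ) *
      ‖Complex.Gamma (((1-σ/2 : ℝ):ℂ) + (t/2)*I)‖ /
      ‖Complex.Gamma ((((1+σ)/2 : ℝ):ℂ) + (t/2)*I)‖ := by
  rw [X, norm_div, norm_mul]
  congr 1
  congr 1
  · have hbase : (5 / Real.pi : ℂ) = (((5/Real.pi : ℝ)):ℂ) := by push_cast; ring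
    rw [hbase,
      Complex.norm_cpow_eq_rpow_re_of_pos (by positivity) _]
    congr 1
    simp
  · have e : (1 : ℂ) - ((σ:ℂ) + t*I)/2 = (starRingEnd ℂ) ((((1-σ/2:ℝ)):ℂ) + (t/2)*I) := by
      rw [map_add, map_mul, Complex.conj_ofReal, Complex.conj_I]
      have h2 : (starRingEnd ℂ) ((t:ℂ)/2) = (t:ℂ)/2 := by
        rw [show ((t:ℂ)/2) = (((t/2 : ℝ)):ℂ) by push_cast; ring, Complex.conj_ofReal]
      rw [h2]; push_cast; ring
    rw [e, Complex.Gamma_conj]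
    simp
  · congr 2
    push_cast; ring

end Stmt16Aux

theorem stmt_16 (σ : ℝ) (h0 : 0 ≤ σ) (h1 : σ ≤ 1) (hσ : σ ≠ 1 / 2) :
    {t : ℝ | t ∈ Set.Ioi (0 : ℝ) ∧
      ‖X ((σ : ℂ) + (t : ℂ) * Complex.I)‖ = 1}.Subsingleton ∧
    {t : ℝ | t ∈ Set.Iio (0 : ℝ) ∧
      ‖X ((σ : ℂ) + (t : ℂ) * Complex.I)‖ = 1}.Subsingleton := by
  open Stmt16Aux Complex in
  have ha : 0 < 1 - σ/2 := by linarith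
  have hb : 0 < (1+σ)/2 := by linarith
  have hab : 1 - σ/2 ≠ (1+σ)/2 := by
    intro h; apply hσ; linarith
  have hC : 0 < (5/Real.pi)^((1:ℝ)/2-σ) :=
    Real.rpow_pos_of_pos (by positivity) _
  have main : ∀ t1 t2 : ℝ, 0 ≤ t1 → 0 ≤ t2 →
      ‖X ((σ:ℂ) + t1*I)‖ = ‖X ((σ:ℂ) + t2*I)‖ → t1 = t2 := by
    intro t1 t2 ht1 ht2 h
    rw [Stmt16Aux.normX, Stmt16Aux.normX, mul_div_assoc, mul_div_assoc] at h
    have h' := mul_left_cancel₀ hC.ne' h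
    have ecast : ∀ s : ℝ, ((s:ℂ))/2*I = (((s/2 : ℝ)):ℂ)*I := by intro s; push_cast; ring
    rw [ecast t1, ecast t2] at h'
    have := Stmt16Aux.G_inj (1-σ/2) ((1+σ)/2) ha hb hab (y1 := t1/2) (y2 := t2/2)
      (by linarith) (by linarith) h'
    linarith
  have evenX : ∀ t : ℝ, ‖X ((σ:ℂ) + ((-t : ℝ):ℂ)*I)‖ = ‖X ((σ:ℂ) + t*I)‖ := by
    intro t
    rw [Stmt16Aux.normX, Stmt16Aux.normX σ t]
    have e1 : (((-t:ℝ)):ℂ)/2 * I = ((( -(t/2) :ℝ)):ℂ)*I := by push_cast; ring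
    have e2 : ((t:ℝ):ℂ)/2 * I = (((t/2 :ℝ)):ℂ)*I := by push_cast; ring
    rw [e1, e2, show (-(t/2):ℝ) = -(t/2 : ℝ) from rfl]
    rw [Stmt16Aux.gamma_even, Stmt16Aux.gamma_even]
  constructor
  · intro t1 h1' t2 h2'
    exact main t1 t2 (le_of_lt h1'.1) (le_of_lt h2'.1) (h1'.2.trans h2'.2.symm)
  · intro t1 h1' t2 h2'
    have : -t1 = -t2 := by
      apply main (-t1) (-t2) (by have := h1'.1; simp at this ⊢; linarith)
        (by have := h2'.1; simp at this ⊢; linarith)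
      rw [evenX t1, evenX t2]
      exact h1'.2.trans h2'.2.symm
    linarith
end
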